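/- arXiv:2212.00713 — 12 statements merged into one kernel-verified Lean document; each statement's English description precedes it below -/
import Mathlib

section
/- Let V be a finite-dimensional real vector space and A : V → V a semisimple linear endomorphism. Then (a) the complexification of A, i.e. the induced ℂ-linear endomorphism of ℂ ⊗_ℝ V, is semisimple, and (b) the linear endomorphism ad_A of the space End(V) of ℝ-linear endomorphisms of V, given by ad_A(X) = A∘X − X∘A, is semisimple. -/
open scoped TensorProduct

open Polynomial

/-- If `A` is a semisimple endomorphism of a finite-dimensional real vector space `V`, then
(a) its complexification, the induced `ℂ`-linear endomorphism of `ℂ ⊗[ℝ] V`, is semisimple, and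
(b) the endomorphism `ad_A : X ↦ A ∘ X - X ∘ A` of `End(V)` is semisimple. -/
theorem stmt1 {V : Type*} [AddCommGroup V] [Module ℝ V] [FiniteDimensional ℝ V]
    (A : V →ₗ[ℝ] V) (hA : Module.End.IsSemisimple A) :
    Module.End.IsSemisimple (A.baseChange ℂ) ∧
    Module.End.IsSemisimple
      ((LinearMap.mulLeft ℝ A - LinearMap.mulRight ℝ A : Module.End ℝ V →ₗ[ℝ] Module.End ℝ V)) := by
  have hsq : Squarefree (minpoly ℝ A) := hA.minpoly_squarefree
  have hsep : (minpoly ℝ A).Separable :=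
    (PerfectField.separable_iff_squarefree).mpr hsq
  constructor
  · -- base change
    apply Module.End.isSemisimple_of_squarefree_aeval_eq_zero
      (p := (minpoly ℝ A).map (algebraMap ℝ ℂ))
    · exact (hsep.map).squarefree
    · rw [aeval_map_algebraMap]
      have : aeval (A.baseChange ℂ) (minpoly ℝ A) =
          Module.End.baseChangeHom ℝ ℂ V (aeval A (minpoly ℝ A)) :=
        aeval_algHom_apply (Module.End.baseChangeHom ℝ ℂ V) A (minpoly ℝ A)
      rw [this, minpoly.aeval, map_zero]
  · have hL : Module.End.IsSemisimple (LinearMap.mulLeft ℝ A) := by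
      apply Module.End.isSemisimple_of_squarefree_aeval_eq_zero hsq
      have : aeval (LinearMap.mulLeft ℝ A) (minpoly ℝ A) =
          LinearMap.mulLeft ℝ (aeval A (minpoly ℝ A)) := by
        rw [show LinearMap.mulLeft ℝ A = (Algebra.lmul ℝ (Module.End ℝ V)) A from rfl,
          aeval_algHom_apply]
        rfl
      rw [this, minpoly.aeval]
      ext x; simp
    have hR : Module.End.IsSemisimple (LinearMap.mulRight ℝ A) := by
      apply Module.End.isSemisimple_of_squarefree_aeval_eq_zero hsq
      have : aeval (LinearMap.mulRight ℝ A) (minpoly ℝ A) =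
          LinearMap.mulRight ℝ (aeval A (minpoly ℝ A)) := by
        induction (minpoly ℝ A) using Polynomial.induction_on with
        | C c => ext x; simp [Module.algebraMap_end_apply]
        | add p q hp hq => rw [map_add, map_add, hp, hq]; ext x; simp
        | monomial n c _ =>
            rw [map_mul, map_mul, aeval_C, aeval_C, map_pow, map_pow, aeval_X, aeval_X,
              LinearMap.pow_mulRight]
            ext x y
            simp [Module.End.mul_apply, Module.algebraMap_end_apply]
      rw [this, minpoly.aeval]
      ext x; simp
    exact hL.sub_of_commute (LinearMap.commute_mulLeft_right A A) hR
end

section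
/- Let A ∈ Matrix n n ℝ be normal, i.e. A·Aᵀ = Aᵀ·A, and let ad_A : Matrix n n ℝ → Matrix n n ℝ be given by ad_A(X) = AX − XA. Then ker(ad_A) and range(ad_A) are complementary subspaces of Matrix n n ℝ, and they are orthogonal with respect to the Frobenius inner product: trace(Xᵀ·(AZ − ZA)) = 0 whenever AX = XA and Z ∈ Matrix n n ℝ. -/
open Matrix

private lemma trace_sq_zero {n : ℕ} (B : Matrix (Fin n) (Fin n) ℝ)
    (h : (Bᵀ * B).trace = 0) : B = 0 := by
  have h' : ∑ i, ∑ j, B j i * B j i = 0 := by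
    simpa [Matrix.trace, Matrix.diag, Matrix.mul_apply] using h
  have hnn : ∀ i ∈ (Finset.univ : Finset (Fin n)), 0 ≤ ∑ j, B j i * B j i := by
    intro i _
    exact Finset.sum_nonneg fun j _ => mul_self_nonneg _
  ext i j
  have := (Finset.sum_eq_zero_iff_of_nonneg hnn).mp h' j (Finset.mem_univ _)
  have hj : ∀ k ∈ (Finset.univ : Finset (Fin n)), 0 ≤ B k j * B k j :=
    fun k _ => mul_self_nonneg _
  have := (Finset.sum_eq_zero_iff_of_nonneg hj).mp this i (Finset.mem_univ _)
  simpa [mul_self_eq_zero] using this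

private lemma fuglede {n : ℕ} (A X : Matrix (Fin n) (Fin n) ℝ) (hA : A * Aᵀ = Aᵀ * A)
    (hC : A * X = X * A) : Aᵀ * X = X * Aᵀ := by
  set B := Aᵀ * X - X * Aᵀ with hB
  have hBt : Bᵀ = Xᵀ * A - A * Xᵀ := by
    simp [hB, transpose_sub, transpose_mul]
  have key : (Bᵀ * B).trace = 0 := by
    have expand : Bᵀ * B =
        Xᵀ * A * (Aᵀ * X) - Xᵀ * A * (X * Aᵀ) - A * Xᵀ * (Aᵀ * X) + A * Xᵀ * (X * Aᵀ) := by
      rw [hBt, hB]; noncomm_ring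
    rw [expand]
    have t1 : (Xᵀ * A * (Aᵀ * X)).trace = (A * Xᵀ * (Aᵀ * X)).trace := by
      calc (Xᵀ * A * (Aᵀ * X)).trace = (Xᵀ * (A * Aᵀ) * X).trace := by
            congr 1; noncomm_ring
        _ = (Xᵀ * (Aᵀ * A) * X).trace := by rw [hA]
        _ = (Xᵀ * Aᵀ * (A * X)).trace := by congr 1; noncomm_ring
        _ = (Xᵀ * Aᵀ * (X * A)).trace := by rw [hC]
        _ = ((Xᵀ * Aᵀ * X) * A).trace := by congr 1; noncomm_ring
        _ = (A * (Xᵀ * Aᵀ * X)).trace := Matrix.trace_mul_comm _ _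
        _ = (A * Xᵀ * (Aᵀ * X)).trace := by congr 1; noncomm_ring
    have t2 : (Xᵀ * A * (X * Aᵀ)).trace = (A * Xᵀ * (X * Aᵀ)).trace := by
      calc (Xᵀ * A * (X * Aᵀ)).trace = (Xᵀ * (A * X) * Aᵀ).trace := by
            congr 1; noncomm_ring
        _ = (Xᵀ * (X * A) * Aᵀ).trace := by rw [hC]
        _ = (Xᵀ * X * (A * Aᵀ)).trace := by congr 1; noncomm_ring
        _ = (Xᵀ * X * (Aᵀ * A)).trace := by rw [hA]
        _ = ((Xᵀ * X * Aᵀ) * A).trace := by congr 1; noncomm_ring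
        _ = (A * (Xᵀ * X * Aᵀ)).trace := Matrix.trace_mul_comm _ _
        _ = (A * Xᵀ * (X * Aᵀ)).trace := by congr 1; noncomm_ring
    simp only [Matrix.trace_add, Matrix.trace_sub, t1, t2]
    ring
  have := trace_sq_zero B key
  rw [hB] at this
  exact sub_eq_zero.mp this

/-- If `A ∈ Matrix n n ℝ` is normal (`A*Aᵀ = Aᵀ*A`), then the kernel and range of
`ad_A : X ↦ A*X - X*A` are complementary subspaces of `Matrix n n ℝ`, and they are orthogonal
for the Frobenius inner product: `trace (Xᵀ * (A*Z - Z*A)) = 0` whenever `A*X = X*A`. -/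
theorem stmt4 {n : ℕ} (A : Matrix (Fin n) (Fin n) ℝ) (hA : A * Aᵀ = Aᵀ * A) :
    IsCompl
      (LinearMap.ker
        (LinearMap.mulLeft ℝ A - LinearMap.mulRight ℝ A :
          Matrix (Fin n) (Fin n) ℝ →ₗ[ℝ] Matrix (Fin n) (Fin n) ℝ))
      (LinearMap.range
        (LinearMap.mulLeft ℝ A - LinearMap.mulRight ℝ A :
          Matrix (Fin n) (Fin n) ℝ →ₗ[ℝ] Matrix (Fin n) (Fin n) ℝ)) ∧
    (∀ X Z : Matrix (Fin n) (Fin n) ℝ, A * X = X * A →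
      (Xᵀ * (A * Z - Z * A)).trace = 0) := by
  set f : Matrix (Fin n) (Fin n) ℝ →ₗ[ℝ] Matrix (Fin n) (Fin n) ℝ :=
    LinearMap.mulLeft ℝ A - LinearMap.mulRight ℝ A with hf
  have hfapp : ∀ X, f X = A * X - X * A := by
    intro X; simp [hf, LinearMap.mulLeft_apply, LinearMap.mulRight_apply]
  have horth : ∀ X Z : Matrix (Fin n) (Fin n) ℝ, A * X = X * A →
      (Xᵀ * (A * Z - Z * A)).trace = 0 := by
    intro X Z hC
    have hfu : Aᵀ * X = X * Aᵀ := fuglede A X hA hC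
    have hXA : Xᵀ * A = A * Xᵀ := by
      have := congrArg Matrix.transpose hfu
      simpa [transpose_mul] using this
    have : (Xᵀ * (Z * A)).trace = (Xᵀ * (A * Z)).trace := by
      calc (Xᵀ * (Z * A)).trace = ((Xᵀ * Z) * A).trace := by congr 1; noncomm_ring
        _ = (A * (Xᵀ * Z)).trace := Matrix.trace_mul_comm _ _
        _ = (A * Xᵀ * Z).trace := by congr 1; noncomm_ring
        _ = (Xᵀ * A * Z).trace := by rw [hXA]
        _ = (Xᵀ * (A * Z)).trace := by congr 1; noncomm_ring
    rw [Matrix.mul_sub, Matrix.trace_sub, this, sub_self]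
  refine ⟨?_, horth⟩
  have hdisj : Disjoint (LinearMap.ker f) (LinearMap.range f) := by
    rw [Submodule.disjoint_def]
    intro Y hk hr
    obtain ⟨Z, hZ⟩ := hr
    have hYC : A * Y = Y * A := by
      have := LinearMap.mem_ker.mp hk
      rw [hfapp] at this
      exact sub_eq_zero.mp this
    have hYZ : Y = A * Z - Z * A := by rw [← hZ, hfapp]
    have h0 := horth Y Z hYC
    rw [← hYZ] at h0
    exact trace_sq_zero Y h0
  refine ⟨hdisj, ?_⟩
  rw [codisjoint_iff]
  apply Submodule.eq_top_of_finrank_eq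
  have h1 := Submodule.finrank_sup_add_finrank_inf_eq (LinearMap.ker f) (LinearMap.range f)
  rw [disjoint_iff.mp hdisj, finrank_bot, add_zero] at h1
  have h2 := LinearMap.finrank_range_add_finrank_ker f
  rw [h1, add_comm] at *
  omega
end

section
/- Let 𝔤 be a finite-dimensional real Lie algebra with Killing form B, and suppose 𝔤 = 𝔨 ⊕ 𝔭 is a direct sum of subspaces satisfying [𝔨, 𝔨] ⊆ 𝔨, [𝔨, 𝔭] ⊆ 𝔭, and [𝔭, 𝔭] ⊆ 𝔨. Assume B is anisotropic on 𝔨, i.e. if k ∈ 𝔨 and B(k, k) = 0 then k = 0. Let V and W be subspaces of 𝔭 that are each invariant under ad_k for every k ∈ 𝔨, and that are orthogonal with respect to the Killing form, i.e. B(v, w) = 0 for all v ∈ V and w ∈ W. Then [v, w] = 0 for all v ∈ V and w ∈ W. -/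
/-- Let `L` be a finite-dimensional real Lie algebra with Killing form `B`, and let
`L = k ⊕ p` be a direct sum of subspaces with `⁅k,k⁆ ⊆ k`, `⁅k,p⁆ ⊆ p`, `⁅p,p⁆ ⊆ k`.
Assume `B` is anisotropic on `k`. If `V, W ⊆ p` are subspaces invariant under `ad_u` for every
`u ∈ k` and orthogonal with respect to `B`, then `⁅v, w⁆ = 0` for all `v ∈ V`, `w ∈ W`. -/
theorem stmt8 {L : Type*} [LieRing L] [LieAlgebra ℝ L] [FiniteDimensional ℝ L]
    (k p : Submodule ℝ L) (hcompl : IsCompl k p)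
    (hkk : ∀ x ∈ k, ∀ y ∈ k, ⁅x, y⁆ ∈ k)
    (hkp : ∀ x ∈ k, ∀ y ∈ p, ⁅x, y⁆ ∈ p)
    (hpp : ∀ x ∈ p, ∀ y ∈ p, ⁅x, y⁆ ∈ k)
    (haniso : ∀ x ∈ k, killingForm ℝ L x x = 0 → x = 0)
    (V W : Submodule ℝ L) (hVp : V ≤ p) (hWp : W ≤ p)
    (hVinv : ∀ u ∈ k, ∀ v ∈ V, ⁅u, v⁆ ∈ V)
    (hWinv : ∀ u ∈ k, ∀ w ∈ W, ⁅u, w⁆ ∈ W)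
    (horth : ∀ v ∈ V, ∀ w ∈ W, killingForm ℝ L v w = 0) :
    ∀ v ∈ V, ∀ w ∈ W, ⁅v, w⁆ = 0 := by
  intro v hv w hw
  have hu : ⁅v, w⁆ ∈ k := hpp v (hVp hv) w (hWp hw)
  apply haniso _ hu
  have h1 : killingForm ℝ L ⁅v, w⁆ ⁅v, w⁆ = killingForm ℝ L v ⁅w, ⁅v, w⁆⁆ :=
    LieModule.traceForm_apply_lie_apply ℝ L L v w ⁅v, w⁆
  have h2 : ⁅w, ⁅v, w⁆⁆ = -⁅⁅v, w⁆, w⁆ := (lie_skew _ _).symm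
  have h3 : ⁅⁅v, w⁆, w⁆ ∈ W := hWinv _ hu w hw
  rw [h1, h2, map_neg, horth v hv _ h3, neg_zero]
end

section
/- Let I be an open interval, t ∈ I, and λ₁, λ₂ : ℝ → V functions such that for every s ∈ I there exists g ∈ Γ with λ₂(s) = g·λ₁(s). If λ₁ and λ₂ are both differentiable at t, then there exists g ∈ Γ with λ₂(t) = g·λ₁(t) and λ₂′(t) = g·λ₁′(t). -/
open scoped Topology

/-- Let `Γ` be a finite group acting linearly on a finite-dimensional real normed vector space
`V`, let `I` be an open interval, `t ∈ I`, and let `λ₁, λ₂ : ℝ → V` be such that for every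
`s ∈ I` there is `g ∈ Γ` with `λ₂ s = g • λ₁ s`. If `λ₁` and `λ₂` are differentiable at `t`
(with derivatives `v₁, v₂`), then there exists `g ∈ Γ` with `λ₂ t = g • λ₁ t` and
`v₂ = g • v₁`. -/
theorem stmt9 {V : Type*} [NormedAddCommGroup V] [NormedSpace ℝ V] [FiniteDimensional ℝ V]
    {Γ : Type*} [Group Γ] [Finite Γ] [DistribMulAction Γ V] [SMulCommClass Γ ℝ V]
    (I : Set ℝ) (hIopen : IsOpen I) (hIconn : I.OrdConnected) (t : ℝ) (ht : t ∈ I)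
    (lam₁ lam₂ : ℝ → V) (v₁ v₂ : V)
    (hlift : ∀ s ∈ I, ∃ g : Γ, lam₂ s = g • lam₁ s)
    (h₁ : HasDerivAt lam₁ v₁ t) (h₂ : HasDerivAt lam₂ v₂ t) :
    ∃ g : Γ, lam₂ t = g • lam₁ t ∧ v₂ = g • v₁ := by
  classical
  set G : ℝ → Γ := fun s => if h : s ∈ I then (hlift s h).choose else 1 with hGdef
  have hG : ∀ s ∈ I, lam₂ s = G s • lam₁ s := by
    intro s hs
    simp only [hGdef, dif_pos hs]
    exact (hlift s hs).choose_spec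
  have hIme : ∀ᶠ s in 𝓝[≠] t, s ∈ I :=
    eventually_nhdsWithin_of_eventually_nhds (hIopen.eventually_mem ht)
  -- find g occurring frequently near t
  have hfreq : ∃ g : Γ, ∃ᶠ s in 𝓝[≠] t, G s = g := by
    by_contra h
    push_neg at h
    have : ∀ᶠ s in 𝓝[≠] t, ∀ g : Γ, G s ≠ g := Filter.eventually_all.2 h
    obtain ⟨s, hs⟩ := this.exists
    exact hs (G s) rfl
  obtain ⟨g, hg⟩ := hfreq
  set l : Filter ℝ := 𝓝[≠] t ⊓ Filter.principal {s | G s = g} with hldef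
  haveI hlne : l.NeBot := Filter.frequently_iff_neBot.1 hg
  have hl : l ≤ 𝓝[≠] t := inf_le_left
  have heq : ∀ᶠ s in l, lam₂ s = g • lam₁ s := by
    have h1 : ∀ᶠ s in l, s ∈ I := hl hIme
    have h2 : ∀ᶠ s in l, G s = g :=
      Filter.eventually_inf_principal.2 (Filter.Eventually.of_forall fun s hs => hs)
    filter_upwards [h1, h2] with s hs hgs
    rw [hG s hs, hgs]
  -- continuity of the action by g
  have hcont : Continuous (fun x : V => g • x) :=
    (LinearMap.toContinuousLinearMap (DistribMulAction.toLinearMap ℝ V g)).continuous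
  have hlt : l ≤ 𝓝 t := hl.trans nhdsWithin_le_nhds
  -- lam₂ t = g • lam₁ t
  have h2t : Filter.Tendsto lam₂ l (𝓝 (lam₂ t)) := h₂.continuousAt.tendsto.comp hlt
  have h1t : Filter.Tendsto (fun s => g • lam₁ s) l (𝓝 (g • lam₁ t)) :=
    (hcont.tendsto _).comp (h₁.continuousAt.tendsto.comp hlt)
  have hval : lam₂ t = g • lam₁ t :=
    tendsto_nhds_unique (h2t.congr' heq) h1t
  refine ⟨g, hval, ?_⟩
  -- slopes
  have hs₁ : Filter.Tendsto (slope lam₁ t) l (𝓝 v₁) :=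
    (hasDerivAt_iff_tendsto_slope.1 h₁).mono_left hl
  have hs₂ : Filter.Tendsto (slope lam₂ t) l (𝓝 v₂) :=
    (hasDerivAt_iff_tendsto_slope.1 h₂).mono_left hl
  have hslope : ∀ᶠ s in l, slope lam₂ t s = g • slope lam₁ t s := by
    filter_upwards [heq] with s hs
    simp only [slope_def_module, hs, hval, ← smul_sub, smul_comm]
  have : Filter.Tendsto (slope lam₂ t) l (𝓝 (g • v₁)) :=
    (((hcont.tendsto _).comp hs₁).congr' (hslope.mono fun s hs => hs.symm))
  exact tendsto_nhds_unique hs₂ this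
end

section
/- Let I be an open interval, t ∈ I, and λ, μ : ℝ → V functions that are continuous at t and such that for every s ∈ I there exists g ∈ Γ with μ(s) = g·λ(s). Then there exists an open interval I′ ⊆ I containing t such that: (a) whenever s ∈ I′ and g ∈ Γ satisfy μ(s) = g·λ(s), then also μ(t) = g·λ(t); and (b) if h ∈ Γ satisfies μ(t) = h·λ(t), then for every s ∈ I′ there exists g ∈ Γ with g·μ(t) = μ(t) and g·μ(s) = h·λ(s). -/
/-- Let `Γ` be a finite group acting linearly on a finite-dimensional real normed vector space
`V`, let `I` be an open interval, `t ∈ I`, and let `λ, μ : ℝ → V` be continuous at `t` with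
`μ s` in the `Γ`-orbit of `λ s` for all `s ∈ I`. Then there is an open interval
`I' = (c, d) ⊆ I` containing `t` such that: (a) whenever `s ∈ I'` and `μ s = g • λ s`, then
`μ t = g • λ t`; and (b) if `μ t = h • λ t`, then for every `s ∈ I'` there is `g ∈ Γ`
stabilizing `μ t` with `g • μ s = h • λ s`. -/
theorem stmt10 {V : Type*} [NormedAddCommGroup V] [NormedSpace ℝ V] [FiniteDimensional ℝ V]
    {Γ : Type*} [Group Γ] [Finite Γ] [DistribMulAction Γ V] [SMulCommClass Γ ℝ V]
    (I : Set ℝ) (hIopen : IsOpen I) (hIconn : I.OrdConnected) (t : ℝ) (ht : t ∈ I)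
    (lam mu : ℝ → V) (hlam : ContinuousAt lam t) (hmu : ContinuousAt mu t)
    (hlift : ∀ s ∈ I, ∃ g : Γ, mu s = g • lam s) :
    ∃ c d : ℝ, t ∈ Set.Ioo c d ∧ Set.Ioo c d ⊆ I ∧
      (∀ s ∈ Set.Ioo c d, ∀ g : Γ, mu s = g • lam s → mu t = g • lam t) ∧
      (∀ h : Γ, mu t = h • lam t →
        ∀ s ∈ Set.Ioo c d, ∃ g : Γ, g • mu t = mu t ∧ g • mu s = h • lam s) := by
  have key : ∀ g : Γ, mu t ≠ g • lam t → ∀ᶠ s in nhds t, mu s ≠ g • lam s := by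
    intro g hg
    have hcg : ContinuousAt (fun s => g • lam s) t := by
      have hc : Continuous (fun x : V => g • x) :=
        (DistribMulAction.toLinearMap ℝ V g).continuous_of_finiteDimensional
      exact hc.continuousAt.comp hlam
    have := (hmu.sub hcg).eventually_ne (sub_ne_zero.mpr hg)
    exact this.mono fun s hs => sub_ne_zero.mp hs
  have hall : ∀ᶠ s in nhds t, ∀ g : Γ, mu s = g • lam s → mu t = g • lam t := by
    rw [Filter.eventually_all]
    intro g
    by_cases hg : mu t = g • lam t
    · exact Filter.Eventually.of_forall fun s _ => hg
    · exact (key g hg).mono fun s hs h => absurd h hs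
  have hmem : {s | (∀ g : Γ, mu s = g • lam s → mu t = g • lam t) ∧ s ∈ I} ∈ nhds t :=
    Filter.inter_mem hall (hIopen.mem_nhds ht)
  obtain ⟨c, d, htc, hsub⟩ := mem_nhds_iff_exists_Ioo_subset.mp hmem
  refine ⟨c, d, htc, fun s hs => (hsub hs).2, fun s hs => (hsub hs).1, ?_⟩
  intro h hh s hs
  obtain ⟨g', hg'⟩ := hlift s (hsub hs).2
  have hgt : mu t = g' • lam t := (hsub hs).1 g' hg'
  refine ⟨h * g'⁻¹, ?_, ?_⟩
  · rw [mul_smul, hgt, inv_smul_smul, ← hh]; exact hgt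
  · rw [hg', mul_smul, inv_smul_smul]
end

section
/- Let t ∈ ℝ and ε > 0. Let μ : ℝ → V be differentiable at t, and let λ : ℝ → V be continuous on (t−ε, t+ε) and such that for every s ∈ (t−ε, t+ε) there exists g ∈ Γ with λ(s) = g·μ(s). Then λ admits a right derivative and a left derivative at t belonging to the Γ-orbit of (μ(t), μ′(t)): there exist g₊, g₋ ∈ Γ such that λ(t) = g₊·μ(t), λ(t) = g₋·μ(t), λ has derivative g₊·μ′(t) at t from within [t, ∞), and λ has derivative g₋·μ′(t) at t from within (−∞, t]. -/
open Set Filter Topology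

/-- If a function on a right-interval is continuous and eventually arbitrarily close to a
finite set `W` as `s → t⁺`, then it tends to a single element of `W`. -/
lemma aux_tendsto_finite {V : Type*} [NormedAddCommGroup V] {f : ℝ → V} {W : Set V}
    (hW : W.Finite) {t b : ℝ} (hb : t < b) (hf : ContinuousOn f (Set.Ioo t b))
    (h : ∀ η > 0, ∀ᶠ s in 𝓝[>] t, ∃ w ∈ W, dist (f s) w < η) :
    ∃ w ∈ W, Filter.Tendsto f (𝓝[>] t) (𝓝 w) := by
  -- a separation radius for W
  obtain ⟨r, hr0, hr⟩ : ∃ r : ℝ, 0 < r ∧ ∀ w ∈ W, ∀ w' ∈ W, w ≠ w' → 3 * r ≤ dist w w' := by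
    by_cases hpair : ({p : V × V | p.1 ∈ W ∧ p.2 ∈ W ∧ p.1 ≠ p.2}).Nonempty
    · obtain ⟨p, hp, hple⟩ := Set.exists_min_image _ (fun p : V × V => dist p.1 p.2)
        ((hW.prod hW).subset fun q hq => ⟨hq.1, hq.2.1⟩) hpair
      refine ⟨dist p.1 p.2 / 3, by
        have : 0 < dist p.1 p.2 := dist_pos.mpr hp.2.2
        linarith, fun w hw w' hw' hne => ?_⟩
      have := hple (w, w') ⟨hw, hw', hne⟩
      simpa using by linarith
    · exact ⟨1, one_pos, fun w hw w' hw' hne => absurd ⟨(w, w'), hw, hw', hne⟩ hpair⟩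
  have hIoo : Ioo t b ∈ 𝓝[>] t := Ioo_mem_nhdsGT_of_mem ⟨le_refl t, hb⟩
  obtain ⟨u, hu, hsub⟩ := mem_nhdsGT_iff_exists_Ioo_subset.mp
    (((h r hr0).and hIoo) : {s | (∃ w ∈ W, dist (f s) w < r) ∧ s ∈ Ioo t b} ∈ 𝓝[>] t)
  have htu : t < u := hu
  set s₀ := (t + u) / 2 with hs₀def
  have hs₀ : s₀ ∈ Ioo t u := ⟨by simp [hs₀def]; linarith, by simp [hs₀def]; linarith⟩
  obtain ⟨w₀, hw₀W, hw₀d⟩ := (hsub hs₀).1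
  have hIsub : Ioo t u ⊆ Ioo t b := fun s hs => (hsub hs).2
  have hfu : ContinuousOn f (Ioo t u) := hf.mono hIsub
  set A := Ioo t u ∩ f ⁻¹' (Metric.ball w₀ r) with hA_def
  set B := Ioo t u ∩ f ⁻¹' (⋃ w ∈ W \ {w₀}, Metric.ball w r) with hB_def
  have hA : IsOpen A := hfu.isOpen_inter_preimage isOpen_Ioo Metric.isOpen_ball
  have hB : IsOpen B := hfu.isOpen_inter_preimage isOpen_Ioo
    (isOpen_biUnion fun w _ => Metric.isOpen_ball)
  have hdisj : Disjoint A B := by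
    rw [Set.disjoint_left]
    rintro s ⟨hsI, hsA⟩ ⟨-, hsB⟩
    obtain ⟨w, hw, hws⟩ := Set.mem_iUnion₂.mp hsB
    have h1 : dist (f s) w₀ < r := Metric.mem_ball.mp hsA
    have h2 : dist (f s) w < r := Metric.mem_ball.mp hws
    have h3 : 3 * r ≤ dist w w₀ := hr w hw.1 w₀ hw₀W hw.2
    have : dist w w₀ ≤ dist (f s) w + dist (f s) w₀ := by
      rw [dist_comm (f s) w]; exact dist_triangle _ _ _
    linarith
  have hcover : Ioo t u ⊆ A ∪ B := by
    intro s hs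
    obtain ⟨w, hwW, hwd⟩ := (hsub hs).1
    by_cases hww : w = w₀
    · exact Or.inl ⟨hs, Metric.mem_ball.mpr (hww ▸ hwd)⟩
    · exact Or.inr ⟨hs, Set.mem_iUnion₂.mpr ⟨w, ⟨hwW, hww⟩, Metric.mem_ball.mpr hwd⟩⟩
  have hsubA : Ioo t u ⊆ A :=
    isPreconnected_Ioo.subset_left_of_subset_union hA hB hdisj hcover
      ⟨s₀, hs₀, hs₀, Metric.mem_ball.mpr hw₀d⟩
  refine ⟨w₀, hw₀W, Metric.tendsto_nhds.mpr fun η hη => ?_⟩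
  have hIoo' : Ioo t u ∈ 𝓝[>] t := Ioo_mem_nhdsGT_of_mem ⟨le_refl t, htu⟩
  filter_upwards [h (min η r) (lt_min hη hr0), hIoo'] with s hs hsI
  obtain ⟨w, hwW, hwd⟩ := hs
  have hball : dist (f s) w₀ < r := Metric.mem_ball.mp (hsubA hsI).2
  by_cases hww : w = w₀
  · exact lt_of_lt_of_le (hww ▸ hwd) (min_le_left _ _)
  · exfalso
    have h3 : 3 * r ≤ dist w w₀ := hr w hwW w₀ hw₀W hww
    have : dist w w₀ ≤ dist (f s) w + dist (f s) w₀ := by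
      rw [dist_comm (f s) w]; exact dist_triangle _ _ _
    have : dist (f s) w < r := lt_of_lt_of_le hwd (min_le_right _ _)
    linarith

/-- One-sided (right) version of the main theorem. -/
lemma aux_right {V : Type*} [NormedAddCommGroup V] [NormedSpace ℝ V] [FiniteDimensional ℝ V]
    {Γ : Type*} [Group Γ] [Finite Γ] [DistribMulAction Γ V] [SMulCommClass Γ ℝ V]
    (t ε : ℝ) (hε : 0 < ε) (mu lam : ℝ → V) (v : V)
    (hmu : HasDerivAt mu v t)
    (hlam : ContinuousOn lam (Set.Ioo (t - ε) (t + ε)))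
    (hlift : ∀ s ∈ Set.Ioo (t - ε) (t + ε), ∃ g : Γ, lam s = g • mu s) :
    ∃ g : Γ, lam t = g • mu t ∧ HasDerivWithinAt lam (g • v) (Set.Ici t) t := by
  classical
  have htI : t ∈ Ioo (t - ε) (t + ε) := ⟨by linarith, by linarith⟩
  -- uniform bound on the operator norms of the action
  obtain ⟨C, hC0, hC⟩ : ∃ C : ℝ, 0 ≤ C ∧ ∀ (g : Γ) (x : V), ‖g • x‖ ≤ C * ‖x‖ := by
    obtain ⟨C, hC⟩ := Finite.exists_le fun g : Γ =>
      ‖(LinearMap.toContinuousLinearMap (DistribMulAction.toLinearMap ℝ V g))‖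
    refine ⟨max C 0, le_max_right _ _, fun g x => ?_⟩
    calc ‖g • x‖ = ‖(LinearMap.toContinuousLinearMap (DistribMulAction.toLinearMap ℝ V g)) x‖ := rfl
    _ ≤ ‖(LinearMap.toContinuousLinearMap (DistribMulAction.toLinearMap ℝ V g))‖ * ‖x‖ :=
        ContinuousLinearMap.le_opNorm _ x
    _ ≤ max C 0 * ‖x‖ :=
        mul_le_mul_of_nonneg_right ((hC g).trans (le_max_left _ _)) (norm_nonneg _)
  set G₀ : Set Γ := {g | lam t = g • mu t} with hG₀def
  have hG₀ne : G₀.Nonempty := by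
    obtain ⟨g, hg⟩ := hlift t htI; exact ⟨g, hg⟩
  set W : Set V := (fun g : Γ => g • v) '' G₀ with hWdef
  have hWfin : W.Finite := (Set.toFinite G₀).image _
  -- positive lower bound for g ∉ G₀
  obtain ⟨c, hc0, hc⟩ : ∃ c : ℝ, 0 < c ∧ ∀ g : Γ, g ∉ G₀ → c ≤ dist (g • mu t) (lam t) := by
    by_cases hne : ({g : Γ | g ∉ G₀}).Nonempty
    · obtain ⟨g₁, hg₁, hg₁le⟩ := Set.exists_min_image _ (fun g : Γ => dist (g • mu t) (lam t))
        (Set.toFinite _) hne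
      refine ⟨dist (g₁ • mu t) (lam t), dist_pos.mpr fun hEq => hg₁ (hEq.symm), fun g hg => hg₁le g hg⟩
    · exact ⟨1, one_pos, fun g hg => (hne ⟨g, hg⟩).elim⟩
  -- continuity facts along 𝓝[>] t
  have hIooMem : Ioo (t - ε) (t + ε) ∈ 𝓝[>] t :=
    mem_nhdsWithin_of_mem_nhds (isOpen_Ioo.mem_nhds htI)
  have hmul : ∀ d η' : ℝ, 0 ≤ d → d < η' / (C + 1) → C * d < η' := by
    intro d η' hd hlt
    have hC1 : (0:ℝ) < C + 1 := by linarith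
    have h1 : (C + 1) * d < (C + 1) * (η' / (C + 1)) := mul_lt_mul_of_pos_left hlt hC1
    have h2 : (C + 1) * (η' / (C + 1)) = η' := by field_simp
    nlinarith
  have hmuc : Tendsto mu (𝓝[>] t) (𝓝 (mu t)) :=
    hmu.continuousAt.continuousWithinAt
  have hlamc : Tendsto lam (𝓝[>] t) (𝓝 (lam t)) :=
    (hlam.continuousWithinAt htI).mono_left (nhdsWithin_le_of_mem hIooMem)
  -- eventually the lift can be chosen in G₀
  have hE : ∀ᶠ s in 𝓝[>] t, ∃ g ∈ G₀, lam s = g • mu s := by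
    filter_upwards [hIooMem, Metric.tendsto_nhds.mp hlamc (c / 2) (by linarith),
      Metric.tendsto_nhds.mp hmuc (c / (2 * (C + 1))) (by positivity)] with s hsI hls hms
    obtain ⟨g, hg⟩ := hlift s hsI
    by_cases hgG : g ∈ G₀
    · exact ⟨g, hgG, hg⟩
    · exfalso
      have h3 : c ≤ dist (g • mu t) (lam t) := hc g hgG
      have h4 : dist (g • mu t) (g • mu s) ≤ C * dist (mu t) (mu s) := by
        rw [dist_eq_norm, dist_eq_norm, ← smul_sub]
        exact hC g _
      have h5 : dist (g • mu s) (lam t) = dist (lam s) (lam t) := by rw [hg]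
      have h6 : dist (g • mu t) (lam t) ≤ dist (g • mu t) (g • mu s) + dist (g • mu s) (lam t) :=
        dist_triangle _ _ _
      have h7 : dist (mu t) (mu s) < c / (2 * (C + 1)) := by rw [dist_comm]; exact hms
      have h8 : C * dist (mu t) (mu s) < c / 2 := by
        apply hmul _ _ dist_nonneg
        rw [div_div]
        exact h7
      linarith
  -- the slope of lam is eventually close to W
  have hms : Tendsto (slope mu t) (𝓝[>] t) (𝓝 v) :=
    (hasDerivAt_iff_tendsto_slope.mp hmu).mono_left
      (nhdsWithin_mono t fun s hs => ne_of_gt hs)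
  have hslope : ∀ η > 0, ∀ᶠ s in 𝓝[>] t, ∃ w ∈ W, dist (slope lam t s) w < η := by
    intro η hη
    filter_upwards [hE, Metric.tendsto_nhds.mp hms (η / (C + 1)) (by positivity)] with s hs hd
    obtain ⟨g, hgG, hg⟩ := hs
    refine ⟨g • v, ⟨g, hgG, rfl⟩, ?_⟩
    have hlt : lam t = g • mu t := hgG
    have hkey : slope lam t s = g • slope mu t s := by
      simp only [slope_def_module, vsub_eq_sub, hg, hlt, ← smul_sub, smul_comm]
    rw [hkey]
    have : dist (g • slope mu t s) (g • v) ≤ C * dist (slope mu t s) v := by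
      rw [dist_eq_norm, dist_eq_norm, ← smul_sub]; exact hC g _
    exact lt_of_le_of_lt this (hmul _ _ dist_nonneg hd)
  -- continuity of slope on (t, t+ε)
  have hIsub : Ioo t (t + ε) ⊆ Ioo (t - ε) (t + ε) := fun s hs => ⟨by linarith [hs.1], hs.2⟩
  have hcont : ContinuousOn (slope lam t) (Ioo t (t + ε)) := by
    have heq : ∀ s ∈ Ioo t (t + ε), slope lam t s = (s - t)⁻¹ • (lam s - lam t) := by
      intro s _; simp [slope_def_module]
    refine ContinuousOn.congr ?_ heq
    exact (((continuousOn_id.sub continuousOn_const).inv₀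
      fun s hs => sub_ne_zero.mpr (ne_of_gt hs.1)).smul
      (((hlam.mono hIsub)).sub continuousOn_const))
  obtain ⟨w, hwW, htend⟩ := aux_tendsto_finite hWfin (by linarith : t < t + ε) hcont hslope
  obtain ⟨g, hgG, rfl⟩ := hwW
  refine ⟨g, hgG, ?_⟩
  rw [hasDerivWithinAt_iff_tendsto_slope, Set.Ici_sdiff_left]
  exact htend

/-- Let `Γ` be a finite group acting linearly on a finite-dimensional real normed vector space
`V`. Let `μ : ℝ → V` be differentiable at `t` (with derivative `v`), and let `λ : ℝ → V` be
continuous on `(t-ε, t+ε)` with `λ s` in the `Γ`-orbit of `μ s` for all `s ∈ (t-ε, t+ε)`.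
Then `λ` admits one-sided derivatives at `t` in the `Γ`-orbit of `(μ t, v)`: there exist
`g₊, g₋ ∈ Γ` with `λ t = g₊ • μ t`, `λ t = g₋ • μ t`, `λ` has derivative `g₊ • v` at `t` from
within `[t, ∞)`, and derivative `g₋ • v` at `t` from within `(-∞, t]`. -/
theorem stmt11 {V : Type*} [NormedAddCommGroup V] [NormedSpace ℝ V] [FiniteDimensional ℝ V]
    {Γ : Type*} [Group Γ] [Finite Γ] [DistribMulAction Γ V] [SMulCommClass Γ ℝ V]
    (t ε : ℝ) (hε : 0 < ε) (mu lam : ℝ → V) (v : V)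
    (hmu : HasDerivAt mu v t)
    (hlam : ContinuousOn lam (Set.Ioo (t - ε) (t + ε)))
    (hlift : ∀ s ∈ Set.Ioo (t - ε) (t + ε), ∃ g : Γ, lam s = g • mu s) :
    ∃ gp gm : Γ, lam t = gp • mu t ∧ lam t = gm • mu t ∧
      HasDerivWithinAt lam (gp • v) (Set.Ici t) t ∧
      HasDerivWithinAt lam (gm • v) (Set.Iic t) t := by
  obtain ⟨gp, hp1, hp2⟩ := aux_right t ε hε mu lam v hmu hlam hlift
  -- reflect for the left side
  set refl : ℝ → ℝ := fun s => 2 * t - s with hrefl_def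
  have hreflt : refl t = t := by simp [hrefl_def]; ring
  have hreflD : HasDerivAt refl (-1) t := by
    simpa using (hasDerivAt_id t).const_sub (2 * t)
  have hmu' : HasDerivAt (mu ∘ refl) (-v) t := by
    have h1 : HasDerivAt mu v (refl t) := by rw [hreflt]; exact hmu
    simpa using HasDerivAt.scomp t h1 hreflD
  have hmapsTo : ∀ s ∈ Ioo (t - ε) (t + ε), refl s ∈ Ioo (t - ε) (t + ε) := by
    intro s hs
    exact ⟨by simp [hrefl_def]; linarith [hs.2], by simp [hrefl_def]; linarith [hs.1]⟩
  have hlam' : ContinuousOn (lam ∘ refl) (Ioo (t - ε) (t + ε)) :=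
    hlam.comp ((continuous_const.sub continuous_id).continuousOn) hmapsTo
  have hlift' : ∀ s ∈ Set.Ioo (t - ε) (t + ε), ∃ g : Γ, (lam ∘ refl) s = g • (mu ∘ refl) s :=
    fun s hs => hlift (refl s) (hmapsTo s hs)
  obtain ⟨gm, hm1, hm2⟩ := aux_right t ε hε (mu ∘ refl) (lam ∘ refl) (-v) hmu' hlam' hlift'
  have hm1' : lam t = gm • mu t := by simpa [Function.comp, hreflt] using hm1
  -- transport the right derivative of lam ∘ refl back
  have hreflDW : HasDerivWithinAt refl (-1) (Iic t) t := hreflD.hasDerivWithinAt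
  have hmaps2 : Set.MapsTo refl (Iic t) (Ici t) := by
    intro s hs; simp only [hrefl_def, Set.mem_Ici]; have : s ≤ t := hs; linarith
  have hm2' : HasDerivWithinAt ((lam ∘ refl) ∘ refl) ((-1 : ℝ) • (gm • -v)) (Iic t) t := by
    have h1 : HasDerivWithinAt (lam ∘ refl) (gm • -v) (Ici t) (refl t) := by
      rw [hreflt]; exact hm2
    exact HasDerivWithinAt.scomp t h1 hreflDW hmaps2
  have hcomp : (lam ∘ refl) ∘ refl = lam := by
    funext s
    have hrr : refl (refl s) = s := by simp only [hrefl_def]; ring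
    simp [Function.comp, hrr]
  have hval : ((-1 : ℝ) • (gm • -v)) = gm • v := by
    rw [smul_neg, neg_one_smul, neg_neg]
  rw [hcomp, hval] at hm2'
  exact ⟨gp, gm, hp1, hm1', hp2, hm2'⟩
end

section
/- Let I be an open interval and (I_j)_{j∈J} a family of open intervals whose union equals I. Let ξ : ℝ → V/Γ be a function such that for every j ∈ J there exists λ_j : ℝ → V which is continuously differentiable (C¹) on I_j and satisfies π(λ_j(s)) = ξ(s) for all s ∈ I_j. Then there exists λ : ℝ → V which is continuously differentiable on I and satisfies π(λ(s)) = ξ(s) for all s ∈ I. -/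
set_option linter.unusedSectionVars false
set_option maxHeartbeats 1000000

open Set Filter Topology MulAction

section Helpers
variable {V : Type*} [NormedAddCommGroup V] [NormedSpace ℝ V] [FiniteDimensional ℝ V]
  {Γ : Type*} [Group Γ] [Finite Γ] [DistribMulAction Γ V] [SMulCommClass Γ ℝ V]

noncomputable def actL (g : Γ) : V →L[ℝ] V :=
  LinearMap.toContinuousLinearMap (DistribMulAction.toLinearMap ℝ V g)

lemma actL_apply (g : Γ) (v : V) : actL (V := V) g v = g • v := rfl

lemma lemA (ξ : ℝ → Quotient (orbitRel Γ V)) {U₁ U₂ : Set ℝ} (hU₁ : IsOpen U₁) (hU₂ : IsOpen U₂)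
    {s : ℝ} (hs₁ : s ∈ U₁) (hs₂ : s ∈ U₂) {f₁ f₂ : ℝ → V}
    (h₁ : ContDiffOn ℝ 1 f₁ U₁) (hl₁ : ∀ t ∈ U₁, Quotient.mk (orbitRel Γ V) (f₁ t) = ξ t)
    (h₂ : ContDiffOn ℝ 1 f₂ U₂) (hl₂ : ∀ t ∈ U₂, Quotient.mk (orbitRel Γ V) (f₂ t) = ξ t) :
    ∃ g : Γ, f₁ s = g • f₂ s ∧ deriv f₁ s = g • deriv f₂ s := by
  classical
  haveI : Fintype Γ := Fintype.ofFinite Γ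
  have hUU : U₁ ∩ U₂ ∈ 𝓝 s := (hU₁.inter hU₂).mem_nhds ⟨hs₁, hs₂⟩
  -- the sets of agreement with g
  set E : Γ → Set ℝ := fun g => {t | f₁ t = g • f₂ t} ∩ ((U₁ ∩ U₂) \ {s}) with hE
  have hcov : ((U₁ ∩ U₂) \ {s}) ⊆ ⋃ g : Γ, E g := by
    intro t ht
    have h : Quotient.mk (orbitRel Γ V) (f₁ t) = Quotient.mk (orbitRel Γ V) (f₂ t) := by
      rw [hl₁ t ht.1.1, hl₂ t ht.1.2]
    rw [Quotient.eq] at h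
    rw [orbitRel_apply] at h
    obtain ⟨g, hg⟩ := h
    exact mem_iUnion.2 ⟨g, ⟨hg.symm, ht⟩⟩
  have hne : (𝓝[(U₁ ∩ U₂) \ {s}] s).NeBot := by
    rw [diff_eq, nhdsWithin_inter_of_mem (mem_nhdsWithin_of_mem_nhds hUU)]
    exact inferInstance
  -- find g such that s is in the closure of E g
  have hEg : ∃ g : Γ, (𝓝[E g] s).NeBot := by
    by_contra h
    push_neg at h
    have hbot : ∀ g : Γ, 𝓝[E g] s = ⊥ := fun g => h g
    have : 𝓝[(U₁ ∩ U₂) \ {s}] s ≤ 𝓝[⋃ g : Γ, E g] s := nhdsWithin_mono _ hcov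
    have h2 : 𝓝[⋃ g : Γ, E g] s = ⊥ := by
      rw [nhdsWithin_iUnion]
      simp [hbot]
    exact hne.ne (le_bot_iff.mp (h2 ▸ this))
  obtain ⟨g, hg⟩ := hEg
  refine ⟨g, ?_⟩
  -- h := f₁ - g • f₂ vanishes on E g, which accumulates at s
  set φ : ℝ → V := fun t => f₁ t - actL (V := V) g (f₂ t) with hφ
  have hd₁ : HasDerivAt f₁ (deriv f₁ s) s :=
    ((h₁.contDiffAt (hU₁.mem_nhds hs₁)).differentiableAt one_ne_zero).hasDerivAt
  have hd₂ : HasDerivAt f₂ (deriv f₂ s) s :=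
    ((h₂.contDiffAt (hU₂.mem_nhds hs₂)).differentiableAt one_ne_zero).hasDerivAt
  have hd₂' : HasDerivAt (fun t => actL (V := V) g (f₂ t)) (actL (V := V) g (deriv f₂ s)) s :=
    (actL (V := V) g).hasFDerivAt.comp_hasDerivAt s hd₂
  have hdφ : HasDerivAt φ (deriv f₁ s - actL (V := V) g (deriv f₂ s)) s := hd₁.sub hd₂'
  have hmem : ∀ᶠ t in 𝓝[E g] s, t ∈ E g := eventually_mem_nhdsWithin
  -- value
  have hval : φ s = 0 := by
    have h1' : Tendsto φ (𝓝[E g] s) (𝓝 (φ s)) :=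
      hdφ.continuousAt.continuousWithinAt
    have h2 : Tendsto φ (𝓝[E g] s) (𝓝 0) := by
      refine Tendsto.congr' ?_ tendsto_const_nhds
      filter_upwards [hmem] with t ht
      simp only [hφ, actL_apply]
      rw [ht.1]
      simp
    exact tendsto_nhds_unique h1' h2
  have hval' : f₁ s = g • f₂ s := by
    have := sub_eq_zero.mp hval
    rwa [actL_apply] at this
  refine ⟨hval', ?_⟩
  -- derivative
  have hslope : Tendsto (slope φ s) (𝓝[≠] s) (𝓝 (deriv f₁ s - actL (V := V) g (deriv f₂ s))) :=
    hasDerivAt_iff_tendsto_slope.1 hdφ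
  have hEsub : E g ⊆ {s}ᶜ := fun t ht => ht.2.2
  have hslope' : Tendsto (slope φ s) (𝓝[E g] s) (𝓝 (deriv f₁ s - actL (V := V) g (deriv f₂ s))) :=
    hslope.mono_left (nhdsWithin_mono _ hEsub)
  have hslope0 : Tendsto (slope φ s) (𝓝[E g] s) (𝓝 0) := by
    refine Tendsto.congr' ?_ tendsto_const_nhds
    filter_upwards [hmem] with t ht
    have : φ t = 0 := by
      simp only [hφ, actL_apply]
      rw [ht.1]; simp
    rw [slope_def_module, this, hval]
    simp
  have := tendsto_nhds_unique hslope' hslope0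
  have := sub_eq_zero.mp this
  rwa [actL_apply] at this

lemma lemB (ξ : ℝ → Quotient (orbitRel Γ V)) {U₁ U₂ : Set ℝ} (hU₁ : IsOpen U₁) (hU₂ : IsOpen U₂)
    {s : ℝ} (hs₁ : s ∈ U₁) (hs₂ : s ∈ U₂) {f₁ f₂ : ℝ → V}
    (h₁ : ContDiffOn ℝ 1 f₁ U₁) (hl₁ : ∀ t ∈ U₁, Quotient.mk (orbitRel Γ V) (f₁ t) = ξ t)
    (h₂ : ContDiffOn ℝ 1 f₂ U₂) (hl₂ : ∀ t ∈ U₂, Quotient.mk (orbitRel Γ V) (f₂ t) = ξ t) :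
    ∃ f : ℝ → V, IsOpen ((U₁ ∩ Iic s) ∪ (U₂ ∩ Ici s)) ∧
      ContDiffOn ℝ 1 f ((U₁ ∩ Iic s) ∪ (U₂ ∩ Ici s)) ∧
      (∀ t ∈ (U₁ ∩ Iic s) ∪ (U₂ ∩ Ici s), Quotient.mk (orbitRel Γ V) (f t) = ξ t) ∧
      ∀ t ∈ Iic s, f t = f₁ t := by
  classical
  obtain ⟨g, hgv, hgd⟩ := lemA ξ hU₁ hU₂ hs₁ hs₂ h₁ hl₁ h₂ hl₂
  set μ : ℝ → V := fun t => g • f₂ t with hμdef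
  have hμc : ContDiffOn ℝ 1 μ U₂ := (actL (V := V) g).contDiff.comp_contDiffOn h₂
  have hlμ : ∀ t ∈ U₂, Quotient.mk (orbitRel Γ V) (μ t) = ξ t := by
    intro t ht
    rw [← hl₂ t ht]
    exact Quotient.eq.mpr (orbitRel_apply.mpr (MulAction.mem_orbit _ g))
  set W : Set ℝ := (U₁ ∩ Iic s) ∪ (U₂ ∩ Ici s) with hWdef
  set f : ℝ → V := fun t => if t ≤ s then f₁ t else μ t with hfdef
  have hfIic : ∀ t ∈ Iic s, f t = f₁ t := fun t ht => if_pos ht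
  have hfIoi : ∀ t ∈ Ioi s, f t = μ t := fun t ht => if_neg (not_le.mpr ht)
  have hμs : μ s = f₁ s := hgv.symm
  have hfs : f s = f₁ s := hfIic s (mem_Iic.mpr le_rfl)
  set D : V := deriv f₁ s with hD
  have hd₁ : HasDerivAt f₁ D s :=
    ((h₁.contDiffAt (hU₁.mem_nhds hs₁)).differentiableAt one_ne_zero).hasDerivAt
  have hd₂ : HasDerivAt f₂ (deriv f₂ s) s :=
    ((h₂.contDiffAt (hU₂.mem_nhds hs₂)).differentiableAt one_ne_zero).hasDerivAt
  have hdμ : HasDerivAt μ D s := by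
    have := (actL (V := V) g).hasFDerivAt.comp_hasDerivAt s hd₂
    simp only [actL_apply] at this
    rwa [← hgd] at this
  -- openness of W
  have hWopen : IsOpen W := by
    rw [isOpen_iff_mem_nhds]
    rintro t (⟨ht₁, hts⟩ | ⟨ht₂, hts⟩)
    · rcases lt_or_eq_of_le (mem_Iic.mp hts) with h | h
      · exact mem_of_superset (Filter.inter_mem (hU₁.mem_nhds ht₁) (isOpen_Iio.mem_nhds h))
          fun x hx => Or.inl ⟨hx.1, mem_Iic.mpr (le_of_lt (mem_Iio.mp hx.2))⟩
      · subst h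
        exact mem_of_superset (Filter.inter_mem (hU₁.mem_nhds ht₁) (hU₂.mem_nhds hs₂))
          fun x hx => (le_total x t).elim (fun h => Or.inl ⟨hx.1, mem_Iic.mpr h⟩) fun h => Or.inr ⟨hx.2, mem_Ici.mpr h⟩
    · rcases lt_or_eq_of_le (mem_Ici.mp hts) with h | h
      · exact mem_of_superset (Filter.inter_mem (hU₂.mem_nhds ht₂) (isOpen_Ioi.mem_nhds h))
          fun x hx => Or.inr ⟨hx.1, mem_Ici.mpr (le_of_lt (mem_Ioi.mp hx.2))⟩
      · rcases h.symm ▸ (rfl : t = t) with _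
        have : t = s := h.symm
        subst this
        exact mem_of_superset (Filter.inter_mem (hU₁.mem_nhds hs₁) (hU₂.mem_nhds hs₂))
          fun x hx => (le_total x t).elim (fun h => Or.inl ⟨hx.1, mem_Iic.mpr h⟩) fun h => Or.inr ⟨hx.2, mem_Ici.mpr h⟩
  -- derivative at s
  have hds : HasDerivAt f D s := by
    have hleft : HasDerivWithinAt f D (Iic s) s :=
      hd₁.hasDerivWithinAt.congr (fun t ht => hfIic t ht) hfs
    have hright : HasDerivWithinAt f D (Ici s) s := by
      refine hdμ.hasDerivWithinAt.congr (fun t ht => ?_) (hfs.trans hμs.symm)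
      rcases eq_or_lt_of_le (mem_Ici.mp ht) with h | h
      · rw [← h, hfs, hμs]
      · exact hfIoi t (mem_Ioi.mpr h)
    have := hleft.union hright
    rw [Iic_union_Ici] at this
    exact hasDerivWithinAt_univ.mp this
  -- local agreement away from s
  have hagree₁ : ∀ t : ℝ, t < s → f =ᶠ[nhds t] f₁ := by
    intro t ht
    filter_upwards [isOpen_Iio.mem_nhds ht] with x hx
    exact hfIic x (mem_Iic.mpr (le_of_lt (mem_Iio.mp hx)))
  have hagree₂ : ∀ t : ℝ, s < t → f =ᶠ[nhds t] μ := by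
    intro t ht
    filter_upwards [isOpen_Ioi.mem_nhds ht] with x hx
    exact hfIoi x (mem_Ioi.mp hx)
  -- membership facts
  have hmemlt : ∀ t ∈ W, t < s → t ∈ U₁ := by
    rintro t (⟨ht₁, _⟩ | ⟨_, hts⟩) h
    · exact ht₁
    · exact absurd h (not_lt.mpr hts)
  have hmemgt : ∀ t ∈ W, s < t → t ∈ U₂ := by
    rintro t (⟨_, hts⟩ | ⟨ht₂, _⟩) h
    · exact absurd h (not_lt.mpr hts)
    · exact ht₂
  -- differentiability on W
  have hdiff : DifferentiableOn ℝ f W := by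
    intro t ht
    rcases lt_trichotomy t s with h | h | h
    · have : DifferentiableAt ℝ f₁ t :=
        (h₁.contDiffAt (hU₁.mem_nhds (hmemlt t ht h))).differentiableAt one_ne_zero
      exact ((hagree₁ t h).differentiableAt_iff.mpr this).differentiableWithinAt
    · subst h; exact hds.differentiableAt.differentiableWithinAt
    · have : DifferentiableAt ℝ μ t :=
        (hμc.contDiffAt (hU₂.mem_nhds (hmemgt t ht h))).differentiableAt one_ne_zero
      exact ((hagree₂ t h).differentiableAt_iff.mpr this).differentiableWithinAt
  -- continuity of deriv on W
  have hderiv₁ : ∀ t : ℝ, t < s → deriv f t = deriv f₁ t := fun t ht => (hagree₁ t ht).deriv_eq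
  have hderiv₂ : ∀ t : ℝ, s < t → deriv f t = deriv μ t := fun t ht => (hagree₂ t ht).deriv_eq
  have hdc₁ : ContinuousOn (deriv f₁) U₁ := h₁.continuousOn_deriv_of_isOpen hU₁ le_rfl
  have hdcμ : ContinuousOn (deriv μ) U₂ := hμc.continuousOn_deriv_of_isOpen hU₂ le_rfl
  have hcont : ContinuousOn (deriv f) W := by
    intro t ht
    rcases lt_trichotomy t s with h | h | h
    · refine ContinuousAt.continuousWithinAt ?_
      refine (hdc₁.continuousAt (hU₁.mem_nhds (hmemlt t ht h))).congr ?_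
      filter_upwards [isOpen_Iio.mem_nhds h] with x hx
      exact (hderiv₁ x hx).symm
    · subst h
      have hDs : deriv f t = D := hds.deriv
      rw [ContinuousWithinAt, hDs]
      have hsub : 𝓝[W] t ≤ 𝓝[Iic t] t ⊔ 𝓝[Ioi t] t := by
        rw [← nhdsWithin_union, Iic_union_Ioi]
        exact nhdsWithin_mono _ (subset_univ _)
      refine Tendsto.mono_left ?_ hsub
      rw [tendsto_sup]
      constructor
      · have h1 : Tendsto (deriv f₁) (𝓝[Iic t] t) (𝓝 D) :=
          (hdc₁.continuousAt (hU₁.mem_nhds hs₁)).continuousWithinAt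
        refine h1.congr' ?_
        filter_upwards [self_mem_nhdsWithin] with x hx
        rcases eq_or_lt_of_le (mem_Iic.mp hx) with h | h
        · subst h; rw [hDs]
        · exact (hderiv₁ x h).symm
      · have h1 : Tendsto (deriv μ) (𝓝[Ioi t] t) (𝓝 (deriv μ t)) :=
          (hdcμ.continuousAt (hU₂.mem_nhds hs₂)).continuousWithinAt
        rw [hdμ.deriv] at h1
        refine h1.congr' ?_
        filter_upwards [self_mem_nhdsWithin] with x hx
        exact (hderiv₂ x hx).symm
    · refine ContinuousAt.continuousWithinAt ?_
      refine (hdcμ.continuousAt (hU₂.mem_nhds (hmemgt t ht h))).congr ?_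
      filter_upwards [isOpen_Ioi.mem_nhds h] with x hx
      exact (hderiv₂ x hx).symm
  refine ⟨f, hWopen, ?_, ?_, hfIic⟩
  · rw [show (1 : WithTop ℕ∞) = 0 + 1 from rfl, contDiffOn_succ_iff_deriv_of_isOpen hWopen]
    refine ⟨hdiff, by simp, ?_⟩
    rwa [contDiffOn_zero]
  · intro t ht
    by_cases h : t ≤ s
    · rw [hfIic t (mem_Iic.mpr h)]
      rcases eq_or_lt_of_le h with he | hlt
      · subst he; exact hl₁ t hs₁
      · exact hl₁ t (hmemlt t ht hlt)
    · rw [hfIoi t (mem_Ioi.mpr (not_le.mp h))]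
      exact hlμ t (hmemgt t ht (not_le.mp h))


lemma lemB' (ξ : ℝ → Quotient (orbitRel Γ V)) {U₁ U₂ : Set ℝ} (hU₁ : IsOpen U₁) (hU₂ : IsOpen U₂)
    {s : ℝ} (hs₁ : s ∈ U₁) (hs₂ : s ∈ U₂) {f₁ f₂ : ℝ → V}
    (h₁ : ContDiffOn ℝ 1 f₁ U₁) (hl₁ : ∀ t ∈ U₁, Quotient.mk (orbitRel Γ V) (f₁ t) = ξ t)
    (h₂ : ContDiffOn ℝ 1 f₂ U₂) (hl₂ : ∀ t ∈ U₂, Quotient.mk (orbitRel Γ V) (f₂ t) = ξ t) :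
    ∃ f : ℝ → V, IsOpen ((U₁ ∩ Iic s) ∪ (U₂ ∩ Ici s)) ∧
      ContDiffOn ℝ 1 f ((U₁ ∩ Iic s) ∪ (U₂ ∩ Ici s)) ∧
      (∀ t ∈ (U₁ ∩ Iic s) ∪ (U₂ ∩ Ici s), Quotient.mk (orbitRel Γ V) (f t) = ξ t) ∧
      ∀ t ∈ Ici s, f t = f₂ t := by
  classical
  obtain ⟨g, hgv, hgd⟩ := lemA ξ hU₂ hU₁ hs₂ hs₁ h₂ hl₂ h₁ hl₁
  set μ : ℝ → V := fun t => g • f₁ t with hμdef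
  have hμc : ContDiffOn ℝ 1 μ U₁ := (actL (V := V) g).contDiff.comp_contDiffOn h₁
  have hlμ : ∀ t ∈ U₁, Quotient.mk (orbitRel Γ V) (μ t) = ξ t := by
    intro t ht
    rw [← hl₁ t ht]
    exact Quotient.eq.mpr (orbitRel_apply.mpr (MulAction.mem_orbit _ g))
  set W : Set ℝ := (U₁ ∩ Iic s) ∪ (U₂ ∩ Ici s) with hWdef
  set f : ℝ → V := fun t => if t ≤ s then μ t else f₂ t with hfdef
  have hfIic : ∀ t ∈ Iic s, f t = μ t := fun t ht => if_pos (mem_Iic.mp ht)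
  have hfIoi : ∀ t ∈ Ioi s, f t = f₂ t := fun t ht => if_neg (not_le.mpr (mem_Ioi.mp ht))
  have hμs : μ s = f₂ s := hgv.symm
  have hfs : f s = μ s := hfIic s (mem_Iic.mpr le_rfl)
  set D : V := deriv f₂ s with hD
  have hd₂ : HasDerivAt f₂ D s :=
    ((h₂.contDiffAt (hU₂.mem_nhds hs₂)).differentiableAt one_ne_zero).hasDerivAt
  have hd₁ : HasDerivAt f₁ (deriv f₁ s) s :=
    ((h₁.contDiffAt (hU₁.mem_nhds hs₁)).differentiableAt one_ne_zero).hasDerivAt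
  have hdμ : HasDerivAt μ D s := by
    have := (actL (V := V) g).hasFDerivAt.comp_hasDerivAt s hd₁
    simp only [actL_apply] at this
    rwa [← hgd] at this
  have hWopen : IsOpen W := by
    rw [isOpen_iff_mem_nhds]
    rintro t (⟨ht₁, hts⟩ | ⟨ht₂, hts⟩)
    · rcases lt_or_eq_of_le (mem_Iic.mp hts) with h | h
      · exact mem_of_superset (Filter.inter_mem (hU₁.mem_nhds ht₁) (isOpen_Iio.mem_nhds h))
          fun x hx => Or.inl ⟨hx.1, mem_Iic.mpr (le_of_lt (mem_Iio.mp hx.2))⟩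
      · subst h
        exact mem_of_superset (Filter.inter_mem (hU₁.mem_nhds ht₁) (hU₂.mem_nhds hs₂))
          fun x hx => (le_total x t).elim (fun h => Or.inl ⟨hx.1, mem_Iic.mpr h⟩)
            fun h => Or.inr ⟨hx.2, mem_Ici.mpr h⟩
    · rcases lt_or_eq_of_le (mem_Ici.mp hts) with h | h
      · exact mem_of_superset (Filter.inter_mem (hU₂.mem_nhds ht₂) (isOpen_Ioi.mem_nhds h))
          fun x hx => Or.inr ⟨hx.1, mem_Ici.mpr (le_of_lt (mem_Ioi.mp hx.2))⟩
      · have : t = s := h.symm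
        subst this
        exact mem_of_superset (Filter.inter_mem (hU₁.mem_nhds hs₁) (hU₂.mem_nhds hs₂))
          fun x hx => (le_total x t).elim (fun h => Or.inl ⟨hx.1, mem_Iic.mpr h⟩)
            fun h => Or.inr ⟨hx.2, mem_Ici.mpr h⟩
  have hds : HasDerivAt f D s := by
    have hleft : HasDerivWithinAt f D (Iic s) s :=
      hdμ.hasDerivWithinAt.congr (fun t ht => hfIic t ht) hfs
    have hright : HasDerivWithinAt f D (Ici s) s := by
      refine hd₂.hasDerivWithinAt.congr (fun t ht => ?_) (hfs.trans hμs)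
      rcases eq_or_lt_of_le (mem_Ici.mp ht) with h | h
      · rw [← h, hfs, hμs]
      · exact hfIoi t (mem_Ioi.mpr h)
    have := hleft.union hright
    rw [Iic_union_Ici] at this
    exact hasDerivWithinAt_univ.mp this
  have hagree₁ : ∀ t : ℝ, t < s → f =ᶠ[nhds t] μ := by
    intro t ht
    filter_upwards [isOpen_Iio.mem_nhds ht] with x hx
    exact hfIic x (mem_Iic.mpr (le_of_lt (mem_Iio.mp hx)))
  have hagree₂ : ∀ t : ℝ, s < t → f =ᶠ[nhds t] f₂ := by
    intro t ht
    filter_upwards [isOpen_Ioi.mem_nhds ht] with x hx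
    exact hfIoi x hx
  have hmemlt : ∀ t ∈ W, t < s → t ∈ U₁ := by
    rintro t (⟨ht₁, _⟩ | ⟨_, hts⟩) h
    · exact ht₁
    · exact absurd h (not_lt.mpr hts)
  have hmemgt : ∀ t ∈ W, s < t → t ∈ U₂ := by
    rintro t (⟨_, hts⟩ | ⟨ht₂, _⟩) h
    · exact absurd h (not_lt.mpr hts)
    · exact ht₂
  have hdiff : DifferentiableOn ℝ f W := by
    intro t ht
    rcases lt_trichotomy t s with h | h | h
    · have : DifferentiableAt ℝ μ t :=
        (hμc.contDiffAt (hU₁.mem_nhds (hmemlt t ht h))).differentiableAt one_ne_zero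
      exact ((hagree₁ t h).differentiableAt_iff.mpr this).differentiableWithinAt
    · subst h; exact hds.differentiableAt.differentiableWithinAt
    · have : DifferentiableAt ℝ f₂ t :=
        (h₂.contDiffAt (hU₂.mem_nhds (hmemgt t ht h))).differentiableAt one_ne_zero
      exact ((hagree₂ t h).differentiableAt_iff.mpr this).differentiableWithinAt
  have hderiv₁ : ∀ t : ℝ, t < s → deriv f t = deriv μ t := fun t ht => (hagree₁ t ht).deriv_eq
  have hderiv₂ : ∀ t : ℝ, s < t → deriv f t = deriv f₂ t := fun t ht => (hagree₂ t ht).deriv_eq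
  have hdc₁ : ContinuousOn (deriv μ) U₁ := hμc.continuousOn_deriv_of_isOpen hU₁ le_rfl
  have hdcμ : ContinuousOn (deriv f₂) U₂ := h₂.continuousOn_deriv_of_isOpen hU₂ le_rfl
  have hcont : ContinuousOn (deriv f) W := by
    intro t ht
    rcases lt_trichotomy t s with h | h | h
    · refine ContinuousAt.continuousWithinAt ?_
      refine (hdc₁.continuousAt (hU₁.mem_nhds (hmemlt t ht h))).congr ?_
      filter_upwards [isOpen_Iio.mem_nhds h] with x hx
      exact (hderiv₁ x hx).symm
    · subst h
      have hDs : deriv f t = D := hds.deriv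
      rw [ContinuousWithinAt, hDs]
      have hsub : 𝓝[W] t ≤ 𝓝[Iic t] t ⊔ 𝓝[Ioi t] t := by
        rw [← nhdsWithin_union, Iic_union_Ioi]
        exact nhdsWithin_mono _ (subset_univ _)
      refine Tendsto.mono_left ?_ hsub
      rw [tendsto_sup]
      constructor
      · have h1 : Tendsto (deriv μ) (𝓝[Iic t] t) (𝓝 (deriv μ t)) :=
          (hdc₁.continuousAt (hU₁.mem_nhds hs₁)).continuousWithinAt
        rw [hdμ.deriv] at h1
        refine h1.congr' ?_
        filter_upwards [self_mem_nhdsWithin] with x hx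
        rcases eq_or_lt_of_le (mem_Iic.mp hx) with h | h
        · subst h; rw [hDs]; exact hdμ.deriv
        · exact (hderiv₁ x h).symm
      · have h1 : Tendsto (deriv f₂) (𝓝[Ioi t] t) (𝓝 (deriv f₂ t)) :=
          (hdcμ.continuousAt (hU₂.mem_nhds hs₂)).continuousWithinAt
        refine h1.congr' ?_
        filter_upwards [self_mem_nhdsWithin] with x hx
        exact (hderiv₂ x (mem_Ioi.mp hx)).symm
    · refine ContinuousAt.continuousWithinAt ?_
      refine (hdcμ.continuousAt (hU₂.mem_nhds (hmemgt t ht h))).congr ?_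
      filter_upwards [isOpen_Ioi.mem_nhds h] with x hx
      exact (hderiv₂ x hx).symm
  have hfIci : ∀ t ∈ Ici s, f t = f₂ t := by
    intro t ht
    rcases eq_or_lt_of_le (mem_Ici.mp ht) with h | h
    · rw [← h, hfs, hμs]
    · exact hfIoi t (mem_Ioi.mpr h)
  refine ⟨f, hWopen, ?_, ?_, hfIci⟩
  · rw [show (1 : WithTop ℕ∞) = 0 + 1 from rfl, contDiffOn_succ_iff_deriv_of_isOpen hWopen]
    refine ⟨hdiff, by simp, ?_⟩
    rwa [contDiffOn_zero]
  · intro t ht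
    by_cases h : t ≤ s
    · rw [hfIic t (mem_Iic.mpr h)]
      rcases eq_or_lt_of_le h with he | hlt
      · subst he; exact hlμ t hs₁
      · exact hlμ t (hmemlt t ht hlt)
    · rw [hfIoi t (mem_Ioi.mpr (not_le.mp h))]
      exact hl₂ t (hmemgt t ht (not_le.mp h))

variable {I : Set ℝ} (hIconn : I.OrdConnected) {J : Type*} {Ij : J → Set ℝ}
  (hIjopen : ∀ j, IsOpen (Ij j)) (hcover : ⋃ j, Ij j = I)
  (ξ : ℝ → Quotient (orbitRel Γ V))
  (hloc : ∀ j, ∃ lam : ℝ → V, ContDiffOn ℝ 1 lam (Ij j) ∧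
      ∀ s ∈ Ij j, Quotient.mk (orbitRel Γ V) (lam s) = ξ s)

include hIconn hIjopen hcover hloc

lemma extRight {U : Set ℝ} (hU : IsOpen U) (hUI : U ⊆ I) {a b b' : ℝ}
    (hab : Icc a b ⊆ U) (hab' : a ≤ b) (hbb' : b ≤ b') (hb' : b' ∈ I)
    {f : ℝ → V} (hf : ContDiffOn ℝ 1 f U)
    (hlf : ∀ t ∈ U, Quotient.mk (orbitRel Γ V) (f t) = ξ t) :
    ∃ U' : Set ℝ, ∃ f' : ℝ → V, IsOpen U' ∧ U' ⊆ I ∧ Icc a b' ⊆ U' ∧ ContDiffOn ℝ 1 f' U' ∧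
      (∀ t ∈ U', Quotient.mk (orbitRel Γ V) (f' t) = ξ t) ∧ ∀ t ∈ Icc a b, f' t = f t := by
  classical
  have hbI : b ∈ I := hUI (hab ⟨hab', le_rfl⟩)
  set S : Set ℝ := {x | x ∈ Icc b b' ∧ ∃ U' : Set ℝ, ∃ f' : ℝ → V,
    IsOpen U' ∧ U' ⊆ I ∧ Icc a x ⊆ U' ∧ ContDiffOn ℝ 1 f' U' ∧
    (∀ t ∈ U', Quotient.mk (orbitRel Γ V) (f' t) = ξ t) ∧ ∀ t ∈ Icc a b, f' t = f t} with hS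
  have hbS : b ∈ S := ⟨⟨le_rfl, hbb'⟩, U, f, hU, hUI, hab, hf, hlf, fun t _ => rfl⟩
  have hSne : S.Nonempty := ⟨b, hbS⟩
  have hSbdd : BddAbove S := ⟨b', fun x hx => hx.1.2⟩
  set m : ℝ := sSup S with hm
  have hbm : b ≤ m := le_csSup hSbdd hbS
  have hmb' : m ≤ b' := csSup_le hSne fun x hx => hx.1.2
  have hmI : m ∈ I := hIconn.out hbI hb' ⟨hbm, hmb'⟩
  have : m ∈ ⋃ j, Ij j := hcover ▸ hmI
  obtain ⟨j, hj⟩ := mem_iUnion.mp this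
  obtain ⟨μ, hμc, hμl⟩ := hloc j
  obtain ⟨ε, hε, hball⟩ := Metric.isOpen_iff.mp (hIjopen j) m hj
  rw [Real.ball_eq_Ioo] at hball
  obtain ⟨x, hxS, hxm⟩ := exists_lt_of_lt_csSup hSne (by linarith : m - ε < m)
  obtain ⟨⟨hbx, hxb'⟩, U₁, f₁, hU₁o, hU₁I, hax, hf₁c, hf₁l, hagr⟩ := hxS
  have hxle : x ≤ m := le_csSup hSbdd (by exact ⟨⟨hbx, hxb'⟩, U₁, f₁, hU₁o, hU₁I, hax, hf₁c, hf₁l, hagr⟩)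
  have hxIj : x ∈ Ij j := hball ⟨hxm, by linarith⟩
  have hxU₁ : x ∈ U₁ := hax ⟨le_trans hab' hbx, le_rfl⟩
  have hIjI : Ij j ⊆ I := hcover ▸ subset_iUnion Ij j
  obtain ⟨f₂, hWo, hf₂c, hf₂l, hf₂Iic⟩ :=
    lemB ξ hU₁o (hIjopen j) hxU₁ hxIj hf₁c hf₁l hμc hμl
  set W : Set ℝ := (U₁ ∩ Iic x) ∪ (Ij j ∩ Ici x) with hW
  have hWI : W ⊆ I := union_subset (fun t ht => hU₁I ht.1) fun t ht => hIjI ht.1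
  have hagr' : ∀ t ∈ Icc a b, f₂ t = f t := fun t ht =>
    (hf₂Iic t (mem_Iic.mpr (le_trans ht.2 hbx))).trans (hagr t ht)
  have hkey : ∀ y : ℝ, b ≤ y → y < m + ε → Icc a y ⊆ W := by
    intro y hby hyε t ht
    by_cases h : t ≤ x
    · exact Or.inl ⟨hax ⟨ht.1, h⟩, mem_Iic.mpr h⟩
    · push_neg at h
      refine Or.inr ⟨hball ⟨by linarith, ?_⟩, mem_Ici.mpr (le_of_lt h)⟩
      have := ht.2
      linarith
  by_cases hcase : b' < m + ε
  · exact ⟨W, f₂, hWo, hWI, hkey b' hbb' hcase, hf₂c, hf₂l, hagr'⟩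
  · exfalso
    push_neg at hcase
    have hyS : m + ε / 2 ∈ S := by
      refine ⟨⟨by linarith, by linarith⟩, W, f₂, hWo, hWI, hkey _ (by linarith) (by linarith),
        hf₂c, hf₂l, hagr'⟩
    have := le_csSup hSbdd hyS
    linarith

lemma extLeft {U : Set ℝ} (hU : IsOpen U) (hUI : U ⊆ I) {a b a' : ℝ}
    (hab : Icc a b ⊆ U) (hab' : a ≤ b) (haa' : a' ≤ a) (ha' : a' ∈ I)
    {f : ℝ → V} (hf : ContDiffOn ℝ 1 f U)
    (hlf : ∀ t ∈ U, Quotient.mk (orbitRel Γ V) (f t) = ξ t) :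
    ∃ U' : Set ℝ, ∃ f' : ℝ → V, IsOpen U' ∧ U' ⊆ I ∧ Icc a' b ⊆ U' ∧ ContDiffOn ℝ 1 f' U' ∧
      (∀ t ∈ U', Quotient.mk (orbitRel Γ V) (f' t) = ξ t) ∧ ∀ t ∈ Icc a b, f' t = f t := by
  classical
  have haI : a ∈ I := hUI (hab ⟨le_rfl, hab'⟩)
  set S : Set ℝ := {x | x ∈ Icc a' a ∧ ∃ U' : Set ℝ, ∃ f' : ℝ → V,
    IsOpen U' ∧ U' ⊆ I ∧ Icc x b ⊆ U' ∧ ContDiffOn ℝ 1 f' U' ∧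
    (∀ t ∈ U', Quotient.mk (orbitRel Γ V) (f' t) = ξ t) ∧ ∀ t ∈ Icc a b, f' t = f t} with hS
  have haS : a ∈ S := ⟨⟨haa', le_rfl⟩, U, f, hU, hUI, hab, hf, hlf, fun t _ => rfl⟩
  have hSne : S.Nonempty := ⟨a, haS⟩
  have hSbdd : BddBelow S := ⟨a', fun x hx => hx.1.1⟩
  set m : ℝ := sInf S with hm
  have ham : m ≤ a := csInf_le hSbdd haS
  have hma' : a' ≤ m := le_csInf hSne fun x hx => hx.1.1
  have hmI : m ∈ I := hIconn.out ha' haI ⟨hma', ham⟩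
  have : m ∈ ⋃ j, Ij j := hcover ▸ hmI
  obtain ⟨j, hj⟩ := mem_iUnion.mp this
  obtain ⟨μ, hμc, hμl⟩ := hloc j
  obtain ⟨ε, hε, hball⟩ := Metric.isOpen_iff.mp (hIjopen j) m hj
  rw [Real.ball_eq_Ioo] at hball
  obtain ⟨x, hxS, hxm⟩ := exists_lt_of_csInf_lt hSne (by linarith : m < m + ε)
  obtain ⟨⟨hxa', hxa⟩, U₁, f₁, hU₁o, hU₁I, hax, hf₁c, hf₁l, hagr⟩ := hxS
  have hxge : m ≤ x := csInf_le hSbdd (by exact ⟨⟨hxa', hxa⟩, U₁, f₁, hU₁o, hU₁I, hax, hf₁c, hf₁l, hagr⟩)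
  have hxIj : x ∈ Ij j := hball ⟨by linarith, hxm⟩
  have hxU₁ : x ∈ U₁ := hax ⟨le_rfl, le_trans hxa hab'⟩
  have hIjI : Ij j ⊆ I := hcover ▸ subset_iUnion Ij j
  obtain ⟨f₂, hWo, hf₂c, hf₂l, hf₂Ici⟩ :=
    lemB' ξ (hIjopen j) hU₁o hxIj hxU₁ hμc hμl hf₁c hf₁l
  set W : Set ℝ := (Ij j ∩ Iic x) ∪ (U₁ ∩ Ici x) with hW
  have hWI : W ⊆ I := union_subset (fun t ht => hIjI ht.1) fun t ht => hU₁I ht.1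
  have hagr' : ∀ t ∈ Icc a b, f₂ t = f t := fun t ht =>
    (hf₂Ici t (mem_Ici.mpr (le_trans hxa ht.1))).trans (hagr t ht)
  have hkey : ∀ y : ℝ, y ≤ a → m - ε < y → Icc y b ⊆ W := by
    intro y hya hyε t ht
    by_cases h : x ≤ t
    · exact Or.inr ⟨hax ⟨h, ht.2⟩, mem_Ici.mpr h⟩
    · push_neg at h
      refine Or.inl ⟨hball ⟨?_, by linarith⟩, mem_Iic.mpr (le_of_lt h)⟩
      have := ht.1
      linarith
  by_cases hcase : m - ε < a'
  · exact ⟨W, f₂, hWo, hWI, hkey a' haa' hcase, hf₂c, hf₂l, hagr'⟩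
  · exfalso
    push_neg at hcase
    have hyS : m - ε / 2 ∈ S := by
      refine ⟨⟨by linarith, by linarith⟩, W, f₂, hWo, hWI, hkey _ (by linarith) (by linarith),
        hf₂c, hf₂l, hagr'⟩
    have := csInf_le hSbdd hyS
    linarith

end Helpers

/-- Let `Γ` be a finite group acting linearly on a finite-dimensional real normed vector space
`V`, and `π : V → V/Γ` the projection onto the orbit space. Let `I` be an open interval
covered by a family of open intervals `I_j`. If `ξ : ℝ → V/Γ` admits on each `I_j` a lift
which is `C¹` there, then `ξ` admits a lift which is `C¹` on all of `I`. -/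
theorem stmt12 {V : Type*} [NormedAddCommGroup V] [NormedSpace ℝ V] [FiniteDimensional ℝ V]
    {Γ : Type*} [Group Γ] [Finite Γ] [DistribMulAction Γ V] [SMulCommClass Γ ℝ V]
    (I : Set ℝ) (hIopen : IsOpen I) (hIconn : I.OrdConnected)
    {J : Type*} (Ij : J → Set ℝ)
    (hIjopen : ∀ j, IsOpen (Ij j)) (hIjconn : ∀ j, (Ij j).OrdConnected)
    (hcover : ⋃ j, Ij j = I)
    (ξ : ℝ → Quotient (MulAction.orbitRel Γ V))
    (hloc : ∀ j, ∃ lam : ℝ → V, ContDiffOn ℝ 1 lam (Ij j) ∧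
      ∀ s ∈ Ij j, Quotient.mk (MulAction.orbitRel Γ V) (lam s) = ξ s) :
    ∃ lam : ℝ → V, ContDiffOn ℝ 1 lam I ∧
      ∀ s ∈ I, Quotient.mk (MulAction.orbitRel Γ V) (lam s) = ξ s := by
  classical
  by_cases hne : I.Nonempty
  swap
  · exact ⟨fun _ => 0, fun t ht => absurd ⟨t, ht⟩ hne,
      fun t ht => absurd ⟨t, ht⟩ hne⟩
  obtain ⟨t₀, ht₀⟩ := hne
  -- rational approximating sequences
  set e : ℕ → ℚ := fun n => (Denumerable.eqv ℚ).symm n with he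
  have hesurj : Function.Surjective e := (Denumerable.eqv ℚ).symm.surjective
  set Fn : ℕ → Finset ℝ := fun n =>
    insert t₀ (((Finset.range (n+1)).image (fun k => ((e k : ℚ) : ℝ))).filter (· ∈ I)) with hFn
  have hFne : ∀ n, (Fn n).Nonempty := fun n => ⟨t₀, Finset.mem_insert_self _ _⟩
  have hFI : ∀ n, ∀ x ∈ Fn n, x ∈ I := by
    intro n x hx
    rcases Finset.mem_insert.mp hx with h | h
    · rwa [h]
    · exact (Finset.mem_filter.mp h).2
  have hFmono : ∀ n, Fn n ⊆ Fn (n+1) := by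
    intro n
    apply Finset.insert_subset_insert
    apply Finset.filter_subset_filter
    exact Finset.image_subset_image (Finset.range_subset_range.mpr (Nat.le_succ _))
  set b : ℕ → ℝ := fun n => (Fn n).max' (hFne n) with hb
  set a : ℕ → ℝ := fun n => (Fn n).min' (hFne n) with ha
  have hbI : ∀ n, b n ∈ I := fun n => hFI n _ ((Fn n).max'_mem (hFne n))
  have haI : ∀ n, a n ∈ I := fun n => hFI n _ ((Fn n).min'_mem (hFne n))
  have ht₀b : ∀ n, t₀ ≤ b n := fun n => Finset.le_max' _ _ (Finset.mem_insert_self _ _)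
  have hat₀ : ∀ n, a n ≤ t₀ := fun n => Finset.min'_le _ _ (Finset.mem_insert_self _ _)
  have hbmono : Monotone b :=
    monotone_nat_of_le_succ fun n => Finset.max'_subset (hFne n) (hFmono n)
  have hamono : Antitone a :=
    antitone_nat_of_succ_le fun n => Finset.min'_subset (hFne n) (hFmono n)
  have hmemFn : ∀ (q : ℚ), (q : ℝ) ∈ I → ∃ n, (q : ℝ) ∈ Fn n := by
    intro q hq
    obtain ⟨n, hn⟩ := hesurj q
    refine ⟨n, Finset.mem_insert_of_mem (Finset.mem_filter.mpr ⟨?_, hq⟩)⟩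
    exact Finset.mem_image.mpr ⟨n, Finset.mem_range.mpr (Nat.lt_succ_self n), by rw [hn]⟩
  have hcofb : ∀ t ∈ I, ∃ n, t < b n := by
    intro t ht
    obtain ⟨ε, hε, hball⟩ := Metric.isOpen_iff.mp hIopen t ht
    rw [Real.ball_eq_Ioo] at hball
    obtain ⟨q, hq1, hq2⟩ := exists_rat_btwn (by linarith : t < t + ε)
    have hqI : (q : ℝ) ∈ I := hball ⟨by linarith, hq2⟩
    obtain ⟨n, hn⟩ := hmemFn q hqI
    exact ⟨n, lt_of_lt_of_le hq1 (Finset.le_max' _ _ hn)⟩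
  have hcofa : ∀ t ∈ I, ∃ n, a n < t := by
    intro t ht
    obtain ⟨ε, hε, hball⟩ := Metric.isOpen_iff.mp hIopen t ht
    rw [Real.ball_eq_Ioo] at hball
    obtain ⟨q, hq1, hq2⟩ := exists_rat_btwn (by linarith : t - ε < t)
    have hqI : (q : ℝ) ∈ I := hball ⟨hq1, by linarith⟩
    obtain ⟨n, hn⟩ := hmemFn q hqI
    exact ⟨n, lt_of_le_of_lt (Finset.min'_le _ _ hn) hq2⟩
  -- the invariant
  set Good : ℕ → Set ℝ → (ℝ → V) → Prop := fun n U f =>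
    IsOpen U ∧ U ⊆ I ∧ Icc (a n) (b n) ⊆ U ∧ ContDiffOn ℝ 1 f U ∧
      ∀ t ∈ U, Quotient.mk (MulAction.orbitRel Γ V) (f t) = ξ t with hGoodDef
  -- base lift near t₀
  have hbase : ∃ U f, Good 0 U f := by
    have : t₀ ∈ ⋃ j, Ij j := hcover ▸ ht₀
    obtain ⟨j, hj⟩ := mem_iUnion.mp this
    obtain ⟨μ, hμc, hμl⟩ := hloc j
    have hIjI : Ij j ⊆ I := hcover ▸ subset_iUnion Ij j
    have h1 : Icc t₀ t₀ ⊆ Ij j := by rw [Icc_self]; exact singleton_subset_iff.mpr hj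
    obtain ⟨U₁, f₁, hU₁o, hU₁I, hU₁s, hf₁c, hf₁l, _⟩ :=
      extRight hIconn hIjopen hcover ξ hloc (hIjopen j) hIjI h1 le_rfl (ht₀b 0) (hbI 0)
        hμc hμl
    obtain ⟨U₂, f₂, hU₂o, hU₂I, hU₂s, hf₂c, hf₂l, _⟩ :=
      extLeft hIconn hIjopen hcover ξ hloc hU₁o hU₁I hU₁s (ht₀b 0) (hat₀ 0) (haI 0)
        hf₁c hf₁l
    exact ⟨U₂, f₂, hU₂o, hU₂I, hU₂s, hf₂c, hf₂l⟩
  obtain ⟨U₀, F₀, hG₀⟩ := hbase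
  have habn : ∀ n, a n ≤ b n := fun n => le_trans (hat₀ n) (ht₀b n)
  -- the extension step
  have hstep : ∀ n (U : Set ℝ) (f : ℝ → V), Good n U f → ∃ U' f', Good (n+1) U' f' ∧
      ∀ t ∈ Icc (a n) (b n), f' t = f t := by
    intro n U f hG
    obtain ⟨hUo, hUI, hUs, hfc, hfl⟩ := hG
    obtain ⟨U₁, f₁, hU₁o, hU₁I, hU₁s, hf₁c, hf₁l, hagr₁⟩ :=
      extRight hIconn hIjopen hcover ξ hloc hUo hUI hUs (habn n)
        (hbmono (Nat.le_succ n)) (hbI (n+1)) hfc hfl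
    obtain ⟨U₂, f₂, hU₂o, hU₂I, hU₂s, hf₂c, hf₂l, hagr₂⟩ :=
      extLeft hIconn hIjopen hcover ξ hloc hU₁o hU₁I hU₁s
        (le_trans (habn n) (hbmono (Nat.le_succ n)))
        (hamono (Nat.le_succ n)) (haI (n+1)) hf₁c hf₁l
    refine ⟨U₂, f₂, ⟨hU₂o, hU₂I, ?_, hf₂c, hf₂l⟩, ?_⟩
    · exact fun t ht => hU₂s ⟨ht.1, ht.2⟩
    · intro t ht
      have ht' : t ∈ Icc (a n) (b (n+1)) := ⟨ht.1, le_trans ht.2 (hbmono (Nat.le_succ n))⟩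
      rw [hagr₂ t ht', hagr₁ t ht]
  choose! U' f' hGstep hagree using hstep
  -- the recursive sequence of lifts
  set seq : ℕ → Set ℝ × (ℝ → V) := fun n =>
    Nat.rec (U₀, F₀) (fun k p => (U' k p.1 p.2, f' k p.1 p.2)) n with hseqdef
  have hseq : ∀ n, Good n (seq n).1 (seq n).2 := by
    intro n
    induction n with
    | zero => exact hG₀
    | succ k ih => exact hGstep k _ _ ih
  have hagr : ∀ n, ∀ t ∈ Icc (a n) (b n), (seq (n+1)).2 t = (seq n).2 t :=
    fun n => hagree n _ _ (hseq n)
  have hchain : ∀ n m, n ≤ m → ∀ t ∈ Icc (a n) (b n), (seq m).2 t = (seq n).2 t := by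
    intro n m h
    induction m, h using Nat.le_induction with
    | base => intro t _; rfl
    | succ m hm ih =>
      intro t ht
      have ht' : t ∈ Icc (a m) (b m) := ⟨le_trans (hamono hm) ht.1, le_trans ht.2 (hbmono hm)⟩
      rw [hagr m t ht', ih t ht]
  set lam : ℝ → V := fun t =>
    if h : ∃ n, t ∈ Icc (a n) (b n) then (seq (Nat.find h)).2 t else 0 with hlamdef
  have hlam : ∀ n, ∀ t ∈ Icc (a n) (b n), lam t = (seq n).2 t := by
    intro n t ht
    have hex : ∃ k, t ∈ Icc (a k) (b k) := ⟨n, ht⟩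
    rw [hlamdef]
    simp only [dif_pos hex]
    exact (hchain (Nat.find hex) n (Nat.find_min' hex ht) t (Nat.find_spec hex)).symm
  have hkey : ∀ t ∈ I, ∃ n, a n < t ∧ t < b n := by
    intro t ht
    obtain ⟨n₁, hn₁⟩ := hcofb t ht
    obtain ⟨n₂, hn₂⟩ := hcofa t ht
    exact ⟨max n₁ n₂, lt_of_le_of_lt (hamono (le_max_right n₁ n₂)) hn₂,
      lt_of_lt_of_le hn₁ (hbmono (le_max_left n₁ n₂))⟩
  refine ⟨lam, ?_, ?_⟩
  · intro t ht
    obtain ⟨n, hn₁, hn₂⟩ := hkey t ht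
    obtain ⟨hUo, hUI, hUs, hfc, hfl⟩ := hseq n
    have hcd : ContDiffAt ℝ 1 (seq n).2 t :=
      hfc.contDiffAt (hUo.mem_nhds (hUs ⟨le_of_lt hn₁, le_of_lt hn₂⟩))
    have heq : lam =ᶠ[nhds t] (seq n).2 := by
      filter_upwards [isOpen_Ioo.mem_nhds (⟨hn₁, hn₂⟩ : t ∈ Ioo (a n) (b n))] with x hx
      exact hlam n x ⟨le_of_lt hx.1, le_of_lt hx.2⟩
    exact (hcd.congr_of_eventuallyEq heq).contDiffWithinAt
  · intro t ht
    obtain ⟨n, hn₁, hn₂⟩ := hkey t ht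
    obtain ⟨hUo, hUI, hUs, hfc, hfl⟩ := hseq n
    rw [hlam n t ⟨le_of_lt hn₁, le_of_lt hn₂⟩]
    exact hfl t (hUs ⟨le_of_lt hn₁, le_of_lt hn₂⟩)
end

section
/- Let I be an open interval and ξ : ℝ → V/Γ a function that is continuous on I. Then there exists λ : ℝ → V continuous on I with π(λ(t)) = ξ(t) for all t ∈ I. -/
open MulAction Set Topology Filter

set_option linter.unusedSectionVars false

section Aux

variable {V : Type*} [NormedAddCommGroup V] [NormedSpace ℝ V] [FiniteDimensional ℝ V]
  {Γ : Type*} [Group Γ] [DistribMulAction Γ V] [SMulCommClass Γ ℝ V]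

lemma cont_g (g : Γ) : Continuous fun v : V => g • v :=
  (DistribMulAction.toLinearMap ℝ V g).continuous_of_finiteDimensional

instance ccsmul : ContinuousConstSMul Γ V := ⟨cont_g⟩

lemma pr_eq_iff {x y : V} :
    Quotient.mk (MulAction.orbitRel Γ V) x = Quotient.mk (MulAction.orbitRel Γ V) y ↔
      ∃ g : Γ, g • y = x := by
  rw [Quotient.eq]
  exact (MulAction.orbitRel_apply (G := Γ)).trans (MulAction.mem_orbit_iff)

lemma pr_smul (g : Γ) (x : V) :
    Quotient.mk (MulAction.orbitRel Γ V) (g • x) = Quotient.mk (MulAction.orbitRel Γ V) x :=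
  pr_eq_iff.2 ⟨g, rfl⟩


lemma continuous_pr : Continuous (Quotient.mk (MulAction.orbitRel Γ V)) := continuous_quot_mk

lemma isOpenMap_pr : IsOpenMap (Quotient.mk (MulAction.orbitRel Γ V)) :=
  MulAction.isOpenQuotientMap_quotientMk.isOpenMap

section D
variable (Γ) [Fintype Γ]

noncomputable def DD (x y : V) : ℝ := ∑ g : Γ, dist (g • x) (g • y)

variable {Γ}

lemma DD_nonneg (x y : V) : 0 ≤ DD Γ x y := Finset.sum_nonneg fun _ _ => dist_nonneg

lemma dist_le_DD (x y : V) : dist x y ≤ DD Γ x y := by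
  have h := Finset.single_le_sum (f := fun g : Γ => dist (g • x) (g • y))
    (fun _ _ => dist_nonneg) (Finset.mem_univ 1)
  simpa [one_smul, DD] using h

lemma DD_self (x : V) : DD Γ x x = 0 := by simp [DD]

lemma DD_symm (x y : V) : DD Γ x y = DD Γ y x := by
  simp [DD, dist_comm]

lemma DD_triangle (x y z : V) : DD Γ x z ≤ DD Γ x y + DD Γ y z := by
  rw [DD, DD, DD, ← Finset.sum_add_distrib]
  exact Finset.sum_le_sum fun g _ => dist_triangle _ _ _

lemma DD_smul (g : Γ) (x y : V) : DD Γ (g • x) (g • y) = DD Γ x y := by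
  rw [DD, DD]
  rw [← Equiv.sum_comp (Equiv.mulRight g) (fun k : Γ => dist (k • x) (k • y))]
  apply Finset.sum_congr rfl
  intro k _
  simp [Equiv.coe_mulRight, mul_smul]

lemma DD_cont (x : V) : Continuous fun y => DD Γ x y := by
  apply continuous_finset_sum
  intro g _
  exact (continuous_const.dist (cont_g g))

lemma DD_pos {x y : V} (h : x ≠ y) : 0 < DD Γ x y :=
  lt_of_lt_of_le (dist_pos.2 h) (dist_le_DD x y)

end D

/-- `lam` is a continuous lift of `ξ` on `s`. -/
def Lifts (ξ : ℝ → Quotient (MulAction.orbitRel Γ V)) (lam : ℝ → V) (s : Set ℝ) : Prop :=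
  ContinuousOn lam s ∧ ∀ t ∈ s, Quotient.mk (MulAction.orbitRel Γ V) (lam t) = ξ t

lemma Lifts.mono {ξ : ℝ → Quotient (MulAction.orbitRel Γ V)} {lam : ℝ → V} {s s' : Set ℝ}
    (h : Lifts ξ lam s) (hs : s' ⊆ s) : Lifts ξ lam s' :=
  ⟨h.1.mono hs, fun t ht => h.2 t (hs ht)⟩

lemma continuousOn_union_sep {f : ℝ → V} {S1 S2 : Set ℝ} {c : ℝ}
    (hS1 : S1 ⊆ Iic c) (hS2 : S2 ⊆ Ici c) (hc1 : c ∈ S1) (hc2 : c ∈ S2)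
    (h1 : ContinuousOn f S1) (h2 : ContinuousOn f S2) : ContinuousOn f (S1 ∪ S2) := by
  intro t ht
  rcases lt_trichotomy t c with h | h | h
  · have ht1 : t ∈ S1 := by
      rcases ht with h' | h'
      · exact h'
      · exact absurd (mem_Ici.1 (hS2 h')) (not_le.2 h)
    have hmem : Iio c ∈ 𝓝[S1 ∪ S2] t := nhdsWithin_le_nhds (Iio_mem_nhds h)
    rw [← continuousWithinAt_inter' hmem]
    have hsub : (S1 ∪ S2) ∩ Iio c ⊆ S1 := by
      rintro s ⟨hs | hs, hlt⟩
      · exact hs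
      · exact absurd (mem_Ici.1 (hS2 hs)) (not_le.2 hlt)
    exact (h1 t ht1).mono hsub
  · subst h
    exact (h1 t hc1).union (h2 t hc2)
  · have ht2 : t ∈ S2 := by
      rcases ht with h' | h'
      · exact absurd (mem_Iic.1 (hS1 h')) (not_le.2 h)
      · exact h'
    have hmem : Ioi c ∈ 𝓝[S1 ∪ S2] t := nhdsWithin_le_nhds (Ioi_mem_nhds h)
    rw [← continuousWithinAt_inter' hmem]
    have hsub : (S1 ∪ S2) ∩ Ioi c ⊆ S2 := by
      rintro s ⟨hs | hs, hlt⟩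
      · exact absurd (mem_Iic.1 (hS1 hs)) (not_le.2 hlt)
      · exact hs
    exact (h2 t ht2).mono hsub

lemma concat_keep_left {ξ : ℝ → Quotient (MulAction.orbitRel Γ V)} {l1 l2 : ℝ → V}
    {S1 S2 : Set ℝ} {c : ℝ} (hS1 : S1 ⊆ Iic c) (hS2 : S2 ⊆ Ici c)
    (hc1 : c ∈ S1) (hc2 : c ∈ S2) (h1 : Lifts ξ l1 S1) (h2 : Lifts ξ l2 S2) :
    ∃ l, Lifts ξ l (S1 ∪ S2) ∧ ∀ t ∈ S1, l t = l1 t := by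
  have hmatch : Quotient.mk (MulAction.orbitRel Γ V) (l1 c)
      = Quotient.mk (MulAction.orbitRel Γ V) (l2 c) := by
    rw [h1.2 c hc1, h2.2 c hc2]
  obtain ⟨g, hg⟩ := pr_eq_iff.1 hmatch
  refine ⟨fun t => if t ≤ c then l1 t else g • l2 t, ⟨?_, ?_⟩, fun t ht => if_pos (mem_Iic.1 (hS1 ht))⟩
  · have e1 : ∀ t ∈ S1, (if t ≤ c then l1 t else g • l2 t) = l1 t := fun t ht => if_pos (mem_Iic.1 (hS1 ht))
    have e2 : ∀ t ∈ S2, (if t ≤ c then l1 t else g • l2 t) = g • l2 t := by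
      intro t ht
      rcases eq_or_lt_of_le (mem_Ici.1 (hS2 ht)) with h | h
      · simp only [← h, if_pos le_rfl, ← hg]
      · simp only [if_neg (not_le.2 h)]
    exact continuousOn_union_sep hS1 hS2 hc1 hc2
      (h1.1.congr e1) (((cont_g g).comp_continuousOn h2.1).congr e2)
  · intro t ht
    rcases ht with ht | ht
    · simp only [if_pos (mem_Iic.1 (hS1 ht))]; exact h1.2 t ht
    · rcases eq_or_lt_of_le (mem_Ici.1 (hS2 ht)) with h | h
      · simp only [← h, if_pos le_rfl]; exact h1.2 c hc1
      · simp only [if_neg (not_le.2 h), pr_smul]; exact h2.2 t ht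

lemma concat_keep_right {ξ : ℝ → Quotient (MulAction.orbitRel Γ V)} {l1 l2 : ℝ → V}
    {S1 S2 : Set ℝ} {c : ℝ} (hS1 : S1 ⊆ Iic c) (hS2 : S2 ⊆ Ici c)
    (hc1 : c ∈ S1) (hc2 : c ∈ S2) (h1 : Lifts ξ l1 S1) (h2 : Lifts ξ l2 S2) :
    ∃ l, Lifts ξ l (S1 ∪ S2) ∧ ∀ t ∈ S2, l t = l2 t := by
  have hmatch : Quotient.mk (MulAction.orbitRel Γ V) (l2 c)
      = Quotient.mk (MulAction.orbitRel Γ V) (l1 c) := by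
    rw [h1.2 c hc1, h2.2 c hc2]
  obtain ⟨g, hg⟩ := pr_eq_iff.1 hmatch
  refine ⟨fun t => if c ≤ t then l2 t else g • l1 t, ⟨?_, ?_⟩, fun t ht => if_pos (mem_Ici.1 (hS2 ht))⟩
  · have e2 : ∀ t ∈ S2, (if c ≤ t then l2 t else g • l1 t) = l2 t := fun t ht => if_pos (mem_Ici.1 (hS2 ht))
    have e1 : ∀ t ∈ S1, (if c ≤ t then l2 t else g • l1 t) = g • l1 t := by
      intro t ht
      rcases eq_or_lt_of_le (mem_Iic.1 (hS1 ht)) with h | h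
      · simp only [h, if_pos le_rfl, ← hg]
      · simp only [if_neg (not_le.2 h)]
    exact continuousOn_union_sep hS1 hS2 hc1 hc2
      (((cont_g g).comp_continuousOn h1.1).congr e1) (h2.1.congr e2)
  · intro t ht
    rcases ht with ht | ht
    · rcases eq_or_lt_of_le (mem_Iic.1 (hS1 ht)) with h | h
      · simp only [h, if_pos le_rfl]; exact h2.2 c hc2
      · simp only [if_neg (not_le.2 h), pr_smul]; exact h1.2 t ht
    · simp only [if_pos (mem_Ici.1 (hS2 ht))]; exact h2.2 t ht


lemma lift_Icc {ξ : ℝ → Quotient (MulAction.orbitRel Γ V)} {J : Set ℝ} (hJc : OrdConnected J)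
    (hloc : ∀ t ∈ J, ∃ δ > 0, ∃ μ : ℝ → V, Lifts ξ μ (Ioo (t - δ) (t + δ)))
    {a b : ℝ} (ha : a ∈ J) (hb : b ∈ J) (hab : a ≤ b) :
    ∃ l, Lifts ξ l (Icc a b) := by
  set S := {x | x ∈ Icc a b ∧ ∃ l, Lifts ξ l (Icc a x)} with hSdef
  have haS : a ∈ S := by
    obtain ⟨δ, hδ, μ, hμ⟩ := hloc a ha
    refine ⟨⟨le_rfl, hab⟩, μ, hμ.mono ?_⟩
    rw [Icc_self]
    intro s hs
    rw [mem_singleton_iff] at hs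
    subst hs
    exact ⟨by linarith, by linarith⟩
  have hbdd : BddAbove S := ⟨b, fun x hx => hx.1.2⟩
  set c := sSup S with hcdef
  have hc1 : a ≤ c := le_csSup hbdd haS
  have hc2 : c ≤ b := csSup_le ⟨a, haS⟩ fun x hx => hx.1.2
  have hcJ : c ∈ J := hJc.out ha hb ⟨hc1, hc2⟩
  obtain ⟨δ, hδ, μ, hμ⟩ := hloc c hcJ
  obtain ⟨x, hxS, hxgt⟩ := exists_lt_of_lt_csSup ⟨a, haS⟩ (by linarith : c - δ < c)
  have hxc : x ≤ c := le_csSup hbdd hxS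
  obtain ⟨l1, hl1⟩ := hxS.2
  set m := min b (c + δ / 2) with hmdef
  have hxm : x ≤ m := le_min hxS.1.2 (by linarith)
  have hsub : Icc x m ⊆ Ioo (c - δ) (c + δ) := fun s hs =>
    ⟨lt_of_lt_of_le hxgt hs.1, lt_of_le_of_lt (hs.2.trans (min_le_right _ _)) (by linarith)⟩
  have h2 : Lifts ξ μ (Icc x m) := hμ.mono hsub
  obtain ⟨l, hl, -⟩ := concat_keep_left (c := x) Icc_subset_Iic_self Icc_subset_Ici_self
    ⟨hxS.1.1, le_rfl⟩ ⟨le_rfl, hxm⟩ hl1 h2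
  rw [Icc_union_Icc_eq_Icc hxS.1.1 hxm] at hl
  have hmS : m ∈ S := ⟨⟨le_trans hxS.1.1 hxm, min_le_left _ _⟩, l, hl⟩
  have hmc : m ≤ c := le_csSup hbdd hmS
  have hcb : c = b := by
    by_contra h
    have h1 : c < b := lt_of_le_of_ne hc2 h
    have h2' : c < m := lt_min h1 (by linarith)
    linarith
  have hmb : m = b := by
    rw [hmdef, hcb]
    exact min_eq_left (by linarith)
  rw [hmb] at hl
  exact ⟨l, hl⟩

lemma lift_openOrdConnected {ξ : ℝ → Quotient (MulAction.orbitRel Γ V)} {J : Set ℝ}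
    (hJo : IsOpen J) (hJc : OrdConnected J)
    (hloc : ∀ t ∈ J, ∃ δ > 0, ∃ μ : ℝ → V, Lifts ξ μ (Ioo (t - δ) (t + δ))) :
    ∃ l, Lifts ξ l J := by
  classical
  rcases J.eq_empty_or_nonempty with rfl | ⟨t0, ht0⟩
  · exact ⟨0, continuousOn_empty _, fun t ht => absurd ht (notMem_empty t)⟩
  obtain ⟨f, hf⟩ := exists_surjective_nat ℚ
  set cand : ℕ → ℝ := fun k => if ((f k : ℝ) ∈ J) then ((f k : ℝ)) else t0 with hcand
  have hcandJ : ∀ k, (cand k) ∈ J := by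
    intro k
    by_cases h : ((f k : ℝ) ∈ J) <;> simp [hcand, h, ht0]
  have hmaxJ : ∀ k, max t0 (cand k) ∈ J := by
    intro k
    rcases le_total t0 (cand k) with h | h
    · rw [max_eq_right h]; exact hcandJ k
    · rw [max_eq_left h]; exact ht0
  have hminJ : ∀ k, min t0 (cand k) ∈ J := by
    intro k
    rcases le_total t0 (cand k) with h | h
    · rw [min_eq_left h]; exact ht0
    · rw [min_eq_right h]; exact hcandJ k
  have hne : ∀ n : ℕ, (Finset.range (n + 1)).Nonempty := fun n => ⟨0, by simp⟩
  set b : ℕ → ℝ := fun n => (Finset.range (n + 1)).sup' (hne n) (fun k => max t0 (cand k))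
    with hbdef
  set a : ℕ → ℝ := fun n => (Finset.range (n + 1)).inf' (hne n) (fun k => min t0 (cand k))
    with hadef
  have hbJ : ∀ n, b n ∈ J := by
    intro n
    obtain ⟨k, -, hk⟩ := Finset.exists_mem_eq_sup' (hne n) (fun k => max t0 (cand k))
    have hbk : b n = t0 ⊔ cand k := hk
    rw [hbk]; exact hmaxJ k
  have haJ : ∀ n, a n ∈ J := by
    intro n
    obtain ⟨k, -, hk⟩ := Finset.exists_mem_eq_inf' (hne n) (fun k => min t0 (cand k))
    have hak : a n = t0 ⊓ cand k := hk
    rw [hak]; exact hminJ k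
  have hb_mono : Monotone b := by
    intro n m hnm
    exact Finset.sup'_mono _ (Finset.range_subset_range.2 (by omega)) (hne n)
  have ha_anti : Antitone a := by
    intro n m hnm
    exact Finset.inf'_mono _ (Finset.range_subset_range.2 (by omega)) (hne n)
  have hb_ge : ∀ n, t0 ≤ b n := by
    intro n
    have h0 : (0 : ℕ) ∈ Finset.range (n + 1) := by simp
    exact le_trans (le_max_left t0 (cand 0)) (Finset.le_sup' (fun k => max t0 (cand k)) h0)
  have ha_le : ∀ n, a n ≤ t0 := by
    intro n
    have h0 : (0 : ℕ) ∈ Finset.range (n + 1) := by simp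
    exact le_trans (Finset.inf'_le (fun k => min t0 (cand k)) h0) (min_le_left t0 (cand 0))
  have hab : ∀ n, a n ≤ b n := fun n => le_trans (ha_le n) (hb_ge n)
  have hcover_b : ∀ t ∈ J, ∃ n, t < b n := by
    intro t ht
    obtain ⟨ε, hε, hball⟩ := Metric.isOpen_iff.1 hJo t ht
    obtain ⟨q, hq1, hq2⟩ := exists_rat_btwn (by linarith : t < t + ε)
    obtain ⟨k, hk⟩ := hf q
    have hqJ : ((q : ℝ)) ∈ J := by
      apply hball
      rw [Real.ball_eq_Ioo]
      exact ⟨by linarith, by linarith⟩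
    have hcandk : cand k = (q : ℝ) := by rw [hcand]; simp [hk, hqJ]
    refine ⟨k, lt_of_lt_of_le hq1 ?_⟩
    rw [← hcandk]
    have hkmem : k ∈ Finset.range (k + 1) := by simp
    exact le_trans (le_max_right t0 (cand k)) (Finset.le_sup' (fun k => max t0 (cand k)) hkmem)
  have hcover_a : ∀ t ∈ J, ∃ n, a n < t := by
    intro t ht
    obtain ⟨ε, hε, hball⟩ := Metric.isOpen_iff.1 hJo t ht
    obtain ⟨q, hq1, hq2⟩ := exists_rat_btwn (by linarith : t - ε < t)
    obtain ⟨k, hk⟩ := hf q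
    have hqJ : ((q : ℝ)) ∈ J := by
      apply hball
      rw [Real.ball_eq_Ioo]
      exact ⟨by linarith, by linarith⟩
    have hcandk : cand k = (q : ℝ) := by rw [hcand]; simp [hk, hqJ]
    refine ⟨k, lt_of_le_of_lt ?_ hq2⟩
    rw [← hcandk]
    have hkmem : k ∈ Finset.range (k + 1) := by simp
    exact le_trans (Finset.inf'_le (fun k => min t0 (cand k)) hkmem) (min_le_right t0 (cand k))
  have hcover : ∀ t ∈ J, ∃ n, a n < t ∧ t < b n := by
    intro t ht
    obtain ⟨n1, hn1⟩ := hcover_a t ht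
    obtain ⟨n2, hn2⟩ := hcover_b t ht
    exact ⟨max n1 n2, lt_of_le_of_lt (ha_anti (le_max_left n1 n2)) hn1,
      lt_of_lt_of_le hn2 (hb_mono (le_max_right n1 n2))⟩
  obtain ⟨l0, hl0⟩ := lift_Icc hJc hloc (haJ 0) (hbJ 0) (hab 0)
  have step : ∀ n (l : ℝ → V), Lifts ξ l (Icc (a n) (b n)) →
      ∃ l', Lifts ξ l' (Icc (a (n + 1)) (b (n + 1))) ∧
        ∀ t ∈ Icc (a n) (b n), l' t = l t := by
    intro n l hl
    have hbb : b n ≤ b (n + 1) := hb_mono (by omega)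
    have haa : a (n + 1) ≤ a n := ha_anti (by omega)
    obtain ⟨lr, hlr⟩ := lift_Icc hJc hloc (hbJ n) (hbJ (n + 1)) hbb
    obtain ⟨ll, hll⟩ := lift_Icc hJc hloc (haJ (n + 1)) (haJ n) haa
    obtain ⟨l2, hl2, hl2eq⟩ := concat_keep_left (c := b n) Icc_subset_Iic_self
      Icc_subset_Ici_self ⟨hab n, le_rfl⟩ ⟨le_rfl, hbb⟩ hl hlr
    rw [Icc_union_Icc_eq_Icc (hab n) hbb] at hl2
    obtain ⟨l3, hl3, hl3eq⟩ := concat_keep_right (c := a n) Icc_subset_Iic_self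
      Icc_subset_Ici_self ⟨haa, le_rfl⟩ ⟨le_rfl, le_trans (hab n) hbb⟩ hll hl2
    rw [Icc_union_Icc_eq_Icc haa (le_trans (hab n) hbb)] at hl3
    refine ⟨l3, hl3.mono (Icc_subset_Icc le_rfl le_rfl), fun t ht => ?_⟩
    rw [hl3eq t ⟨ht.1, le_trans ht.2 hbb⟩, hl2eq t ht]
  have hGex : ∃ G : ∀ n, {l : ℝ → V // Lifts ξ l (Icc (a n) (b n))},
      ∀ n, ∀ t ∈ Icc (a n) (b n), (G (n + 1)).1 t = (G n).1 t := by
    exact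
      let Gr : ∀ n, {l : ℝ → V // Lifts ξ l (Icc (a n) (b n))} := fun n =>
        Nat.rec (motive := fun n => {l : ℝ → V // Lifts ξ l (Icc (a n) (b n))}) ⟨l0, hl0⟩
          (fun n ih => ⟨(step n ih.1 ih.2).choose, (step n ih.1 ih.2).choose_spec.1⟩) n
      ⟨Gr, fun n t ht => (step n (Gr n).1 (Gr n).2).choose_spec.2 t ht⟩
  obtain ⟨G, Gstep⟩ := hGex
  have hIccmono : ∀ {n m : ℕ}, n ≤ m → Icc (a n) (b n) ⊆ Icc (a m) (b m) :=
    fun {n m} h => Icc_subset_Icc (ha_anti h) (hb_mono h)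
  have Gmono : ∀ m n, n ≤ m → ∀ t ∈ Icc (a n) (b n), (G m).1 t = (G n).1 t := by
    intro m
    induction m with
    | zero =>
      intro n hn t ht
      interval_cases n
      rfl
    | succ m ih =>
      intro n hn t ht
      rcases Nat.eq_or_lt_of_le hn with h | h
      · subst h; rfl
      · have hn' : n ≤ m := by omega
        rw [Gstep m t (hIccmono hn' ht)]
        exact ih n hn' t ht
  classical
  set l : ℝ → V := fun t =>
    if h : ∃ n, t ∈ Icc (a n) (b n) then (G (Nat.find h)).1 t else 0 with hldef
  have hlval : ∀ (n : ℕ), ∀ t ∈ Icc (a n) (b n), l t = (G n).1 t := by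
    intro n t ht
    have hex : ∃ k, t ∈ Icc (a k) (b k) := ⟨n, ht⟩
    have hfind : Nat.find hex ≤ n := Nat.find_le ht
    rw [hldef]
    simp only [dif_pos hex]
    exact (Gmono n (Nat.find hex) hfind t (Nat.find_spec hex)).symm
  refine ⟨l, ?_, ?_⟩
  · intro t ht
    obtain ⟨n, hn1, hn2⟩ := hcover t ht
    have hcont : ContinuousAt (G n).1 t := (G n).2.1.continuousAt (Icc_mem_nhds hn1 hn2)
    have hev : (G n).1 =ᶠ[nhds t] l := by
      filter_upwards [Ioo_mem_nhds hn1 hn2] with s hs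
      exact (hlval n s ⟨le_of_lt hs.1, le_of_lt hs.2⟩).symm
    exact (hcont.congr hev).continuousWithinAt
  · intro t ht
    obtain ⟨n, hn1, hn2⟩ := hcover t ht
    rw [hlval n t ⟨le_of_lt hn1, le_of_lt hn2⟩]
    exact (G n).2.2 t ⟨le_of_lt hn1, le_of_lt hn2⟩

lemma glue_open {ξ : ℝ → Quotient (MulAction.orbitRel Γ V)} {U : Set ℝ} (hU : IsOpen U)
    (hloc : ∀ t ∈ U, ∃ δ > 0, ∃ μ : ℝ → V, Lifts ξ μ (Ioo (t - δ) (t + δ))) :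
    ∃ l, Lifts ξ l U := by
  classical
  have hcomp : ∀ t ∈ U, ∃ l, Lifts ξ l (connectedComponentIn U t) := by
    intro t ht
    refine lift_openOrdConnected (hU.connectedComponentIn)
      isPreconnected_connectedComponentIn.ordConnected ?_
    intro s hs
    exact hloc s (connectedComponentIn_subset U t hs)
  set F : Set ℝ → ℝ → V := fun J => if h : ∃ l, Lifts ξ l J then h.choose else 0 with hFdef
  have hF : ∀ J : Set ℝ, (∃ l, Lifts ξ l J) → Lifts ξ (F J) J := by
    intro J h
    rw [hFdef]
    simp only [dif_pos h]
    exact h.choose_spec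
  refine ⟨fun t => F (connectedComponentIn U t) t, ?_, ?_⟩
  · intro t ht
    have hmem : t ∈ connectedComponentIn U t := mem_connectedComponentIn ht
    have hcont : ContinuousAt (F (connectedComponentIn U t)) t :=
      (hF _ (hcomp t ht)).1.continuousAt ((hU.connectedComponentIn).mem_nhds hmem)
    have hev : F (connectedComponentIn U t) =ᶠ[nhds t]
        fun s => F (connectedComponentIn U s) s := by
      filter_upwards [(hU.connectedComponentIn).mem_nhds hmem] with s hs
      rw [connectedComponentIn_eq hs]
    exact (hcont.congr hev).continuousWithinAt
  · intro t ht
    exact (hF _ (hcomp t ht)).2 t (mem_connectedComponentIn ht)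

end Aux

universe u₁ u₂

lemma key : ∀ (n : ℕ), ∀ (Γ : Type u₁) (V : Type u₂) [Group Γ] [Finite Γ]
    [NormedAddCommGroup V] [NormedSpace ℝ V] [FiniteDimensional ℝ V]
    [DistribMulAction Γ V] [SMulCommClass Γ ℝ V],
    Nat.card Γ ≤ n → ∀ (I : Set ℝ), IsOpen I →
    ∀ ξ : ℝ → Quotient (MulAction.orbitRel Γ V), ContinuousOn ξ I →
    ∃ l : ℝ → V, Lifts ξ l I := by
  intro n
  induction n with
  | zero =>
    intro Γ V _ _ _ _ _ _ _ hcard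
    have := Nat.card_pos (α := Γ)
    omega
  | succ n IH =>
    intro Γ V _ _ _ _ _ _ _ hcard I hIopen ξ hξ
    classical
    letI : Fintype Γ := Fintype.ofFinite Γ
    set F : Set V := {x | ∀ g : Γ, g • x = x} with hFdef
    have hout_mem : ∀ q : Quotient (MulAction.orbitRel Γ V),
        q ∈ (Quotient.mk (MulAction.orbitRel Γ V)) '' F ↔ q.out ∈ F := by
      intro q
      constructor
      · rintro ⟨x, hxF, hx⟩
        have hqq : Quotient.mk (MulAction.orbitRel Γ V) q.out
            = Quotient.mk (MulAction.orbitRel Γ V) x := by rw [hx, Quotient.out_eq]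
        obtain ⟨g, hg⟩ := pr_eq_iff.1 hqq
        rw [← hg, hxF g]
        exact hxF
      · intro h
        exact ⟨q.out, h, Quotient.out_eq q⟩
    set U : Set ℝ := I ∩ ξ ⁻¹' ((Quotient.mk (MulAction.orbitRel Γ V)) '' F)ᶜ with hUdef
    have hFclosed : IsClosed F := by
      have hFeq : F = ⋂ g : Γ, {x : V | g • x = x} := by
        ext x; simp [hFdef, mem_iInter]
      rw [hFeq]
      exact isClosed_iInter fun g => isClosed_eq (cont_g g) continuous_id
    have hFc_open : IsOpen (((Quotient.mk (MulAction.orbitRel Γ V)) '' F)ᶜ) := by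
      have h2 : ((Quotient.mk (MulAction.orbitRel Γ V)) '' F)ᶜ
          = (Quotient.mk (MulAction.orbitRel Γ V)) '' Fᶜ := by
        ext q
        simp only [mem_compl_iff, hout_mem]
        constructor
        · intro h
          exact ⟨q.out, h, Quotient.out_eq q⟩
        · rintro ⟨x, hx, rfl⟩ hq
          obtain ⟨g, hg⟩ := pr_eq_iff.1
            ((Quotient.out_eq (Quotient.mk (MulAction.orbitRel Γ V) x)).symm :
              Quotient.mk (MulAction.orbitRel Γ V) x
                = Quotient.mk (MulAction.orbitRel Γ V)
                    (Quotient.mk (MulAction.orbitRel Γ V) x).out)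
        -- hg : g • out = x
          apply hx
          rw [← hg, hq g]
          exact hq
      rw [h2]
      exact isOpenMap_pr _ hFclosed.isOpen_compl
    have hUopen : IsOpen U := hξ.isOpen_inter_preimage hIopen hFc_open
    have hlocU : ∀ t0 ∈ U, ∃ δ > 0, ∃ μ : ℝ → V, Lifts ξ μ (Ioo (t0 - δ) (t0 + δ)) := by
      intro t0 ht0
      obtain ⟨ht0I, ht0F⟩ := ht0
      rw [mem_preimage, mem_compl_iff] at ht0F
      set x : V := (ξ t0).out with hxdef
      have hxF : x ∉ F := fun h => ht0F ⟨x, h, Quotient.out_eq _⟩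
      set H : Subgroup Γ := MulAction.stabilizer Γ x with hHdef
      have hHne : H ≠ ⊤ := by
        intro h
        apply hxF
        intro g
        have hg : g ∈ H := h ▸ Subgroup.mem_top g
        exact hg
      have hcardH : Nat.card ↥H ≤ n := by
        have hle := Subgroup.card_le_card_group H
        have hne' : Nat.card ↥H ≠ Nat.card Γ := fun h => hHne (Subgroup.eq_top_of_card_eq H h)
        omega
      obtain ⟨g0, hg0⟩ : ∃ g : Γ, g ∉ H := by
        by_contra h
        push_neg at h
        exact hHne ((Subgroup.eq_top_iff' H).2 h)
      set Bad : Finset Γ := Finset.univ.filter (fun g => g ∉ H) with hBaddef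
      have hBadne : Bad.Nonempty := ⟨g0, by simp [hBaddef, hg0]⟩
      set ε : ℝ := (Bad.inf' hBadne fun g => DD Γ x (g • x)) / 3 with hεdef
      have hsep : ∀ g : Γ, g ∉ H → 3 * ε ≤ DD Γ x (g • x) := by
        intro g hg
        have hinf : Bad.inf' hBadne (fun g => DD Γ x (g • x)) ≤ DD Γ x (g • x) :=
          Finset.inf'_le _ (by simp [hBaddef, hg])
        rw [hεdef]; linarith
      have hε : 0 < ε := by
        rw [hεdef]
        have hpos : 0 < Bad.inf' hBadne fun g => DD Γ x (g • x) := by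
          obtain ⟨g, hgmem, hg⟩ := Finset.exists_mem_eq_inf' hBadne (fun g => DD Γ x (g • x))
          rw [hg]
          apply DD_pos
          intro heq
          have hgH : g ∈ H := mem_stabilizer_iff.2 heq.symm
          simp [hBaddef] at hgmem
          exact hgmem hgH
        linarith
      set B : Set V := {y | DD Γ x y < ε} with hBdef
      have hBopen : IsOpen B := isOpen_lt (DD_cont x) continuous_const
      have hxB : x ∈ B := by
        have : DD Γ x x = 0 := DD_self x
        simp [hBdef, this, hε]
      have claim1 : ∀ g : Γ, ∀ y : V, y ∈ B → g • y ∈ B → g ∈ H := by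
        intro g y hy hgy
        by_contra hg
        have h1 : DD Γ x (g • x) ≤ DD Γ x (g • y) + DD Γ (g • y) (g • x) := DD_triangle _ _ _
        have h2 : DD Γ (g • y) (g • x) = DD Γ y x := DD_smul g y x
        have h3 : DD Γ y x = DD Γ x y := DD_symm y x
        have h4 := hsep g hg
        have hy' : DD Γ x y < ε := hy
        have hgy' : DD Γ x (g • y) < ε := hgy
        linarith
      set T : Set V := ⋃ g : Γ, (fun y => g • y) '' B with hTdef
      have hTopen : IsOpen T :=
        isOpen_iUnion fun g => (Homeomorph.smul g (α := V)).isOpenMap _ hBopen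
      have hmemT : ∀ y : V, y ∈ T ↔ ∃ g : Γ, g⁻¹ • y ∈ B := by
        intro y
        rw [hTdef]
        simp only [mem_iUnion, mem_image]
        constructor
        · rintro ⟨g, z, hz, rfl⟩
          exact ⟨g, by simpa [inv_smul_smul] using hz⟩
        · rintro ⟨g, hg⟩
          exact ⟨g, g⁻¹ • y, hg, by simp [smul_inv_smul]⟩
      have hTsat : ∀ y z : V, Quotient.mk (MulAction.orbitRel Γ V) y
          = Quotient.mk (MulAction.orbitRel Γ V) z → y ∈ T → z ∈ T := by
        intro y z hyz hy
        obtain ⟨g, hg⟩ := pr_eq_iff.1 hyz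
        obtain ⟨k, hk⟩ := (hmemT y).1 hy
        refine (hmemT z).2 ⟨g⁻¹ * k, ?_⟩
        have hz : z = g⁻¹ • y := by rw [← hg, inv_smul_smul]
        rw [hz]
        have : (g⁻¹ * k)⁻¹ • g⁻¹ • y = k⁻¹ • y := by
          rw [smul_smul]
          congr 1
          group
        rw [this]
        exact hk
      set chooseG : V → Γ := fun y => if h : ∃ g : Γ, g⁻¹ • y ∈ B then h.choose else 1
        with hcGdef
      have hchoose : ∀ y ∈ T, (chooseG y)⁻¹ • y ∈ B := by
        intro y hy
        have h := (hmemT y).1 hy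
        rw [hcGdef]
        simp only [dif_pos h]
        exact h.choose_spec
      set ρ : V → Quotient (MulAction.orbitRel ↥H V) :=
        fun y => Quotient.mk (MulAction.orbitRel ↥H V) ((chooseG y)⁻¹ • y) with hρdef
      have hwd : ∀ y ∈ T, ∀ g : Γ, g⁻¹ • y ∈ B →
          ρ y = Quotient.mk (MulAction.orbitRel ↥H V) (g⁻¹ • y) := by
        intro y hy g hg
        have h1 : (chooseG y)⁻¹ • y ∈ B := hchoose y hy
        have hH : (chooseG y)⁻¹ * g ∈ H := by
          apply claim1 ((chooseG y)⁻¹ * g) (g⁻¹ • y) hg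
          have heq : ((chooseG y)⁻¹ * g) • g⁻¹ • y = (chooseG y)⁻¹ • y := by
            rw [smul_smul]
            congr 1
            group
          rw [heq]
          exact h1
        rw [hρdef]
        apply pr_eq_iff.2
        refine ⟨⟨(chooseG y)⁻¹ * g, hH⟩, ?_⟩
        have hcoe : (⟨(chooseG y)⁻¹ * g, hH⟩ : ↥H) • (g⁻¹ • y)
            = ((chooseG y)⁻¹ * g) • (g⁻¹ • y) := rfl
        rw [hcoe, smul_smul]
        congr 1
        group
      have hρinv : ∀ y ∈ T, ∀ k : Γ, ρ (k • y) = ρ y := by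
        intro y hy k
        have hky : k • y ∈ T := hTsat y (k • y) (pr_smul k y).symm hy
        have h1 : (chooseG y)⁻¹ • y ∈ B := hchoose y hy
        have h2 : (k * chooseG y)⁻¹ • (k • y) ∈ B := by
          have heq : (k * chooseG y)⁻¹ • (k • y) = (chooseG y)⁻¹ • y := by
            rw [smul_smul]
            congr 1
            group
          rw [heq]
          exact h1
        rw [hwd (k • y) hky (k * chooseG y) h2, hwd y hy (chooseG y) h1]
        congr 1
        rw [smul_smul]
        congr 1
        group
      have hρcont : ∀ y ∈ T, ContinuousAt ρ y := by
        intro y hy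
        have hgB : (chooseG y)⁻¹ • y ∈ B := hchoose y hy
        have hW : IsOpen ((fun z => (chooseG y) • z) '' B) :=
          (Homeomorph.smul (chooseG y) (α := V)).isOpenMap _ hBopen
        have hyW : y ∈ (fun z => (chooseG y) • z) '' B :=
          ⟨(chooseG y)⁻¹ • y, hgB, by simp [smul_inv_smul]⟩
        have hcong : ∀ z ∈ (fun z => (chooseG y) • z) '' B,
            ρ z = Quotient.mk (MulAction.orbitRel ↥H V) ((chooseG y)⁻¹ • z) := by
          intro z hz
          obtain ⟨w, hw, rfl⟩ := hz
          apply hwd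
          · exact (hmemT _).2 ⟨chooseG y, by simpa [inv_smul_smul] using hw⟩
          · simpa [inv_smul_smul] using hw
        have hcont : ContinuousAt
            (fun z => Quotient.mk (MulAction.orbitRel ↥H V) ((chooseG y)⁻¹ • z)) y :=
          (continuous_quot_mk.comp (cont_g ((chooseG y)⁻¹))).continuousAt
        apply hcont.congr
        filter_upwards [hW.mem_nhds hyW] with z hz
        exact (hcong z hz).symm
      set ρbar : Quotient (MulAction.orbitRel Γ V) → Quotient (MulAction.orbitRel ↥H V) :=
        fun q => ρ q.out with hρbardef
      have hρbar_pr : ∀ y ∈ T,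
          ρbar (Quotient.mk (MulAction.orbitRel Γ V) y) = ρ y := by
        intro y hy
        rw [hρbardef]
        obtain ⟨g, hg⟩ := pr_eq_iff.1
          ((Quotient.out_eq (Quotient.mk (MulAction.orbitRel Γ V) y)) :
            Quotient.mk (MulAction.orbitRel Γ V)
              (Quotient.mk (MulAction.orbitRel Γ V) y).out
              = Quotient.mk (MulAction.orbitRel Γ V) y)
        simp only
        rw [← hg]
        exact hρinv y hy g
      have himg_open : IsOpen ((Quotient.mk (MulAction.orbitRel Γ V)) '' T) :=
        isOpenMap_pr _ hTopen
      have hρbar_cont : ContinuousOn ρbar ((Quotient.mk (MulAction.orbitRel Γ V)) '' T) := by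
        rw [continuousOn_open_iff himg_open]
        intro Z hZ
        have heq : (Quotient.mk (MulAction.orbitRel Γ V)) '' T ∩ ρbar ⁻¹' Z
            = (Quotient.mk (MulAction.orbitRel Γ V)) '' (T ∩ ρ ⁻¹' Z) := by
          ext q
          constructor
          · rintro ⟨⟨y, hy, rfl⟩, hq⟩
            refine ⟨y, ⟨hy, ?_⟩, rfl⟩
            rw [mem_preimage] at hq ⊢
            rwa [← hρbar_pr y hy]
          · rintro ⟨y, ⟨hy, hyZ⟩, rfl⟩
            refine ⟨⟨y, hy, rfl⟩, ?_⟩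
            rw [mem_preimage]
            rwa [hρbar_pr y hy]
        rw [heq]
        apply isOpenMap_pr
        rw [isOpen_iff_mem_nhds]
        intro y hy
        exact Filter.inter_mem (hTopen.mem_nhds hy.1) (hρcont y hy.1 (hZ.mem_nhds hy.2))
      set O : Set ℝ := I ∩ ξ ⁻¹' ((Quotient.mk (MulAction.orbitRel Γ V)) '' T) with hOdef
      have hOopen : IsOpen O := hξ.isOpen_inter_preimage hIopen himg_open
      have hxT : x ∈ T := (hmemT x).2 ⟨1, by simpa using hxB⟩
      have ht0O : t0 ∈ O := by
        refine ⟨ht0I, ?_⟩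
        rw [mem_preimage, ← Quotient.out_eq (ξ t0)]
        exact mem_image_of_mem _ hxT
      obtain ⟨δ, hδ, hball⟩ := Metric.isOpen_iff.1 hOopen t0 ht0O
      refine ⟨δ, hδ, ?_⟩
      have hIooO : Ioo (t0 - δ) (t0 + δ) ⊆ O := by
        rw [← Real.ball_eq_Ioo]
        exact hball
      set ξ' : ℝ → Quotient (MulAction.orbitRel ↥H V) := fun s => ρbar (ξ s) with hξ'def
      have hξ'cont : ContinuousOn ξ' (Ioo (t0 - δ) (t0 + δ)) := by
        apply hρbar_cont.comp (hξ.mono fun s hs => (hIooO hs).1)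
        intro s hs
        exact (hIooO hs).2
      obtain ⟨μ, hμcont, hμ⟩ := IH ↥H V hcardH (Ioo (t0 - δ) (t0 + δ)) isOpen_Ioo ξ' hξ'cont
      refine ⟨μ, hμcont, ?_⟩
      intro s hs
      have hsO := hIooO hs
      have hyT : (ξ s).out ∈ T := by
        have hmem := hsO.2
        rw [mem_preimage] at hmem
        obtain ⟨y, hy, hyeq⟩ := hmem
        exact hTsat y (ξ s).out (by rw [hyeq, Quotient.out_eq]) hy
      have h1 : Quotient.mk (MulAction.orbitRel ↥H V) (μ s) = ρ ((ξ s).out) := by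
        rw [hμ s hs, hξ'def]
      have h2 : ρ ((ξ s).out)
          = Quotient.mk (MulAction.orbitRel ↥H V) ((chooseG ((ξ s).out))⁻¹ • (ξ s).out) :=
        rfl
      rw [h2] at h1
      obtain ⟨h, hh⟩ := pr_eq_iff.1 h1
      rw [← hh]
      have hcoe : h • ((chooseG ((ξ s).out))⁻¹ • (ξ s).out)
          = ((h : Γ) * (chooseG ((ξ s).out))⁻¹) • (ξ s).out := by
        rw [Subgroup.smul_def, smul_smul]
      rw [hcoe, pr_smul, Quotient.out_eq]
    obtain ⟨lU, hlU⟩ := glue_open hUopen hlocU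
    set l : ℝ → V := fun t => if (ξ t).out ∈ F then (ξ t).out else lU t with hldef
    have hlift : ∀ t ∈ I, Quotient.mk (MulAction.orbitRel Γ V) (l t) = ξ t := by
      intro t ht
      rw [hldef]
      by_cases h : (ξ t).out ∈ F
      · simp only [if_pos h]
        exact Quotient.out_eq _
      · simp only [if_neg h]
        refine hlU.2 t ⟨ht, ?_⟩
        rw [mem_preimage, mem_compl_iff]
        exact fun hc => h ((hout_mem (ξ t)).1 hc)
    refine ⟨l, ?_, hlift⟩
    intro t ht
    by_cases hF : (ξ t).out ∈ F
    · -- fixed point case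
      have hlt : l t = (ξ t).out := by rw [hldef]; simp only [if_pos hF]
      have : Tendsto l (nhdsWithin t I) (nhds (l t)) := by
        rw [Metric.tendsto_nhds]
        intro ε' hε'
        set z : V := (ξ t).out with hzdef
        set Bz : Set V := {y | DD Γ z y < ε'} with hBzdef
        have hBzopen : IsOpen Bz := isOpen_lt (DD_cont z) continuous_const
        have hzBz : z ∈ Bz := by
          have h0 : DD Γ z z = 0 := DD_self z
          simp [hBzdef, h0, hε']
        have hsat : ∀ y ∈ Bz, ∀ g : Γ, g • y ∈ Bz := by
          intro y hy g
          have h1 : DD Γ z (g • y) = DD Γ z y := by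
            calc DD Γ z (g • y) = DD Γ (g • z) (g • y) := by rw [hF g]
            _ = DD Γ z y := DD_smul g z y
          have hy' : DD Γ z y < ε' := hy
          simp only [hBzdef, mem_setOf_eq, h1]
          exact hy'
        have hnhds : (Quotient.mk (MulAction.orbitRel Γ V)) '' Bz ∈ nhds (ξ t) := by
          have := (isOpenMap_pr _ hBzopen).mem_nhds
            (mem_image_of_mem (Quotient.mk (MulAction.orbitRel Γ V)) hzBz)
          rwa [Quotient.out_eq (ξ t)] at this
        have hev : ξ ⁻¹' ((Quotient.mk (MulAction.orbitRel Γ V)) '' Bz)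
            ∈ nhdsWithin t I := hξ t ht hnhds
        filter_upwards [hev, self_mem_nhdsWithin] with s hs hsI
        obtain ⟨w, hw, hweq⟩ := hs
        obtain ⟨g, hg⟩ := pr_eq_iff.1 ((hlift s hsI).trans hweq.symm)
        have hls : l s ∈ Bz := by
          rw [← hg]
          exact hsat w hw g
        have hd : DD Γ z (l s) < ε' := hls
        rw [hlt]
        calc dist (l s) z = dist z (l s) := dist_comm _ _
        _ ≤ DD Γ z (l s) := dist_le_DD z (l s)
        _ < ε' := hd
      exact this
    · -- non-fixed case
      have htU : t ∈ U := by
        refine ⟨ht, ?_⟩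
        rw [mem_preimage, mem_compl_iff]
        exact fun hc => hF ((hout_mem (ξ t)).1 hc)
      have hlloc : ∀ s ∈ U, l s = lU s := by
        intro s hs
        rw [hldef]
        have hs2 := hs.2
        rw [mem_preimage, mem_compl_iff] at hs2
        simp only [if_neg (fun h => hs2 ((hout_mem (ξ s)).2 h))]
      have hcont : ContinuousAt lU t := hlU.1.continuousAt (hUopen.mem_nhds htU)
      have hev : lU =ᶠ[nhds t] l := by
        filter_upwards [hUopen.mem_nhds htU] with s hs
        exact (hlloc s hs).symm
      exact (hcont.congr hev).continuousWithinAt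


/-- Let `Γ` be a finite group acting linearly on a finite-dimensional real normed vector space
`V`, and `π : V → V/Γ` the projection onto the orbit space (with its quotient topology). If
`ξ : ℝ → V/Γ` is continuous on an open interval `I`, then there exists `λ : ℝ → V` continuous
on `I` with `π (λ t) = ξ t` for all `t ∈ I`. -/
theorem stmt13 {V : Type*} [NormedAddCommGroup V] [NormedSpace ℝ V] [FiniteDimensional ℝ V]
    {Γ : Type*} [Group Γ] [Finite Γ] [DistribMulAction Γ V] [SMulCommClass Γ ℝ V]
    (I : Set ℝ) (hIopen : IsOpen I) (hIconn : I.OrdConnected)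
    (ξ : ℝ → Quotient (MulAction.orbitRel Γ V))
    (hξ : ContinuousOn ξ I) :
    ∃ lam : ℝ → V, ContinuousOn lam I ∧
      ∀ t ∈ I, Quotient.mk (MulAction.orbitRel Γ V) (lam t) = ξ t := by
  obtain ⟨l, hl⟩ := key (Nat.card Γ) Γ V le_rfl I hIopen ξ hξ
  exact ⟨l, hl.1, hl.2⟩
end

section
/- Let I be an open interval and ξ : ℝ → V/Γ a function. Suppose that for every t ∈ I there exists a function μ : ℝ → V with π(μ(s)) = ξ(s) for all s ∈ I which is differentiable at t. Then there exists a single function λ : ℝ → V with π(λ(s)) = ξ(s) for all s ∈ I which is differentiable at every point of I. -/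
open MulAction Filter Asymptotics Topology Set

set_option linter.unusedSectionVars false

section Setup
variable {V : Type*} [NormedAddCommGroup V] [NormedSpace ℝ V] [FiniteDimensional ℝ V]
    {Γ : Type*} [Group Γ] [Finite Γ] [DistribMulAction Γ V] [SMulCommClass Γ ℝ V]

instance (H : Subgroup Γ) : SMulCommClass H ℝ V := ⟨fun h r v => smul_comm (h : Γ) r v⟩

noncomputable def gL (Γ : Type*) [Group Γ] [DistribMulAction Γ V] [SMulCommClass Γ ℝ V] (g : Γ) : V →L[ℝ] V :=
  LinearMap.toContinuousLinearMap (DistribMulAction.toLinearMap ℝ V g)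

lemma gL_apply (g : Γ) (v : V) : gL Γ g v = g • v := rfl

lemma exists_gC (Γ : Type*) (V : Type*) [NormedAddCommGroup V] [NormedSpace ℝ V]
    [FiniteDimensional ℝ V] [Group Γ] [Finite Γ] [DistribMulAction Γ V] [SMulCommClass Γ ℝ V] :
    ∃ C : ℝ, 1 ≤ C ∧ ∀ (g : Γ) (v : V), ‖g • v‖ ≤ C * ‖v‖ := by
  obtain ⟨g₀, hg₀⟩ := Finite.exists_max (fun g : Γ => ‖gL Γ (V := V) g‖)
  refine ⟨1 + ‖gL Γ (V := V) g₀‖, by nlinarith [norm_nonneg (gL Γ (V := V) g₀)], fun g v => ?_⟩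
  calc ‖g • v‖ = ‖gL Γ (V := V) g v‖ := rfl
    _ ≤ ‖gL Γ (V := V) g‖ * ‖v‖ := (gL Γ g).le_opNorm v
    _ ≤ (1 + ‖gL Γ (V := V) g₀‖) * ‖v‖ := by
        have := hg₀ g
        nlinarith [norm_nonneg v, norm_nonneg (gL Γ (V := V) g)]

/-- lifts: λ lifts ξ on I. -/
def IsLift (Γ : Type*) [Group Γ] [DistribMulAction Γ V] (I : Set ℝ)
    (ξ : ℝ → Quotient (MulAction.orbitRel Γ V)) (lam : ℝ → V) : Prop :=
  ∀ s ∈ I, Quotient.mk (MulAction.orbitRel Γ V) (lam s) = ξ s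

lemma IsLift.exists_smul_eq {I : Set ℝ} {ξ : ℝ → Quotient (MulAction.orbitRel Γ V)}
    {lam mu : ℝ → V} (hl : IsLift Γ I ξ lam) (hm : IsLift Γ I ξ mu) {s : ℝ} (hs : s ∈ I) :
    ∃ g : Γ, lam s = g • mu s := by
  have : Quotient.mk (MulAction.orbitRel Γ V) (lam s) = Quotient.mk _ (mu s) := by
    rw [hl s hs, hm s hs]
  obtain ⟨g, hg⟩ := Quotient.eq''.mp this
  exact ⟨g, hg.symm⟩



variable {I : Set ℝ} {ξ : ℝ → Quotient (MulAction.orbitRel Γ V)}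

lemma absorbing (hIopen : IsOpen I) {mu lam : ℝ → V} {t : ℝ} (ht : t ∈ I)
    (hmu : IsLift Γ I ξ mu) (hlam : IsLift Γ I ξ lam) {v : V} (hd : HasDerivAt mu v t)
    (hx : ∀ g : Γ, g • mu t = mu t) (hv : ∀ g : Γ, g • v = v) :
    HasDerivAt lam v t := by
  obtain ⟨C, hC0, hC⟩ := exists_gC Γ V
  have hlamt : lam t = mu t := by
    obtain ⟨g, hg⟩ : ∃ g : Γ, lam t = g • mu t := by
      have : Quotient.mk (MulAction.orbitRel Γ V) (lam t) = Quotient.mk _ (mu t) := by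
        rw [hlam t ht, hmu t ht]
      obtain ⟨g, hg⟩ := Quotient.eq''.mp this
      exact ⟨g, hg.symm⟩
    rw [hg, hx g]
  rw [hasDerivAt_iff_isLittleO] at hd ⊢
  have hbig : (fun s => lam s - lam t - (s - t) • v) =O[𝓝 t]
      (fun s => mu s - mu t - (s - t) • v) := by
    rw [isBigO_iff]
    refine ⟨C, ?_⟩
    filter_upwards [hIopen.mem_nhds ht] with s hs
    obtain ⟨g, hg⟩ : ∃ g : Γ, lam s = g • mu s := by
      have : Quotient.mk (MulAction.orbitRel Γ V) (lam s) = Quotient.mk _ (mu s) := by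
        rw [hlam s hs, hmu s hs]
      obtain ⟨g, hg⟩ := Quotient.eq''.mp this
      exact ⟨g, hg.symm⟩
    have : lam s - lam t - (s - t) • v = g • (mu s - mu t - (s - t) • v) := by
      rw [smul_sub, smul_sub, hg, hlamt, hx g, smul_comm g (s - t) v, hv g]
    rw [this]
    exact hC g _
  exact hbig.trans_isLittleO hd

lemma match_lemma {lam nu : ℝ → V} {b : ℝ} (hb : b ∈ I) (hIopen : IsOpen I)
    (hlam : IsLift Γ I ξ lam) (hnu : IsLift Γ I ξ nu)
    {v w : V} (hdl : HasDerivAt lam v b) (hdn : HasDerivAt nu w b)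
    (l : Filter ℝ) [hlne : l.NeBot] (hl : l ≤ 𝓝[≠] b) :
    ∃ g : Γ, g • nu b = lam b ∧ g • w = v := by
  have hlnb : l ≤ 𝓝 b := hl.trans nhdsWithin_le_nhds
  have hev : ∀ᶠ s in l, ∃ g : Γ, lam s = g • nu s := by
    filter_upwards [hlnb (hIopen.mem_nhds hb)] with s hs
    have : Quotient.mk (MulAction.orbitRel Γ V) (lam s) = Quotient.mk _ (nu s) := by
      rw [hlam s hs, hnu s hs]
    obtain ⟨g, hg⟩ := Quotient.eq''.mp this
    exact ⟨g, hg.symm⟩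
  have key : ∃ g : Γ, ∃ᶠ s in l, lam s = g • nu s := by
    by_contra hcon
    push_neg at hcon
    have h2 : ∀ᶠ s in l, ∀ g : Γ, ¬ lam s = g • nu s := eventually_all.mpr hcon
    have : ∀ᶠ s in l, False := by
      filter_upwards [hev, h2] with s ⟨g, hg⟩ h2s
      exact h2s g hg
    obtain ⟨s, hs⟩ := this.exists
    exact hs
  obtain ⟨g, hfreq⟩ := key
  set f : ℝ → V := fun s => lam s - g • nu s with hf
  have hdgnu : HasDerivAt (fun s => g • nu s) (g • w) b := by
    have := (gL Γ (V := V) g).hasFDerivAt.comp_hasDerivAt b hdn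
    exact this
  have hdf : HasDerivAt f (v - g • w) b := hdl.sub hdgnu
  set l' : Filter ℝ := l ⊓ 𝓟 {s | f s = 0} with hl'
  have hl'ne : l'.NeBot := frequently_iff_neBot.mp (hfreq.mono (fun s hs => sub_eq_zero.mpr hs))
  have hfb : f b = 0 := by
    have h1 : Tendsto f l' (𝓝 (f b)) :=
      (hdf.continuousAt.tendsto).comp (tendsto_id.mono_left (inf_le_left.trans hlnb))
    have h2 : Tendsto f l' (𝓝 0) := by
      refine Tendsto.congr' ?_ tendsto_const_nhds
      exact (eventually_inf_principal.mpr (Eventually.of_forall (fun s hs => hs.symm)))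
    exact (tendsto_nhds_unique h1 h2)
  have hd0 : v - g • w = 0 := by
    have h1 : Tendsto (slope f b) (𝓝[≠] b) (𝓝 (v - g • w)) := hasDerivAt_iff_tendsto_slope.mp hdf
    have h1' : Tendsto (slope f b) l' (𝓝 (v - g • w)) := h1.mono_left (inf_le_left.trans hl)
    have h2 : Tendsto (slope f b) l' (𝓝 0) := by
      refine Tendsto.congr' ?_ tendsto_const_nhds
      refine (eventually_inf_principal.mpr (Eventually.of_forall (fun s hs => ?_)))
      have hs0 : f s = 0 := hs
      simp only [slope_def_module, hs0, hfb, sub_zero, smul_zero]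
    exact tendsto_nhds_unique h1' h2
  refine ⟨g, ?_, ?_⟩
  · have := sub_eq_zero.mp hfb; exact this.symm
  · exact (sub_eq_zero.mp hd0).symm

lemma smul_lift {lam : ℝ → V} (hlam : IsLift Γ I ξ lam) (g : Γ) :
    IsLift Γ I ξ (fun s => g • lam s) := by
  intro s hs
  rw [← hlam s hs]
  exact Quotient.sound' ⟨g, rfl⟩

lemma seam_right {lam nu : ℝ → V} {b : ℝ} (hb : b ∈ I) (hIopen : IsOpen I)
    (hlam : IsLift Γ I ξ lam) (hnu : IsLift Γ I ξ nu)
    (hdl : DifferentiableAt ℝ lam b) (hdn : DifferentiableAt ℝ nu b) :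
    ∃ lam' : ℝ → V, IsLift Γ I ξ lam' ∧ (∀ s, s ≤ b → lam' s = lam s) ∧
      DifferentiableAt ℝ lam' b ∧
      ∀ s, b < s → DifferentiableAt ℝ nu s → DifferentiableAt ℝ lam' s := by
  obtain ⟨g, hgb, hgw⟩ := match_lemma hb hIopen hlam hnu hdl.hasDerivAt hdn.hasDerivAt (𝓝[>] b)
      (nhdsWithin_mono b (fun s hs => ne_of_gt hs))
  set lam' : ℝ → V := fun s => if s ≤ b then lam s else g • nu s with hlam'
  have hgnu : HasDerivAt (fun s => g • nu s) (deriv lam b) b := by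
    have h := (gL Γ (V := V) g).hasFDerivAt.comp_hasDerivAt b hdn.hasDerivAt
    have h2 : HasDerivAt (fun s => g • nu s) (g • deriv nu b) b := h
    rwa [hgw] at h2
  refine ⟨lam', fun s hs => ?_, fun s hs => if_pos hs, ?_, fun s hs hds => ?_⟩
  · by_cases hsb : s ≤ b
    · simp only [hlam', if_pos hsb]; exact hlam s hs
    · simp only [hlam', if_neg hsb]
      rw [← hnu s hs]
      exact Quotient.sound' ⟨g, rfl⟩
  · have hleft : HasDerivWithinAt lam' (deriv lam b) (Iic b) b :=
      (hdl.hasDerivAt.hasDerivWithinAt).congr (fun s hs => if_pos hs) (if_pos le_rfl)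
    have hright : HasDerivWithinAt lam' (deriv lam b) (Ici b) b := by
      refine hgnu.hasDerivWithinAt.congr (fun s hs => ?_) ?_
      · by_cases hsb : s ≤ b
        · have hsb' : s = b := le_antisymm hsb hs
          subst hsb'
          simp only [hlam', if_pos hsb, hgb.symm]
        · simp only [hlam', if_neg hsb]
      · simp only [hlam', if_pos le_rfl, hgb.symm]
    have := hleft.union hright
    rw [Iic_union_Ici, hasDerivWithinAt_univ] at this
    exact this.differentiableAt
  · have hdiff : DifferentiableAt ℝ (fun s => g • nu s) s :=
      (gL Γ (V := V) g).differentiableAt.comp s hds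
    refine hdiff.congr_of_eventuallyEq ?_
    filter_upwards [Ioi_mem_nhds hs] with y hy
    simp only [hlam', if_neg (not_le.mpr (mem_Ioi.mp hy))]

lemma seam_left {lam nu : ℝ → V} {b : ℝ} (hb : b ∈ I) (hIopen : IsOpen I)
    (hlam : IsLift Γ I ξ lam) (hnu : IsLift Γ I ξ nu)
    (hdl : DifferentiableAt ℝ lam b) (hdn : DifferentiableAt ℝ nu b) :
    ∃ lam' : ℝ → V, IsLift Γ I ξ lam' ∧ (∀ s, b ≤ s → lam' s = lam s) ∧
      DifferentiableAt ℝ lam' b ∧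
      ∀ s, s < b → DifferentiableAt ℝ nu s → DifferentiableAt ℝ lam' s := by
  obtain ⟨g, hgb, hgw⟩ := match_lemma hb hIopen hlam hnu hdl.hasDerivAt hdn.hasDerivAt (𝓝[<] b)
      (nhdsWithin_mono b (fun s hs => ne_of_lt hs))
  set lam' : ℝ → V := fun s => if b ≤ s then lam s else g • nu s with hlam'
  have hgnu : HasDerivAt (fun s => g • nu s) (deriv lam b) b := by
    have h := (gL Γ (V := V) g).hasFDerivAt.comp_hasDerivAt b hdn.hasDerivAt
    have h2 : HasDerivAt (fun s => g • nu s) (g • deriv nu b) b := h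
    rwa [hgw] at h2
  refine ⟨lam', fun s hs => ?_, fun s hs => if_pos hs, ?_, fun s hs hds => ?_⟩
  · by_cases hsb : b ≤ s
    · simp only [hlam', if_pos hsb]; exact hlam s hs
    · simp only [hlam', if_neg hsb]
      rw [← hnu s hs]
      exact Quotient.sound' ⟨g, rfl⟩
  · have hright : HasDerivWithinAt lam' (deriv lam b) (Ici b) b :=
      (hdl.hasDerivAt.hasDerivWithinAt).congr (fun s hs => if_pos hs) (if_pos le_rfl)
    have hleft : HasDerivWithinAt lam' (deriv lam b) (Iic b) b := by
      refine hgnu.hasDerivWithinAt.congr (fun s hs => ?_) ?_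
      · by_cases hsb : b ≤ s
        · have hsb' : s = b := le_antisymm hs hsb
          subst hsb'
          simp only [hlam', if_pos hsb, hgb.symm]
        · simp only [hlam', if_neg hsb]
      · simp only [hlam', if_pos le_rfl, hgb.symm]
    have := hleft.union hright
    rw [Iic_union_Ici, hasDerivWithinAt_univ] at this
    exact this.differentiableAt
  · have hdiff : DifferentiableAt ℝ (fun s => g • nu s) s :=
      (gL Γ (V := V) g).differentiableAt.comp s hds
    refine hdiff.congr_of_eventuallyEq ?_
    filter_upwards [Iio_mem_nhds hs] with y hy
    simp only [hlam', if_neg (not_le.mpr (mem_Iio.mp hy))]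

lemma creep_right (hIopen : IsOpen I) {C : Set ℝ} (hCI : C ⊆ I) (hCconn : C.OrdConnected)
    (hC : ∀ t ∈ C, ∃ δ > (0:ℝ), ∃ nu : ℝ → V, IsLift Γ I ξ nu ∧
      ∀ u ∈ I, |u - t| < δ → DifferentiableAt ℝ nu u)
    {l a b : ℝ} (hl : l ∈ C) (ha : a ∈ C) (hb : b ∈ C) (hla : l ≤ a) (hab : a ≤ b)
    {lam0 : ℝ → V} (hlam0 : IsLift Γ I ξ lam0)
    (hdiff0 : ∀ s ∈ C ∩ Icc l a, DifferentiableAt ℝ lam0 s) :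
    ∃ lam1 : ℝ → V, IsLift Γ I ξ lam1 ∧ (∀ s, s ≤ a → lam1 s = lam0 s) ∧
      ∀ s ∈ C ∩ Icc l b, DifferentiableAt ℝ lam1 s := by
  set A : Set ℝ := {β | β ∈ Icc a b ∧ ∃ lam1 : ℝ → V, IsLift Γ I ξ lam1 ∧
    (∀ s, s ≤ a → lam1 s = lam0 s) ∧ ∀ s ∈ C ∩ Icc l β, DifferentiableAt ℝ lam1 s} with hA
  have hane : a ∈ A := ⟨⟨le_rfl, hab⟩, lam0, hlam0, fun s _ => rfl, hdiff0⟩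
  have hbdd : BddAbove A := ⟨b, fun β hβ => hβ.1.2⟩
  set β := sSup A with hβdef
  have hβIcc : β ∈ Icc a b := ⟨le_csSup hbdd hane, csSup_le ⟨a, hane⟩ (fun x hx => hx.1.2)⟩
  have hβC : β ∈ C := hCconn.out ha hb hβIcc
  obtain ⟨δ, hδ, ν, hνl, hνd⟩ := hC β hβC
  obtain ⟨b', hb'A, hb'⟩ : ∃ b' ∈ A, β - δ < b' := by
    rcases exists_lt_of_lt_csSup ⟨a, hane⟩ (show β - δ < β by linarith) with ⟨b', hb'A, hb'⟩
    exact ⟨b', hb'A, hb'⟩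
  have hb'β : b' ≤ β := le_csSup hbdd hb'A
  obtain ⟨⟨hab', hb'b⟩, lam', hlam', hfix', hdiff'⟩ := hb'A
  have hb'C : b' ∈ C := hCconn.out ha hb ⟨hab', hb'b⟩
  have hd1 : DifferentiableAt ℝ lam' b' := hdiff' b' ⟨hb'C, hla.trans hab', le_rfl⟩
  have hd2 : DifferentiableAt ℝ ν b' := by
    refine hνd b' (hCI hb'C) ?_
    rw [abs_sub_lt_iff]; constructor <;> linarith
  obtain ⟨lam'', hl'', hfix'', hdb'', hdgt''⟩ := seam_right (hCI hb'C) hIopen hlam' hνl hd1 hd2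
  set β' := min b (β + δ/2) with hβ'def
  have hβ'A : β' ∈ A := by
    refine ⟨⟨le_min hab (by linarith [hβIcc.1]), min_le_left _ _⟩, lam'', hl'',
      fun s hs => (hfix'' s (hs.trans hab')).trans (hfix' s hs), fun s hs => ?_⟩
    rcases lt_trichotomy s b' with hlt | heq | hgt
    · refine (hdiff' s ⟨hs.1, hs.2.1, le_of_lt hlt⟩).congr_of_eventuallyEq ?_
      filter_upwards [Iio_mem_nhds hlt] with y hy
      exact hfix'' y (le_of_lt (mem_Iio.mp hy))
    · rw [heq]; exact hdb''
    · refine hdgt'' s hgt (hνd s (hCI hs.1) ?_)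
      have hs2 : s ≤ β' := hs.2.2
      have : s ≤ β + δ/2 := le_trans hs2 (min_le_right _ _)
      rw [abs_sub_lt_iff]; constructor <;> linarith
  have hβ'β : β' ≤ β := le_csSup hbdd hβ'A
  have hbβ : b ≤ β := by
    by_contra hcon
    push_neg at hcon
    have : β' = β + δ/2 ∨ β' = b := by
      rcases min_cases b (β + δ/2) with h | h
      · exact Or.inr h.1
      · exact Or.inl h.1
    rcases this with h | h
    · rw [h] at hβ'β; linarith
    · rw [h] at hβ'β; linarith
  have hβb : β = b := le_antisymm hβIcc.2 hbβ
  have hβ'b : β' = b := by rw [hβ'def, hβb]; exact min_eq_left (by linarith)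
  rw [hβ'b] at hβ'A
  exact hβ'A.2

lemma creep_left (hIopen : IsOpen I) {C : Set ℝ} (hCI : C ⊆ I) (hCconn : C.OrdConnected)
    (hC : ∀ t ∈ C, ∃ δ > (0:ℝ), ∃ nu : ℝ → V, IsLift Γ I ξ nu ∧
      ∀ u ∈ I, |u - t| < δ → DifferentiableAt ℝ nu u)
    {r a b : ℝ} (hr : r ∈ C) (ha : a ∈ C) (hb : b ∈ C) (har : a ≤ r) (hba : b ≤ a)
    {lam0 : ℝ → V} (hlam0 : IsLift Γ I ξ lam0)
    (hdiff0 : ∀ s ∈ C ∩ Icc a r, DifferentiableAt ℝ lam0 s) :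
    ∃ lam1 : ℝ → V, IsLift Γ I ξ lam1 ∧ (∀ s, a ≤ s → lam1 s = lam0 s) ∧
      ∀ s ∈ C ∩ Icc b r, DifferentiableAt ℝ lam1 s := by
  set A : Set ℝ := {β | β ∈ Icc b a ∧ ∃ lam1 : ℝ → V, IsLift Γ I ξ lam1 ∧
    (∀ s, a ≤ s → lam1 s = lam0 s) ∧ ∀ s ∈ C ∩ Icc β r, DifferentiableAt ℝ lam1 s} with hA
  have hane : a ∈ A := ⟨⟨hba, le_rfl⟩, lam0, hlam0, fun s _ => rfl, hdiff0⟩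
  have hbdd : BddBelow A := ⟨b, fun β hβ => hβ.1.1⟩
  set β := sInf A with hβdef
  have hβIcc : β ∈ Icc b a := ⟨le_csInf ⟨a, hane⟩ (fun x hx => hx.1.1), csInf_le hbdd hane⟩
  have hβC : β ∈ C := hCconn.out hb ha hβIcc
  obtain ⟨δ, hδ, ν, hνl, hνd⟩ := hC β hβC
  obtain ⟨b', hb'A, hb'⟩ : ∃ b' ∈ A, b' < β + δ := by
    rcases exists_lt_of_csInf_lt ⟨a, hane⟩ (show β < β + δ by linarith) with ⟨b', hb'A, hb'⟩
    exact ⟨b', hb'A, hb'⟩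
  have hb'β : β ≤ b' := csInf_le hbdd hb'A
  obtain ⟨⟨hbb', hb'a⟩, lam', hlam', hfix', hdiff'⟩ := hb'A
  have hb'C : b' ∈ C := hCconn.out hb ha ⟨hbb', hb'a⟩
  have hd1 : DifferentiableAt ℝ lam' b' := hdiff' b' ⟨hb'C, le_rfl, hb'a.trans har⟩
  have hd2 : DifferentiableAt ℝ ν b' := by
    refine hνd b' (hCI hb'C) ?_
    rw [abs_sub_lt_iff]; constructor <;> linarith
  obtain ⟨lam'', hl'', hfix'', hdb'', hdlt''⟩ := seam_left (hCI hb'C) hIopen hlam' hνl hd1 hd2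
  set β' := max b (β - δ/2) with hβ'def
  have hβ'A : β' ∈ A := by
    refine ⟨⟨le_max_left _ _, max_le hba (by linarith [hβIcc.2])⟩, lam'', hl'',
      fun s hs => (hfix'' s (hb'a.trans hs)).trans (hfix' s hs), fun s hs => ?_⟩
    rcases lt_trichotomy s b' with hlt | heq | hgt
    · refine hdlt'' s hlt (hνd s (hCI hs.1) ?_)
      have hs2 : β' ≤ s := hs.2.1
      have : β - δ/2 ≤ s := le_trans (le_max_right _ _) hs2
      rw [abs_sub_lt_iff]; constructor <;> linarith
    · rw [heq]; exact hdb''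
    · refine (hdiff' s ⟨hs.1, le_of_lt hgt, hs.2.2⟩).congr_of_eventuallyEq ?_
      filter_upwards [Ioi_mem_nhds hgt] with y hy
      exact hfix'' y (le_of_lt (mem_Ioi.mp hy))
  have hβ'β : β ≤ β' := csInf_le hbdd hβ'A
  have hbβ : β ≤ b := by
    by_contra hcon
    push_neg at hcon
    have hβ'eq : β' = b ⊔ (β - δ / 2) := hβ'def
    rcases max_cases b (β - δ/2) with h | h
    · rw [h.1] at hβ'eq; rw [hβ'eq] at hβ'β; linarith
    · rw [h.1] at hβ'eq; rw [hβ'eq] at hβ'β; linarith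
  have hβb : β = b := le_antisymm hbβ hβIcc.1
  have hβ'b : β' = b := by rw [hβ'def, hβb]; exact max_eq_left (by linarith)
  rw [hβ'b] at hβ'A
  exact hβ'A.2

lemma glue (hIopen : IsOpen I) {C : Set ℝ} (hCI : C ⊆ I) (hCconn : C.OrdConnected)
    (hCopen : IsOpen C)
    (hC : ∀ t ∈ C, ∃ δ > (0:ℝ), ∃ nu : ℝ → V, IsLift Γ I ξ nu ∧
      ∀ u ∈ I, |u - t| < δ → DifferentiableAt ℝ nu u) :
    ∃ lam : ℝ → V, IsLift Γ I ξ lam ∧ ∀ t ∈ C, DifferentiableAt ℝ lam t := by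
  classical
  rcases eq_empty_or_nonempty C with hCe | ⟨t₀, ht₀⟩
  · exact ⟨fun s => (ξ s).out, fun s _ => Quotient.out_eq _, fun t ht => absurd ht (by simp [hCe])⟩
  obtain ⟨fq, hfq⟩ := exists_surjective_nat ℚ
  set bs : ℕ → ℝ := fun n => if ((fq n : ℝ) ∈ C ∧ t₀ ≤ (fq n : ℝ)) then (fq n : ℝ) else t₀ with hbs
  set as : ℕ → ℝ := fun n => if ((fq n : ℝ) ∈ C ∧ (fq n : ℝ) ≤ t₀) then (fq n : ℝ) else t₀ with has
  have hbsC : ∀ n, bs n ∈ C := by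
    intro n; rw [hbs]; dsimp only; split_ifs with h
    · exact h.1
    · exact ht₀
  have hasC : ∀ n, as n ∈ C := by
    intro n; rw [has]; dsimp only; split_ifs with h
    · exact h.1
    · exact ht₀
  have hbst : ∀ n, t₀ ≤ bs n := by
    intro n; rw [hbs]; dsimp only; split_ifs with h
    · exact h.2
    · exact le_rfl
  have hast : ∀ n, as n ≤ t₀ := by
    intro n; rw [has]; dsimp only; split_ifs with h
    · exact h.2
    · exact le_rfl
  -- running max and min
  set M : ℕ → ℝ := fun n => Nat.rec t₀ (fun k Mk => max Mk (bs k)) n with hM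
  set m : ℕ → ℝ := fun n => Nat.rec t₀ (fun k mk => min mk (as k)) n with hm
  have hMsucc : ∀ n, M (n+1) = max (M n) (bs n) := fun n => rfl
  have hmsucc : ∀ n, m (n+1) = min (m n) (as n) := fun n => rfl
  have hMC : ∀ n, M n ∈ C := by
    intro n; induction n with
    | zero => exact ht₀
    | succ k ih =>
      rw [hMsucc]
      rcases le_total (M k) (bs k) with h | h
      · rw [max_eq_right h]; exact hbsC k
      · rw [max_eq_left h]; exact ih
  have hmC : ∀ n, m n ∈ C := by
    intro n; induction n with
    | zero => exact ht₀
    | succ k ih =>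
      rw [hmsucc]
      rcases le_total (m k) (as k) with h | h
      · rw [min_eq_left h]; exact ih
      · rw [min_eq_right h]; exact hasC k
  have hMmono : Monotone M := monotone_nat_of_le_succ (fun n => by rw [hMsucc]; exact le_max_left _ _)
  have hmanti : Antitone m := antitone_nat_of_succ_le (fun n => by rw [hmsucc]; exact min_le_left _ _)
  have hMt : ∀ n, t₀ ≤ M n := fun n => hMmono (Nat.zero_le n)
  have hmt : ∀ n, m n ≤ t₀ := fun n => hmanti (Nat.zero_le n)
  have hmM : ∀ n, m n ≤ M n := fun n => (hmt n).trans (hMt n)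
  -- cofinality
  have hcofn : ∀ s ∈ C, ∃ n, s ≤ M n := by
    intro s hs
    rcases le_total s t₀ with h | h
    · exact ⟨0, h⟩
    · obtain ⟨ε, hε, hball⟩ := Metric.isOpen_iff.mp hCopen s hs
      obtain ⟨r, hr1, hr2⟩ := exists_rat_btwn (show s < s + ε by linarith)
      have hrC : (r:ℝ) ∈ C := hball (by rw [Metric.mem_ball, Real.dist_eq, abs_sub_lt_iff]; constructor <;> linarith)
      obtain ⟨k, hk⟩ := hfq r
      refine ⟨k+1, ?_⟩
      have : bs k = (r:ℝ) := by
        rw [hbs]; dsimp only; rw [hk]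
        exact if_pos ⟨hrC, h.trans (le_of_lt hr1)⟩
      rw [hMsucc]
      exact le_trans (le_of_lt hr1) (this ▸ le_max_right _ _)
  have hcofm : ∀ s ∈ C, ∃ n, m n ≤ s := by
    intro s hs
    rcases le_total t₀ s with h | h
    · exact ⟨0, h⟩
    · obtain ⟨ε, hε, hball⟩ := Metric.isOpen_iff.mp hCopen s hs
      obtain ⟨r, hr1, hr2⟩ := exists_rat_btwn (show s - ε < s by linarith)
      have hrC : (r:ℝ) ∈ C := hball (by rw [Metric.mem_ball, Real.dist_eq, abs_sub_lt_iff]; constructor <;> linarith)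
      obtain ⟨k, hk⟩ := hfq r
      refine ⟨k+1, ?_⟩
      have : as k = (r:ℝ) := by
        rw [has]; dsimp only; rw [hk]
        exact if_pos ⟨hrC, (le_of_lt hr2).trans h⟩
      rw [hmsucc]
      exact le_trans (this ▸ min_le_right _ _) (le_of_lt hr2)
  have hzone : ∀ s ∈ C, ∃ n, s ∈ Icc (m n) (M n) := by
    intro s hs
    obtain ⟨n₁, h₁⟩ := hcofn s hs
    obtain ⟨n₂, h₂⟩ := hcofm s hs
    exact ⟨max n₁ n₂, ⟨le_trans (hmanti (le_max_right n₁ n₂)) h₂,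
      le_trans h₁ (hMmono (le_max_left n₁ n₂))⟩⟩
  -- the predicate
  set D : ℕ → (ℝ → V) → Prop := fun n p => IsLift Γ I ξ p ∧
    ∀ s ∈ C ∩ Icc (m n) (M n), DifferentiableAt ℝ p s with hD
  have base : ∃ p : ℝ → V, D 0 p := by
    obtain ⟨δ, hδ, ν, hνl, hνd⟩ := hC t₀ ht₀
    refine ⟨ν, hνl, fun s hs => ?_⟩
    have h1 : s = t₀ := le_antisymm hs.2.2 hs.2.1
    exact hνd s (hCI hs.1) (by rw [h1]; simpa using hδ)
  have step : ∀ (n : ℕ) (p : ℝ → V), D n p →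
      ∃ p' : ℝ → V, D (n+1) p' ∧ ∀ s ∈ Icc (m n) (M n), p' s = p s := by
    intro n p hp
    obtain ⟨pr, hprl, hprfix, hprd⟩ := creep_right hIopen hCI hCconn hC (hmC n) (hMC n)
      (hMC (n+1)) (hmM n) (hMmono (Nat.le_succ n)) hp.1 hp.2
    have hmn1 : m (n+1) ≤ m n := hmanti (Nat.le_succ n)
    obtain ⟨pl, hpll, hplfix, hpld⟩ := creep_left hIopen hCI hCconn hC (hMC (n+1)) (hmC n)
      (hmC (n+1)) ((hmM n).trans (hMmono (Nat.le_succ n))) hmn1 hprl hprd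
    refine ⟨pl, ⟨hpll, hpld⟩, fun s hs => ?_⟩
    rw [hplfix s hs.1, hprfix s hs.2]
  choose F hF1 hF2 using step
  set seq : ∀ n : ℕ, {p : ℝ → V // D n p} := fun n =>
    Nat.rec ⟨base.choose, base.choose_spec⟩ (fun k prev => ⟨F k prev.1 prev.2, hF1 k prev.1 prev.2⟩) n
    with hseq
  have hagree : ∀ n, ∀ s ∈ Icc (m n) (M n), (seq (n+1)).1 s = (seq n).1 s :=
    fun n => hF2 n (seq n).1 (seq n).2
  have hchain : ∀ n k, n ≤ k → ∀ s ∈ Icc (m n) (M n), (seq k).1 s = (seq n).1 s := by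
    intro n k hnk
    induction k with
    | zero =>
      intro s hs
      have : n = 0 := Nat.le_zero.mp hnk
      rw [this]
    | succ j ih =>
      intro s hs
      rcases Nat.lt_or_ge n (j+1) with h | h
      · have hnj : n ≤ j := Nat.lt_succ_iff.mp h
        have hsj : s ∈ Icc (m j) (M j) := ⟨le_trans (hmanti hnj) hs.1, le_trans hs.2 (hMmono hnj)⟩
        rw [hagree j s hsj, ih hnj s hs]
      · have : n = j + 1 := le_antisymm hnk h
        rw [this]
  set lam : ℝ → V := fun s => if hs : s ∈ C then (seq (hzone s hs).choose).1 s else (ξ s).out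
    with hlam
  have hlamC : ∀ n, ∀ s ∈ C ∩ Icc (m n) (M n), lam s = (seq n).1 s := by
    intro n s hs
    rw [hlam]
    dsimp only
    rw [dif_pos hs.1]
    set k := (hzone s hs.1).choose with hk
    have hsk : s ∈ Icc (m k) (M k) := (hzone s hs.1).choose_spec
    rcases le_total n k with h | h
    · rw [hchain n k h s hs.2]
    · rw [hchain k n h s hsk]
  refine ⟨lam, ?_, ?_⟩
  · intro s hs
    rw [hlam]
    dsimp only
    split_ifs with h
    · exact ((seq (hzone s h).choose).2).1 s hs
    · exact Quotient.out_eq _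
  · intro t ht
    obtain ⟨ε, hε, hball⟩ := Metric.isOpen_iff.mp hCopen t ht
    have htl : t - ε/2 ∈ C := hball (by rw [Metric.mem_ball, Real.dist_eq]; rw [abs_sub_lt_iff]; constructor <;> linarith)
    have htr : t + ε/2 ∈ C := hball (by rw [Metric.mem_ball, Real.dist_eq]; rw [abs_sub_lt_iff]; constructor <;> linarith)
    obtain ⟨n₁, h₁⟩ := hcofn (t + ε/2) htr
    obtain ⟨n₂, h₂⟩ := hcofm (t - ε/2) htl
    set n := max n₁ n₂ with hn
    have hzn : Icc (t - ε/2) (t + ε/2) ⊆ Icc (m n) (M n) := by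
      intro y hy
      exact ⟨le_trans (le_trans (hmanti (le_max_right n₁ n₂)) h₂) hy.1,
        le_trans hy.2 (le_trans h₁ (hMmono (le_max_left n₁ n₂)))⟩
    have hdiffn : DifferentiableAt ℝ (seq n).1 t := by
      refine ((seq n).2).2 t ⟨ht, hzn ⟨?_, ?_⟩⟩ <;> linarith
    refine hdiffn.congr_of_eventuallyEq ?_
    filter_upwards [Ioo_mem_nhds (show t - ε/2 < t by linarith) (show t < t + ε/2 by linarith)]
      with y hy
    have hyC : y ∈ C := hCconn.out htl htr ⟨le_of_lt hy.1, le_of_lt hy.2⟩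
    exact hlamC n y ⟨hyC, hzn ⟨le_of_lt hy.1, le_of_lt hy.2⟩⟩

end Setup

universe u v

set_option maxHeartbeats 2000000 in
theorem main : ∀ (n : ℕ) {V : Type u} [NormedAddCommGroup V] [NormedSpace ℝ V]
    [FiniteDimensional ℝ V] (Γ : Type v) [Group Γ] [Finite Γ] [DistribMulAction Γ V]
    [SMulCommClass Γ ℝ V], Nat.card Γ ≤ n →
    ∀ (I : Set ℝ), IsOpen I → I.OrdConnected →
    ∀ ξ : ℝ → Quotient (MulAction.orbitRel Γ V),
    (∀ t ∈ I, ∃ mu : ℝ → V, IsLift Γ I ξ mu ∧ DifferentiableAt ℝ mu t) →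
    ∃ lam : ℝ → V, IsLift Γ I ξ lam ∧ ∀ t ∈ I, DifferentiableAt ℝ lam t := by
  intro n
  induction n using Nat.strong_induction_on with
  | _ n IH =>
  intro V _ _ _ Γ _ _ _ _ hcard I hIopen hIconn ξ hloc
  classical
  set Z : Set ℝ := {t | t ∈ I ∧ ∃ mu : ℝ → V, ∃ vd : V, IsLift Γ I ξ mu ∧ HasDerivAt mu vd t ∧
    (∀ g : Γ, g • mu t = mu t) ∧ (∀ g : Γ, g • vd = vd)} with hZ
  set O : Set ℝ := I \ Z with hO
  have hZI : Z ⊆ I := fun t ht => ht.1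
  have hOI : O ⊆ I := fun t ht => ht.1
  -- Z₀ absorbs in closure:
  have hclosure : ∀ t ∈ I, t ∈ closure (Z \ {t}) → t ∈ Z := by
    intro t ht hcl
    obtain ⟨mu, hmul, hmud⟩ := hloc t ht
    set x := mu t with hx
    set vd := deriv mu t with hvd
    have hmuderiv : HasDerivAt mu vd t := hmud.hasDerivAt
    set Fix : Set V := {y : V | ∀ g : Γ, g • y = y} with hFix
    have hFixClosed : IsClosed Fix := by
      have : Fix = ⋂ g : Γ, {y : V | g • y = y} := by
        ext y; simp [hFix, Set.mem_iInter]
      rw [this]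
      exact isClosed_iInter (fun g => isClosed_eq ((gL Γ (V := V) g).continuous) continuous_id)
    have hFixsub : ∀ y z : V, y ∈ Fix → z ∈ Fix → y - z ∈ Fix := by
      intro y z hy hz g; rw [smul_sub, hy g, hz g]
    have hFixsmul : ∀ (c : ℝ) (y : V), y ∈ Fix → c • y ∈ Fix := by
      intro c y hy g; rw [smul_comm, hy g]
    have hmuZ : ∀ s, s ∈ Z → mu s ∈ Fix := by
      intro s hs
      obtain ⟨hsI, mu', vd', hmul', hd', hfx', hfv'⟩ := hs
      obtain ⟨g', hg'⟩ : ∃ g' : Γ, mu s = g' • mu' s := by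
        have : Quotient.mk (MulAction.orbitRel Γ V) (mu s) = Quotient.mk _ (mu' s) := by
          rw [hmul s hsI, hmul' s hsI]
        obtain ⟨g, hg⟩ := Quotient.eq''.mp this
        exact ⟨g, hg.symm⟩
      have hmus : mu s = mu' s := by rw [hg', hfx' g']
      intro g; rw [hmus]; exact hfx' g
    set L : Filter ℝ := 𝓝[Z \ {t}] t with hL
    have hLne : L.NeBot := mem_closure_iff_nhdsWithin_neBot.mp hcl
    have hLle : L ≤ 𝓝 t := nhdsWithin_le_nhds
    have hxFix : x ∈ Fix := by
      refine hFixClosed.mem_of_tendsto ((hmuderiv.continuousAt.tendsto).mono_left hLle) ?_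
      filter_upwards [self_mem_nhdsWithin] with s hs
      exact hmuZ s hs.1
    have hvFix : vd ∈ Fix := by
      have hslope : Filter.Tendsto (slope mu t) (𝓝[≠] t) (𝓝 vd) :=
        hasDerivAt_iff_tendsto_slope.mp hmuderiv
      have hLle' : L ≤ 𝓝[≠] t := nhdsWithin_mono t (fun s hs => hs.2)
      refine hFixClosed.mem_of_tendsto (hslope.mono_left hLle') ?_
      filter_upwards [self_mem_nhdsWithin] with s hs
      rw [slope_def_module]
      exact hFixsmul _ _ (hFixsub _ _ (hmuZ s hs.1) (hxFix))
    exact ⟨ht, mu, vd, hmul, hmuderiv, fun g => hxFix g, fun g => hvFix g⟩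
  have hOopen : IsOpen O := by
    rw [isOpen_iff_mem_nhds]
    intro t ht
    have htncl : t ∉ closure (Z \ {t}) := fun hcl => ht.2 (hclosure t ht.1 hcl)
    have : (closure (Z \ {t}))ᶜ ∩ I ∈ 𝓝 t :=
      Filter.inter_mem (isClosed_closure.isOpen_compl.mem_nhds htncl) (hIopen.mem_nhds ht.1)
    refine Filter.mem_of_superset this ?_
    rintro y ⟨hy1, hy2⟩
    refine ⟨hy2, fun hyZ => ?_⟩
    by_cases hyt : y = t
    · rw [hyt] at hyZ; exact ht.2 hyZ
    · exact hy1 (subset_closure ⟨hyZ, hyt⟩)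
  -- local solutions on O
  have hlocsol : ∀ t ∈ O, ∃ δ > (0:ℝ), ∃ nu : ℝ → V, IsLift Γ I ξ nu ∧
      ∀ u ∈ I, |u - t| < δ → DifferentiableAt ℝ nu u := by
    intro t ht
    obtain ⟨C, hC1, hC⟩ := exists_gC Γ V
    obtain ⟨mu, hmul, hmud⟩ := hloc t (hOI ht)
    set x := mu t with hx
    set vd := deriv mu t with hvd
    have hmuderiv : HasDerivAt mu vd t := hmud.hasDerivAt
    set H : Subgroup Γ := (MulAction.stabilizer Γ x) ⊓ (MulAction.stabilizer Γ vd) with hH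
    have hHfix : ∀ g : Γ, g ∈ H → g • x = x ∧ g • vd = vd := by
      intro g hg
      rw [hH, Subgroup.mem_inf] at hg
      exact ⟨hg.1, hg.2⟩
    have hHne : H ≠ ⊤ := by
      intro hcon
      refine ht.2 ⟨hOI ht, mu, vd, hmul, hmuderiv, ?_, ?_⟩
      · intro g; exact (hHfix g (by rw [hcon]; exact Subgroup.mem_top g)).1
      · intro g; exact (hHfix g (by rw [hcon]; exact Subgroup.mem_top g)).2
    have hcardH : Nat.card ↥H < Nat.card Γ := by
      have h1 : (H : Set Γ) ⊂ Set.univ := by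
        rw [Set.ssubset_univ_iff]
        intro hcon
        exact hHne ((Subgroup.coe_eq_univ).mp hcon)
      have h2 : Nat.card ↥H = (H : Set Γ).ncard := (Nat.card_coe_set_eq _)
      rw [h2, ← Set.ncard_univ Γ]
      exact Set.ncard_lt_ncard h1 (Set.toFinite _)
    have perg : ∀ g : Γ, g ∉ H → ∃ e : ℝ, 0 < e ∧ ∃ d : ℝ, 0 < d ∧ ∀ τ : ℝ, |τ| < d →
        3*e*|τ| ≤ ‖(g • x - x) + τ • (g • vd - vd)‖ := by
      intro g hg
      by_cases ha : g • x - x = 0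
      · have hw : g • vd - vd ≠ 0 := by
          intro hcon
          apply hg
          rw [hH, Subgroup.mem_inf]
          exact ⟨MulAction.mem_stabilizer_iff.mpr (by rwa [sub_eq_zero] at ha),
            MulAction.mem_stabilizer_iff.mpr (by rwa [sub_eq_zero] at hcon)⟩
        have hwpos : 0 < ‖g • vd - vd‖ := norm_pos_iff.mpr hw
        refine ⟨‖g • vd - vd‖/3, by positivity, 1, one_pos, fun τ hτ => ?_⟩
        rw [ha, zero_add, norm_smul, Real.norm_eq_abs]
        have : 3*(‖g • vd - vd‖/3)*|τ| = |τ| * ‖g • vd - vd‖ := by ring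
        rw [this]
      · have hapos : 0 < ‖g • x - x‖ := norm_pos_iff.mpr ha
        refine ⟨1, one_pos, ‖g • x - x‖/(‖g • vd - vd‖+3), by positivity, fun τ hτ => ?_⟩
        have h1 : ‖g • x - x‖ ≤ ‖(g • x - x) + τ • (g • vd - vd)‖ + ‖τ • (g • vd - vd)‖ := by
          rw [← add_sub_cancel_right (g • x - x) (τ • (g • vd - vd))]
          nth_rewrite 2 [add_sub_cancel_right]
          exact norm_sub_le _ _
        rw [norm_smul, Real.norm_eq_abs] at h1
        have h2 : |τ| * (‖g • vd - vd‖ + 3) < ‖g • x - x‖ :=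
          (lt_div_iff₀ (by positivity)).mp hτ
        nlinarith [abs_nonneg τ]
    have hfin : Fintype Γ := Fintype.ofFinite Γ
    set eg : Γ → ℝ := fun g => if h : g ∉ H then (perg g h).choose else 1 with heg
    set dg : Γ → ℝ := fun g => if h : g ∉ H then (perg g h).choose_spec.2.choose else 1 with hdg
    have hegpos : ∀ g, 0 < eg g := by
      intro g; rw [heg]; dsimp only
      by_cases h : g ∉ H
      · rw [dif_pos h]; exact (perg g h).choose_spec.1
      · rw [dif_neg h]; exact one_pos
    have hdgpos : ∀ g, 0 < dg g := by
      intro g; rw [hdg]; dsimp only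
      by_cases h : g ∉ H
      · rw [dif_pos h]; exact (perg g h).choose_spec.2.choose_spec.1
      · rw [dif_neg h]; exact one_pos
    have hegd : ∀ (g : Γ), g ∉ H → ∀ τ : ℝ, |τ| < dg g →
        3*(eg g)*|τ| ≤ ‖(g • x - x) + τ • (g • vd - vd)‖ := by
      intro g h τ hτ
      rw [hdg] at hτ; dsimp only at hτ; rw [dif_pos h] at hτ
      rw [heg]; dsimp only; rw [dif_pos h]
      exact (perg g h).choose_spec.2.choose_spec.2 τ hτ
    set S : Finset Γ := Finset.univ.filter (fun g => g ∉ H) with hS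
    have hSne : S.Nonempty := by
      obtain ⟨g, hg⟩ : ∃ g : Γ, g ∉ H := by
        by_contra hcon; push_neg at hcon
        exact hHne ((Subgroup.eq_top_iff' H).mpr hcon)
      exact ⟨g, by rw [hS]; exact Finset.mem_filter.mpr ⟨Finset.mem_univ g, hg⟩⟩
    have hmemS : ∀ g : Γ, g ∉ H → g ∈ S := by
      intro g hg; rw [hS]; exact Finset.mem_filter.mpr ⟨Finset.mem_univ g, hg⟩
    set ε₀ := S.inf' hSne eg with hε₀
    set δ₀ := S.inf' hSne dg with hδ₀
    have hε₀pos : 0 < ε₀ := (Finset.lt_inf'_iff hSne).mpr (fun g _ => hegpos g)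
    have hδ₀pos : 0 < δ₀ := (Finset.lt_inf'_iff hSne).mpr (fun g _ => hdgpos g)
    have hlo : (fun s => mu s - x - (s - t) • vd) =o[𝓝 t] (fun s : ℝ => s - t) := by
      have := hasDerivAt_iff_isLittleO.mp hmuderiv
      simpa using this
    have hev := hlo.def (show (0:ℝ) < ε₀/(2*C) by positivity)
    rw [Metric.eventually_nhds_iff] at hev
    obtain ⟨δ₁, hδ₁, hball⟩ := hev
    set δ := min δ₀ δ₁ with hδdef
    have hδpos : 0 < δ := lt_min hδ₀pos hδ₁
    set J := Ioo (t - δ) (t + δ) ∩ I with hJ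
    have hJopen : IsOpen J := (isOpen_Ioo).inter hIopen
    have hJconn : J.OrdConnected := (ordConnected_Ioo).inter hIconn
    have hJI : J ⊆ I := inter_subset_right
    have htJ : t ∈ J := ⟨⟨by linarith, by linarith⟩, hOI ht⟩
    have hrbound : ∀ s ∈ J, ‖mu s - x - (s - t) • vd‖ ≤ ε₀/(2*C) * |s - t| := by
      intro s hsJ
      have h1 : |s - t| < δ₁ := by
        have h2 : |s - t| < δ := abs_sub_lt_iff.mpr ⟨by linarith [hsJ.1.2], by linarith [hsJ.1.1]⟩
        exact lt_of_lt_of_le h2 (min_le_right _ _)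
      have := hball (show dist s t < δ₁ by rwa [Real.dist_eq])
      rwa [Real.norm_eq_abs (s - t)] at this
    have excl : ∀ s ∈ J, s ≠ t → ∀ g : Γ,
        ‖g • mu s - x - (s - t) • vd‖ < ε₀ * |s - t| → g ∈ H := by
      intro s hsJ hst g hgs
      by_contra hgH
      have habs : |s - t| < δ := abs_sub_lt_iff.mpr ⟨by linarith [hsJ.1.2], by linarith [hsJ.1.1]⟩
      have hgb := hegd g hgH (s - t)
        (lt_of_lt_of_le habs ((min_le_left _ _).trans (Finset.inf'_le dg (hmemS g hgH))))
      have hge : ε₀ ≤ eg g := Finset.inf'_le eg (hmemS g hgH)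
      have hdecomp : (g • x - x) + (s - t) • (g • vd - vd) =
          (g • mu s - x - (s - t) • vd) - g • (mu s - x - (s - t) • vd) := by
        simp only [smul_sub]
        rw [smul_comm g (s-t) vd]
        abel
      have hnorm1 : ‖(g • x - x) + (s - t) • (g • vd - vd)‖ ≤
          ‖g • mu s - x - (s - t) • vd‖ + ‖g • (mu s - x - (s - t) • vd)‖ := by
        rw [hdecomp]; exact norm_sub_le _ _
      have hnorm2 : ‖g • (mu s - x - (s - t) • vd)‖ ≤ C * (ε₀/(2*C) * |s - t|) := by
        exact le_trans (hC g _) (by nlinarith [hrbound s hsJ, norm_nonneg (mu s - x - (s - t) • vd)])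
      have hCsimp : C * (ε₀/(2*C) * |s - t|) = ε₀/2 * |s - t| := by
        field_simp
      rw [hCsimp] at hnorm2
      have habs0 : 0 ≤ |s - t| := abs_nonneg _
      nlinarith [hgb, hge, hnorm1, hnorm2, hgs]
    set ξH : ℝ → Quotient (MulAction.orbitRel ↥H V) := fun s => Quotient.mk _ (mu s) with hξH
    have hlocH : ∀ s' ∈ J, ∃ nuH : ℝ → V, IsLift ↥H J ξH nuH ∧ DifferentiableAt ℝ nuH s' := by
      intro s' hs'
      by_cases hs't : s' = t
      · exact ⟨mu, fun s _ => rfl, by rw [hs't]; exact hmud⟩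
      · obtain ⟨ν, hνl, hνd⟩ := hloc s' (hJI hs')
        obtain ⟨g₀, hg₀⟩ : ∃ g₀ : Γ, mu s' = g₀ • ν s' := hmul.exists_smul_eq hνl (hJI hs')
        set φ : ℝ → V := fun s => g₀ • ν s with hφ
        have hφl : IsLift Γ I ξ φ := smul_lift hνl g₀
        have hφd : DifferentiableAt ℝ φ s' := (gL Γ (V := V) g₀).differentiableAt.comp s' hνd
        have hφs' : φ s' = mu s' := hg₀.symm
        have hc1 : ContinuousAt (fun s : ℝ => φ s - x - (s - t) • vd) s' :=
          (hφd.continuousAt.sub continuousAt_const).sub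
            ((continuousAt_id.sub continuousAt_const).smul continuousAt_const)
        have hc : ContinuousAt (fun s : ℝ => ‖φ s - x - (s - t) • vd‖ - ε₀ * |s - t|) s' :=
          hc1.norm.sub (continuousAt_const.mul (continuousAt_id.sub continuousAt_const).abs)
        have hval : ‖φ s' - x - (s' - t) • vd‖ - ε₀ * |s' - t| < 0 := by
          rw [hφs']
          have h1 := hrbound s' hs'
          have h2 : 0 < |s' - t| := abs_pos.mpr (sub_ne_zero.mpr hs't)
          have h3 : ε₀/(2*C) ≤ ε₀/2 := by
            gcongr
            · linarith
          nlinarith [hε₀pos]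
        have hev2 : ∀ᶠ s in 𝓝 s', ‖φ s - x - (s - t) • vd‖ - ε₀ * |s - t| < 0 :=
          hc.tendsto.eventually_lt_const hval
        have hev3 : ∀ᶠ s in 𝓝 s',
            s ∈ J → Quotient.mk (MulAction.orbitRel ↥H V) (φ s) = ξH s := by
          filter_upwards [hev2, isOpen_ne.mem_nhds hs't] with s h1 h2 hsJ
          obtain ⟨g₁, hg₁⟩ : ∃ g₁ : Γ, φ s = g₁ • mu s := hφl.exists_smul_eq hmul (hJI hsJ)
          have hg₁H : g₁ ∈ H := by
            refine excl s hsJ h2 g₁ ?_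
            rw [← hg₁]
            linarith [h1]
          rw [hξH]
          dsimp only
          rw [hg₁]
          exact Quotient.sound' ⟨(⟨g₁, hg₁H⟩ : ↥H), rfl⟩
        rw [Metric.eventually_nhds_iff] at hev3
        obtain ⟨η, hη, hη3⟩ := hev3
        refine ⟨fun s => if dist s s' < η then φ s else mu s, ?_, ?_⟩
        · intro s hsJ
          dsimp only
          split_ifs with h
          · exact hη3 h hsJ
          · rfl
        · refine hφd.congr_of_eventuallyEq ?_
          filter_upwards [Metric.ball_mem_nhds s' hη] with y hy
          rw [if_pos (Metric.mem_ball.mp hy)]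
    obtain ⟨lamH, hlamHl, hlamHd⟩ := IH (Nat.card ↥H) (lt_of_lt_of_le hcardH hcard) ↥H
      le_rfl J hJopen hJconn ξH hlocH
    obtain ⟨δ₂, hδ₂, hball₂⟩ := Metric.isOpen_iff.mp hJopen t htJ
    refine ⟨δ₂, hδ₂, fun s => if s ∈ J then lamH s else (ξ s).out, ?_, ?_⟩
    · intro s hsI
      dsimp only
      split_ifs with h
      · have h1 : Quotient.mk (MulAction.orbitRel ↥H V) (lamH s) = Quotient.mk _ (mu s) := by
          have := hlamHl s h
          rw [hξH] at this
          exact this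
        obtain ⟨hh, hhh⟩ := Quotient.eq''.mp h1
        have h2 : Quotient.mk (MulAction.orbitRel Γ V) (lamH s) = Quotient.mk _ (mu s) := by
          rw [← hhh]
          exact Quotient.sound' ⟨(hh : Γ), rfl⟩
        rw [h2]
        exact hmul s hsI
      · exact Quotient.out_eq _
    · intro u huI hu
      have huJ : u ∈ J := hball₂ (by rw [Metric.mem_ball, Real.dist_eq]; exact hu)
      refine (hlamHd u huJ).congr_of_eventuallyEq ?_
      filter_upwards [hJopen.mem_nhds huJ] with y hy
      rw [if_pos hy]
  -- assemble
  set lamFor : Set ℝ → (ℝ → V) := fun C =>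
    if h : ∃ lam : ℝ → V, IsLift Γ I ξ lam ∧ ∀ t ∈ C, DifferentiableAt ℝ lam t
    then h.choose else fun s => (ξ s).out with hlamFor
  have hcomp : ∀ t ∈ O, ∃ lam : ℝ → V, IsLift Γ I ξ lam ∧
      ∀ s ∈ connectedComponentIn O t, DifferentiableAt ℝ lam s := by
    intro t ht
    refine glue hIopen ?_ ?_ ?_ ?_
    · exact (connectedComponentIn_subset O t).trans hOI
    · exact (isPreconnected_connectedComponentIn).ordConnected
    · exact hOopen.connectedComponentIn
    · intro s hs
      exact hlocsol s (connectedComponentIn_subset O t hs)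
  set lam : ℝ → V := fun s =>
    if hs : s ∈ O then lamFor (connectedComponentIn O s) s else (ξ s).out with hlam
  have hlamFor_comp : ∀ t ∈ O, IsLift Γ I ξ (lamFor (connectedComponentIn O t)) ∧
      ∀ s ∈ connectedComponentIn O t, DifferentiableAt ℝ (lamFor (connectedComponentIn O t)) s := by
    intro t ht
    rw [hlamFor]
    dsimp only
    rw [dif_pos (hcomp t ht)]
    exact (hcomp t ht).choose_spec
  have hlamlift : IsLift Γ I ξ lam := by
    intro s hs
    rw [hlam]
    dsimp only
    split_ifs with h
    · exact (hlamFor_comp s h).1 s hs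
    · exact Quotient.out_eq _
  refine ⟨lam, hlamlift, ?_⟩
  intro t ht
  by_cases htO : t ∈ O
  · have hCt := hlamFor_comp t htO
    have hmem : t ∈ connectedComponentIn O t := mem_connectedComponentIn htO
    refine (hCt.2 t hmem).congr_of_eventuallyEq ?_
    filter_upwards [(hOopen.connectedComponentIn).mem_nhds hmem] with y hy
    have hyO : y ∈ O := connectedComponentIn_subset O t hy
    have hcc : connectedComponentIn O y = connectedComponentIn O t :=
      (connectedComponentIn_eq hy).symm
    rw [hlam]
    dsimp only
    rw [dif_pos hyO, hcc]
  · have htZ : t ∈ Z := by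
      by_contra hcon
      exact htO ⟨ht, hcon⟩
    obtain ⟨htI, mu, vd, hmul, hmud, hfx, hfv⟩ := htZ
    exact (absorbing hIopen htI hmul hlamlift hmud hfx hfv).differentiableAt

/-- Let `Γ` be a finite group acting linearly on a finite-dimensional real normed vector space
`V`, and `π : V → V/Γ` the projection onto the orbit space. Let `I` be an open interval and
`ξ : ℝ → V/Γ`. If for every `t ∈ I` there exists a lift of `ξ` on `I` which is differentiable
at `t`, then there exists a single lift of `ξ` on `I` which is differentiable at every point
of `I`. -/
theorem stmt14 {V : Type*} [NormedAddCommGroup V] [NormedSpace ℝ V] [FiniteDimensional ℝ V]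
    {Γ : Type*} [Group Γ] [Finite Γ] [DistribMulAction Γ V] [SMulCommClass Γ ℝ V]
    (I : Set ℝ) (hIopen : IsOpen I) (hIconn : I.OrdConnected)
    (ξ : ℝ → Quotient (MulAction.orbitRel Γ V))
    (hloc : ∀ t ∈ I, ∃ mu : ℝ → V,
      (∀ s ∈ I, Quotient.mk (MulAction.orbitRel Γ V) (mu s) = ξ s) ∧
      DifferentiableAt ℝ mu t) :
    ∃ lam : ℝ → V,
      (∀ s ∈ I, Quotient.mk (MulAction.orbitRel Γ V) (lam s) = ξ s) ∧
      ∀ t ∈ I, DifferentiableAt ℝ lam t := by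
  obtain ⟨lam, h1, h2⟩ := main (Nat.card Γ) Γ le_rfl I hIopen hIconn ξ
    (fun t ht => by
      obtain ⟨mu, hm1, hm2⟩ := hloc t ht
      exact ⟨mu, hm1, hm2⟩)
  exact ⟨lam, h1, h2⟩
end

section
/- Let Γ act on V × V diagonally by g·(x, v) = (g·x, g·v), and let Dπ : V × V → (V × V)/Γ be the canonical projection onto the orbit space with the quotient topology. Let I be an open interval and λ : ℝ → V a function differentiable at every point of I. If the map t ↦ Dπ(λ(t), λ′(t)) is continuous on I, then the derivative λ′ is continuous on I; that is, λ is continuously differentiable on I. -/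
open Filter Metric Set Topology

/-- A continuous linear functional nonvanishing on a given finite set of nonzero vectors. -/
lemma exists_clm_ne_zero_on_finset {V : Type*} [NormedAddCommGroup V] [NormedSpace ℝ V] :
    ∀ T : Finset V, (0 : V) ∉ T → ∃ φ : V →L[ℝ] ℝ, ∀ v ∈ T, φ v ≠ 0 := by
  classical
  intro T
  induction T using Finset.induction_on with
  | empty => exact fun _ => ⟨0, by simp⟩
  | @insert v T hvT ih =>
    intro h0
    obtain ⟨φ, hφ⟩ := ih (fun h => h0 (Finset.mem_insert_of_mem h))
    have hv : v ≠ 0 := fun h => h0 (by rw [← h]; exact Finset.mem_insert_self v T)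
    by_cases hφv : φ v ≠ 0
    · exact ⟨φ, fun w hw => by
        rcases Finset.mem_insert.1 hw with rfl | hw
        · exact hφv
        · exact hφ w hw⟩
    · push_neg at hφv
      obtain ⟨ψ, hψ⟩ := SeparatingDual.exists_ne_zero (R := ℝ) hv
      obtain ⟨c, hc⟩ := Infinite.exists_notMem_finset
        (insert (0 : ℝ) (T.image fun w => -(φ w) / ψ w))
      have hc0 : c ≠ 0 := fun h => hc (by rw [h]; exact Finset.mem_insert_self 0 _)
      refine ⟨φ + c • ψ, fun w hw => ?_⟩
      have happ : (φ + c • ψ) w = φ w + c * ψ w := by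
        simp [ContinuousLinearMap.add_apply, ContinuousLinearMap.smul_apply, smul_eq_mul]
      rw [happ]
      rcases Finset.mem_insert.1 hw with rfl | hw
      · rw [hφv, zero_add]
        exact mul_ne_zero hc0 hψ
      · by_cases hψw : ψ w = 0
        · simpa [hψw] using hφ w hw
        · intro h
          apply hc
          apply Finset.mem_insert_of_mem
          refine Finset.mem_image.2 ⟨w, hw, ?_⟩
          field_simp
          linarith [h]

/-- Let `Γ` be a finite group acting linearly on a finite-dimensional real normed vector space
`V`, acting diagonally on `V × V`, with `Dπ : V × V → (V × V)/Γ` the projection onto the orbit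
space (with its quotient topology). Let `I` be an open interval and `λ : ℝ → V` differentiable
at every point of `I`. If `t ↦ Dπ (λ t, λ' t)` is continuous on `I`, then `λ'` is continuous
on `I`, i.e. `λ` is continuously differentiable on `I`. -/
theorem stmt15 {V : Type*} [NormedAddCommGroup V] [NormedSpace ℝ V] [FiniteDimensional ℝ V]
    {Γ : Type*} [Group Γ] [Finite Γ] [DistribMulAction Γ V] [SMulCommClass Γ ℝ V]
    (I : Set ℝ) (hIopen : IsOpen I) (hIconn : I.OrdConnected)
    (lam : ℝ → V) (hdiff : ∀ t ∈ I, DifferentiableAt ℝ lam t)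
    (hcont : ContinuousOn
      (fun t => Quotient.mk (MulAction.orbitRel Γ (V × V)) (lam t, deriv lam t)) I) :
    ContinuousOn (deriv lam) I := by
  classical
  have : Fintype Γ := Fintype.ofFinite Γ
  have hsmul_cont : ∀ g : Γ, Continuous (fun x : V × V => g • x) := fun g =>
    (DistribMulAction.toLinearMap ℝ (V × V) g).continuous_of_finiteDimensional
  intro t₀ ht₀
  apply ContinuousAt.continuousWithinAt
  set v₀ := deriv lam t₀ with hv₀
  set p : V × V := (lam t₀, v₀) with hp
  -- Step A: the key approximation property
  have key : ∀ ε > 0, ∀ᶠ t in 𝓝 t₀,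
      ∃ g : Γ, g • lam t₀ = lam t₀ ∧ dist (deriv lam t) (g • v₀) < ε := by
    intro ε hε
    set d : ℝ := Finset.univ.inf' Finset.univ_nonempty
      (fun g : Γ => if g • lam t₀ = lam t₀ then 1 else dist (lam t₀) (g • lam t₀)) with hd
    have hdpos : 0 < d := by
      rw [hd, Finset.lt_inf'_iff]
      intro g _
      by_cases hg : g • lam t₀ = lam t₀
      · simp [hg]
      · simp only [if_neg hg]
        exact dist_pos.2 (fun h => hg h.symm)
    have hdle : ∀ g : Γ, g • lam t₀ ≠ lam t₀ → d ≤ dist (lam t₀) (g • lam t₀) := by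
      intro g hg
      have := Finset.inf'_le (b := g)
        (fun g : Γ => if g • lam t₀ = lam t₀ then 1 else dist (lam t₀) (g • lam t₀))
        (Finset.mem_univ g)
      rwa [if_neg hg] at this
    set ε' := min ε (d / 3) with hε'
    have hε'pos : 0 < ε' := lt_min hε (by linarith)
    set U : Set (V × V) := ⋃ g : Γ, Metric.ball (g • p) ε' with hU
    set W : Set (V × V) := ⋂ g : Γ, (fun x : V × V => g • x) ⁻¹' U with hW
    have hUopen : IsOpen U := isOpen_iUnion fun g => Metric.isOpen_ball
    have hWopen : IsOpen W := isOpen_iInter_of_finite fun g => hUopen.preimage (hsmul_cont g)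
    have hpW : p ∈ W := by
      refine Set.mem_iInter.2 fun g => ?_
      exact Set.mem_iUnion.2 ⟨g, Metric.mem_ball_self hε'pos⟩
    have hWinv : ∀ (g : Γ) (x : V × V), x ∈ W → g • x ∈ W := by
      intro g x hx
      refine Set.mem_iInter.2 fun h => ?_
      have := Set.mem_iInter.1 hx (h * g)
      simpa [mul_smul] using this
    have hsat : Quotient.mk (MulAction.orbitRel Γ (V × V)) ⁻¹'
        (Quotient.mk (MulAction.orbitRel Γ (V × V)) '' W) = W := by
      ext x
      constructor
      · rintro ⟨w, hwW, hw⟩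
        obtain ⟨g, hg⟩ : w ∈ MulAction.orbit Γ x := Quotient.exact hw
        have : x = g⁻¹ • w := by rw [← hg, inv_smul_smul]
        rw [this]
        exact hWinv g⁻¹ w hwW
      · intro hx
        exact ⟨x, hx, rfl⟩
    have hoimage : IsOpen (Quotient.mk (MulAction.orbitRel Γ (V × V)) '' W) := by
      letI : Setoid (V × V) := MulAction.orbitRel Γ (V × V)
      have hqm : IsQuotientMap (Quotient.mk (MulAction.orbitRel Γ (V × V))) :=
        isQuotientMap_quotient_mk'
      rw [← hqm.isOpen_preimage, hsat]
      exact hWopen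
    have hev1 : ∀ᶠ t in 𝓝 t₀, (lam t, deriv lam t) ∈ W := by
      have h2 := hcont t₀ ht₀
      rw [ContinuousWithinAt, hIopen.nhdsWithin_eq ht₀] at h2
      have h1 : Quotient.mk (MulAction.orbitRel Γ (V × V)) '' W ∈
          𝓝 (Quotient.mk (MulAction.orbitRel Γ (V × V)) p) :=
        hoimage.mem_nhds ⟨p, hpW, rfl⟩
      have h3 := h2.eventually_mem h1
      refine h3.mono fun t ht => ?_
      have ht' : (lam t, deriv lam t) ∈ Quotient.mk (MulAction.orbitRel Γ (V × V)) ⁻¹'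
          (Quotient.mk (MulAction.orbitRel Γ (V × V)) '' W) := ht
      rwa [hsat] at ht'
    have hev2 : ∀ᶠ t in 𝓝 t₀, dist (lam t) (lam t₀) < ε' :=
      Metric.tendsto_nhds.1 (hdiff t₀ ht₀).continuousAt ε' hε'pos
    filter_upwards [hev1, hev2] with t h1 h2
    have hxU : (lam t, deriv lam t) ∈ U := by
      have := Set.mem_iInter.1 h1 (1 : Γ)
      simpa using this
    obtain ⟨g, hg⟩ := Set.mem_iUnion.1 hxU
    rw [Metric.mem_ball] at hg
    have hgp : g • p = (g • lam t₀, g • v₀) := rfl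
    rw [hgp, Prod.dist_eq] at hg
    have hdist1 : dist (lam t) (g • lam t₀) < ε' :=
      lt_of_le_of_lt (le_max_left _ _) hg
    have hdist2 : dist (deriv lam t) (g • v₀) < ε' :=
      lt_of_le_of_lt (le_max_right _ _) hg
    have hgfix : g • lam t₀ = lam t₀ := by
      by_contra hne
      have h4 := hdle g hne
      have h5 : dist (lam t₀) (g • lam t₀) ≤ dist (lam t₀) (lam t) + dist (lam t) (g • lam t₀) :=
        dist_triangle _ _ _
      rw [dist_comm (lam t₀) (lam t)] at h5
      have h6 : ε' ≤ d / 3 := min_le_right _ _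
      linarith
    exact ⟨g, hgfix, lt_of_lt_of_le hdist2 (min_le_left _ _)⟩
  -- the finite set S of possible limit values
  set S : Finset V := Finset.univ.image
    (fun g : Γ => if g • lam t₀ = lam t₀ then g • v₀ else v₀) with hS
  have hv₀S : v₀ ∈ S := by
    refine Finset.mem_image.2 ⟨1, Finset.mem_univ 1, ?_⟩
    rw [if_pos (one_smul Γ (lam t₀)), one_smul]
  have key' : ∀ ε > 0, ∀ᶠ t in 𝓝 t₀, ∃ w ∈ S, dist (deriv lam t) w < ε := by
    intro ε hε
    refine (key ε hε).mono fun t ⟨g, hg, hd⟩ => ?_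
    exact ⟨g • v₀, Finset.mem_image.2 ⟨g, Finset.mem_univ g, if_pos hg⟩, hd⟩
  -- a separating functional
  obtain ⟨φ, hφ⟩ := exists_clm_ne_zero_on_finset
    ((S.image (fun w => w - v₀)).erase 0) (Finset.notMem_erase 0 _)
  have hsep : ∀ w ∈ S, w ≠ v₀ → φ w ≠ φ v₀ := by
    intro w hw hne h
    refine hφ (w - v₀) (Finset.mem_erase.2 ⟨sub_ne_zero.2 hne,
      Finset.mem_image.2 ⟨w, hw, rfl⟩⟩) ?_
    rw [map_sub, h, sub_self]
  -- target continuity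
  rw [ContinuousAt, Metric.tendsto_nhds]
  intro ε₀ hε₀
  by_cases hS' : S.erase v₀ = ∅
  · refine (key' ε₀ hε₀).mono fun t ⟨w, hwS, hwd⟩ => ?_
    have hw : w = v₀ := by
      by_contra hne
      have : w ∈ S.erase v₀ := Finset.mem_erase.2 ⟨hne, hwS⟩
      rw [hS'] at this
      exact absurd this (Finset.notMem_empty w)
    rwa [hw] at hwd
  · have hne : (S.erase v₀).Nonempty := Finset.nonempty_iff_ne_empty.2 hS'
    set m : ℝ := (S.erase v₀).inf' hne (fun w => |φ w - φ v₀|) with hm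
    have hmpos : 0 < m := by
      rw [hm, Finset.lt_inf'_iff]
      intro w hw
      obtain ⟨hwne, hwS⟩ := Finset.mem_erase.1 hw
      exact abs_pos.2 (sub_ne_zero.2 (hsep w hwS hwne))
    have hmle : ∀ w ∈ S, w ≠ v₀ → m ≤ |φ w - φ v₀| := fun w hwS hwne =>
      Finset.inf'_le _ (Finset.mem_erase.2 ⟨hwne, hwS⟩)
    set ε := min ε₀ (m / (4 * (‖φ‖ + 1))) with hε
    have hεpos : 0 < ε := lt_min hε₀ (by positivity)
    have hφbound : ∀ x w : V, dist x w < ε → |φ x - φ w| < m / 4 := by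
      intro x w hxw
      have h1 : |φ x - φ w| ≤ ‖φ‖ * dist x w := by
        rw [← map_sub]
        calc |φ (x - w)| = ‖φ (x - w)‖ := (Real.norm_eq_abs _).symm
          _ ≤ ‖φ‖ * ‖x - w‖ := φ.le_opNorm _
          _ = ‖φ‖ * dist x w := by rw [dist_eq_norm]
      have h2 : ‖φ‖ * dist x w ≤ ‖φ‖ * ε :=
        mul_le_mul_of_nonneg_left hxw.le (norm_nonneg _)
      have h3 : ‖φ‖ * ε ≤ ‖φ‖ * (m / (4 * (‖φ‖ + 1))) :=
        mul_le_mul_of_nonneg_left (min_le_right _ _) (norm_nonneg _)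
      have h4 : ‖φ‖ * (m / (4 * (‖φ‖ + 1))) < m / 4 := by
        rw [mul_div_assoc', div_lt_div_iff₀ (by positivity) (by norm_num)]
        nlinarith [norm_nonneg φ, hmpos]
      linarith
    -- find an interval J around t₀ where everything holds
    have hE : ({t | ∃ w ∈ S, dist (deriv lam t) w < ε} ∩ I) ∈ 𝓝 t₀ :=
      Filter.inter_mem (key' ε hεpos) (hIopen.mem_nhds ht₀)
    obtain ⟨δ, hδpos, hδ⟩ := Metric.mem_nhds_iff.1 hE
    set J := Metric.ball t₀ δ with hJ
    have hJconn : J.OrdConnected := (convex_ball t₀ δ).ordConnected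
    have ht₀J : t₀ ∈ J := Metric.mem_ball_self hδpos
    have hJI : J ⊆ I := fun t ht => (hδ ht).2
    have hbound : ∀ t ∈ J, ∃ w ∈ S, |φ (deriv lam t) - φ w| < m / 4 ∧ dist (deriv lam t) w < ε := by
      intro t ht
      obtain ⟨w, hwS, hwd⟩ := (hδ ht).1
      exact ⟨w, hwS, hφbound _ _ hwd, hwd⟩
    -- Darboux
    have hDarboux : Set.OrdConnected ((fun t => φ (deriv lam t)) '' J) := by
      apply hJconn.image_hasDerivWithinAt (f := fun t => φ (lam t))
      intro x hx
      exact ((φ.hasFDerivAt).comp_hasDerivAt x (hdiff x (hJI hx)).hasDerivAt).hasDerivWithinAt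
    have havoid : ∀ t ∈ J, φ (deriv lam t) ≠ φ v₀ + m / 2 ∧ φ (deriv lam t) ≠ φ v₀ - m / 2 := by
      intro t ht
      obtain ⟨w, hwS, hw4, -⟩ := hbound t ht
      obtain ⟨h1, h2⟩ := abs_lt.1 hw4
      rcases eq_or_ne w v₀ with rfl | hne
      · constructor <;> intro heq <;> rw [heq] at h1 h2 <;> linarith
      · rcases le_abs.1 (hmle w hwS hne) with h3 | h3 <;>
          constructor <;> intro heq <;> rw [heq] at h1 h2 <;> linarith
    have hin : ∀ t ∈ J, |φ (deriv lam t) - φ v₀| < m / 2 := by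
      intro t ht
      rw [abs_sub_lt_iff]
      constructor
      · by_contra hge
        push_neg at hge
        have hc : φ v₀ + m / 2 ∈ (fun t => φ (deriv lam t)) '' J := by
          apply hDarboux.out (Set.mem_image_of_mem _ ht₀J) (Set.mem_image_of_mem _ ht)
          constructor
          · linarith
          · linarith
        obtain ⟨s, hsJ, hs⟩ := hc
        exact (havoid s hsJ).1 hs
      · by_contra hge
        push_neg at hge
        have hc : φ v₀ - m / 2 ∈ (fun t => φ (deriv lam t)) '' J := by
          apply hDarboux.out (Set.mem_image_of_mem _ ht) (Set.mem_image_of_mem _ ht₀J)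
          constructor
          · linarith
          · linarith
        obtain ⟨s, hsJ, hs⟩ := hc
        exact (havoid s hsJ).2 hs
    refine Filter.Eventually.mono (Metric.ball_mem_nhds t₀ hδpos) fun t ht => ?_
    obtain ⟨w, hwS, hw4, hwd⟩ := hbound t ht
    have hweq : w = v₀ := by
      by_contra hne
      obtain ⟨h1, h2⟩ := abs_lt.1 hw4
      obtain ⟨h3, h4⟩ := abs_lt.1 (hin t ht)
      rcases le_abs.1 (hmle w hwS hne) with h5 | h5 <;> linarith
    rw [hweq] at hwd
    exact lt_of_lt_of_le hwd (min_le_left _ _)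
end

section
/- Let Ω be a measurable space and let λ, μ : Ω → V be measurable functions (V with its Borel σ-algebra) such that for every ω ∈ Ω there exists g ∈ Γ with λ(ω) = g·μ(ω). Then there exists a measurable function γ : Ω → Γ (Γ with the discrete measurable structure) such that λ(ω) = γ(ω)·μ(ω) for every ω ∈ Ω. -/
/-- Let `Γ` be a finite group acting linearly on a finite-dimensional real normed vector space
`V` (with its Borel σ-algebra), `Ω` a measurable space, and `λ, μ : Ω → V` measurable with
`λ ω` in the `Γ`-orbit of `μ ω` for every `ω`. Then there is a measurable `γ : Ω → Γ` (with
the discrete measurable structure on `Γ`) such that `λ ω = γ ω • μ ω` for every `ω`. -/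
theorem stmt16 {V : Type*} [NormedAddCommGroup V] [NormedSpace ℝ V] [FiniteDimensional ℝ V]
    [MeasurableSpace V] [BorelSpace V]
    {Γ : Type*} [Group Γ] [Finite Γ] [DistribMulAction Γ V] [SMulCommClass Γ ℝ V]
    [MeasurableSpace Γ] [DiscreteMeasurableSpace Γ]
    {Ω : Type*} [MeasurableSpace Ω]
    (lam mu : Ω → V) (hlam : Measurable lam) (hmu : Measurable mu)
    (hlift : ∀ ω : Ω, ∃ g : Γ, lam ω = g • mu ω) :
    ∃ γ : Ω → Γ, Measurable γ ∧ ∀ ω : Ω, lam ω = γ ω • mu ω := by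
  classical
  cases nonempty_fintype Γ
  set n := Fintype.card Γ with hn
  obtain e := (Fintype.equivFin Γ)
  -- measurable equality sets
  have hmeas : ∀ g : Γ, MeasurableSet {ω : Ω | lam ω = g • mu ω} := by
    intro g
    have hcont : Continuous (fun x : V => g • x) :=
      (DistribMulAction.toLinearMap ℝ V g).continuous_of_finiteDimensional
    exact measurableSet_eq_fun hlam ((hcont.measurable).comp hmu)
  -- define selection via min over Fin n
  have hne : ∀ ω : Ω, (Finset.univ.filter
      (fun i : Fin n => lam ω = e.symm i • mu ω)).Nonempty := by
    intro ω
    obtain ⟨g, hg⟩ := hlift ω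
    exact ⟨e g, by simp [hg]⟩
  refine ⟨fun ω => e.symm ((Finset.univ.filter
      (fun i : Fin n => lam ω = e.symm i • mu ω)).min' (hne ω)), ?_, ?_⟩
  · apply measurable_to_countable'
    intro g
    have : (fun ω => e.symm ((Finset.univ.filter
        (fun i : Fin n => lam ω = e.symm i • mu ω)).min' (hne ω))) ⁻¹' {g}
        = {ω | lam ω = (e.symm (e g)) • mu ω} ∩
          ⋂ j ∈ Finset.univ.filter (fun j : Fin n => j < e g),
            {ω | lam ω = e.symm j • mu ω}ᶜ := by
      ext ω
      simp only [Set.mem_preimage, Set.mem_singleton_iff, Set.mem_inter_iff,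
        Set.mem_iInter, Set.mem_compl_iff, Set.mem_setOf_eq, Finset.mem_filter,
        Finset.mem_univ, true_and, Equiv.symm_apply_eq]
      constructor
      · intro hmin
        constructor
        · have h := Finset.min'_mem _ (hne ω)
          rw [hmin] at h; simpa using h
        · intro j hj hcon
          have hjmem : j ∈ Finset.univ.filter
              (fun i : Fin n => lam ω = e.symm i • mu ω) := by simp [hcon]
          have hle := Finset.min'_le _ _ hjmem
          rw [hmin] at hle
          exact absurd hle (not_le.mpr hj)
      · rintro ⟨h1, h2⟩
        have hmem : e g ∈ Finset.univ.filter
            (fun i : Fin n => lam ω = e.symm i • mu ω) := by simp [h1]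
        refine le_antisymm (Finset.min'_le _ _ hmem) ?_
        by_contra hlt
        push_neg at hlt
        exact h2 _ hlt (by simpa using Finset.min'_mem _ (hne ω))
    rw [this]
    refine MeasurableSet.inter (by simpa using hmeas (e.symm (e g))) ?_
    exact MeasurableSet.biInter (Set.to_countable _)
      (fun j _ => (hmeas (e.symm j)).compl)
  · intro ω
    have := Finset.min'_mem _ (hne ω)
    simpa using this
end

section
/- Let I be a nonempty open interval and let λ, μ : ℝ → V be real analytic on I. If for every t ∈ I there exists g ∈ Γ with μ(t) = g·λ(t), then there exists a single g ∈ Γ such that μ(t) = g·λ(t) for all t ∈ I. -/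
/-- Let `Γ` be a finite group acting linearly on a finite-dimensional real normed vector space
`V`, and let `λ, μ : ℝ → V` be real analytic on a nonempty open interval `I` (i.e. analytic at
every point of `I`). If for every `t ∈ I` there is `g ∈ Γ` with `μ t = g • λ t`, then there is
a single `g ∈ Γ` with `μ t = g • λ t` for all `t ∈ I`. -/
theorem stmt17 {V : Type*} [NormedAddCommGroup V] [NormedSpace ℝ V] [FiniteDimensional ℝ V]
    {Γ : Type*} [Group Γ] [Finite Γ] [DistribMulAction Γ V] [SMulCommClass Γ ℝ V]
    (I : Set ℝ) (hIopen : IsOpen I) (hIconn : I.OrdConnected) (hne : I.Nonempty)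
    (lam mu : ℝ → V)
    (hlam : ∀ t ∈ I, AnalyticAt ℝ lam t) (hmu : ∀ t ∈ I, AnalyticAt ℝ mu t)
    (hlift : ∀ t ∈ I, ∃ g : Γ, mu t = g • lam t) :
    ∃ g : Γ, ∀ t ∈ I, mu t = g • lam t := by
  haveI : Fintype Γ := Fintype.ofFinite Γ
  obtain ⟨t₀, ht₀⟩ := hne
  -- the linear map of acting by g is continuous (finite dimensions)
  have hglam : ∀ g : Γ, ∀ t ∈ I, AnalyticAt ℝ (fun s => g • lam s) t := by
    intro g t ht
    have : AnalyticAt ℝ (fun s =>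
        LinearMap.toContinuousLinearMap (DistribMulAction.toLinearMap ℝ V g) (lam s)) t :=
      ((LinearMap.toContinuousLinearMap
        (DistribMulAction.toLinearMap ℝ V g)).analyticAt _).comp (hlam t ht)
    exact this
  -- find g with frequently equality near t₀
  have hfreq : ∃ g : Γ, ∃ᶠ t in nhdsWithin t₀ {t₀}ᶜ, mu t = g • lam t := by
    by_contra h
    push_neg at h
    have hall : ∀ᶠ t in nhdsWithin t₀ {t₀}ᶜ, ∀ g : Γ, ¬ mu t = g • lam t :=
      Filter.eventually_all.2 fun g => h g
    have hI : ∀ᶠ t in nhdsWithin t₀ {t₀}ᶜ, t ∈ I :=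
      Filter.Eventually.filter_mono nhdsWithin_le_nhds (hIopen.eventually_mem ht₀)
    have : ∀ᶠ t in nhdsWithin t₀ {t₀}ᶜ, False := by
      filter_upwards [hall, hI] with t h1 h2
      obtain ⟨g, hg⟩ := hlift t h2
      exact h1 g hg
    exact (this.exists).elim fun _ h => h
  obtain ⟨g, hg⟩ := hfreq
  refine ⟨g, fun t ht => ?_⟩
  have := AnalyticOnNhd.eqOn_of_preconnected_of_frequently_eq
    (f := mu) (g := fun s => g • lam s) (U := I)
    (fun s hs => hmu s hs) (fun s hs => hglam g s hs)
    hIconn.isPreconnected ht₀ hg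
  exact this ht
end
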